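/- arXiv:1904.12598 — 5 statements merged into one kernel-verified Lean document; each statement's English description precedes it below -/
import Mathlib

section
/- Let X be a Banach space and ε ∈ (0,1). Assume that the closed unit ball of X contains a weakly null sequence (u_n)_{n=1}^∞ such that ‖u_n − u_m‖ ≥ 1 + ε for all n ≠ m. Then the closed unit ball of X contains a sequence (y_n)_{n=1}^∞ such that ‖y_n − y_m‖ ≥ √(1+ε) and ‖y_n + y_m‖ ≥ √(1+ε) for all n ≠ m. -/
open Filter Topology

/-- Greedy extraction of a strictly monotone subsequence inside an infinite set `S ⊆ ℕ`,
all of whose pairs (in increasing order) satisfy a relation `Q`, provided every `n ∈ S`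
satisfies `Q n m` for all sufficiently large `m`. -/
private lemma greedy_subseq {S : Set ℕ} (hS : S.Infinite) {Q : ℕ → ℕ → Prop}
    (h : ∀ n ∈ S, ∀ᶠ m in atTop, Q n m) :
    ∃ φ : ℕ → ℕ, StrictMono φ ∧ (∀ k, φ k ∈ S) ∧ ∀ k l, k < l → Q (φ k) (φ l) := by
  have hN : ∀ n, ∃ a : ℕ, ∀ b, a ≤ b → n ∈ S → Q n b := by
    intro n
    by_cases hn : n ∈ S
    · obtain ⟨a, ha⟩ := Filter.eventually_atTop.mp (h n hn)
      exact ⟨a, fun b hb _ => ha b hb⟩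
    · exact ⟨0, fun b _ hn' => absurd hn' hn⟩
  choose N hNs using hN
  have hpick : ∀ k : ℕ, ∃ n, n ∈ S ∧ k < n := by
    intro k
    by_contra hcon
    push_neg at hcon
    exact hS (Set.Finite.subset (Set.finite_Iic k) (fun n hn => hcon n hn))
  choose p hpS hpgt using hpick
  set F : ℕ → ℕ × ℕ := fun k => Nat.rec (p 0, max (p 0) (N (p 0)))
      (fun _ st => (p st.2, max st.2 (max (p st.2) (N (p st.2))))) k with hF
  have hFs : ∀ k, F (k+1) = (p (F k).2, max (F k).2 (max (p (F k).2) (N (p (F k).2)))) :=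
    fun k => rfl
  have hmem : ∀ k, (F k).1 ∈ S := by
    intro k
    cases k with
    | zero => exact hpS 0
    | succ m => rw [hFs]; exact hpS _
  have hinv : ∀ k, (F k).1 ≤ (F k).2 ∧ N ((F k).1) ≤ (F k).2 := by
    intro k
    cases k with
    | zero => exact ⟨le_max_left _ _, le_max_right _ _⟩
    | succ m =>
        rw [hFs]
        exact ⟨le_trans (le_max_left _ _) (le_max_right _ _),
          le_trans (le_max_right _ _) (le_max_right _ _)⟩
  have hMmono : Monotone fun k => (F k).2 := by
    apply monotone_nat_of_le_succ
    intro k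
    rw [hFs]
    exact le_max_left _ _
  have hlt : ∀ k, (F k).2 < (F (k+1)).1 := by
    intro k
    rw [hFs]
    exact hpgt (F k).2
  have key : ∀ k l, k < l → (F k).2 < (F l).1 := by
    intro k l hkl
    cases l with
    | zero => omega
    | succ m => exact lt_of_le_of_lt (hMmono (Nat.lt_succ_iff.mp hkl)) (hlt m)
  refine ⟨fun k => (F k).1, ?_, hmem, ?_⟩
  · apply strictMono_nat_of_lt_succ
    intro k
    exact lt_of_le_of_lt (hinv k).1 (hlt k)
  · intro k l hkl
    exact hNs (F k).1 (F l).1 (le_trans (hinv k).2 (le_of_lt (key k l hkl))) (hmem k)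

/-- A common pattern: the sequence `y k = c⁻¹ • (w + v k)` is in the unit ball and
symmetrically `s`-separated, given suitable bounds. -/
private lemma sym_helper {X : Type*} [NormedAddCommGroup X] [NormedSpace ℝ X]
    (v : ℕ → X) (w : X) (c s : ℝ) (hc : 0 < c)
    (hball : ∀ k, ‖w + v k‖ ≤ c)
    (hdiff : ∀ k l, k ≠ l → s * c ≤ ‖v k - v l‖)
    (hsum : ∀ k l, k ≠ l → s * c ≤ ‖w + w + (v k + v l)‖) :
    ∃ y : ℕ → X, (∀ n, ‖y n‖ ≤ 1) ∧
      ∀ n m : ℕ, n ≠ m → s ≤ ‖y n - y m‖ ∧ s ≤ ‖y n + y m‖ := by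
  have hnorm : ∀ x : X, ‖c⁻¹ • x‖ = c⁻¹ * ‖x‖ := by
    intro x
    rw [norm_smul, Real.norm_eq_abs, abs_of_pos (inv_pos.mpr hc)]
  have hkey : ∀ x : X, s * c ≤ ‖x‖ → s ≤ ‖c⁻¹ • x‖ := by
    intro x hx
    rw [hnorm]
    have h2 : c⁻¹ * (s * c) = s := by field_simp
    calc s = c⁻¹ * (s * c) := h2.symm
      _ ≤ c⁻¹ * ‖x‖ := mul_le_mul_of_nonneg_left hx (by positivity)
  refine ⟨fun k => c⁻¹ • (w + v k), ?_, ?_⟩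
  · intro n
    rw [hnorm]
    calc c⁻¹ * ‖w + v n‖ ≤ c⁻¹ * c :=
          mul_le_mul_of_nonneg_left (hball n) (by positivity)
      _ = 1 := inv_mul_cancel₀ (ne_of_gt hc)
  · intro n m hnm
    constructor
    · have h : c⁻¹ • (w + v n) - c⁻¹ • (w + v m) = c⁻¹ • (v n - v m) := by
        rw [← smul_sub]
        congr 1
        abel
      rw [h]
      exact hkey _ (hdiff n m hnm)
    · have h : c⁻¹ • (w + v n) + c⁻¹ • (w + v m) = c⁻¹ • (w + w + (v n + v m)) := by
        rw [← smul_add]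
        congr 1
        abel
      rw [h]
      exact hkey _ (hsum n m hnm)

/-- **Proposition 2.1.** If the unit ball of a Banach space `X` contains a weakly null
`(1+ε)`-separated sequence, with `ε ∈ (0,1)`, then it also contains a symmetrically
`√(1+ε)`-separated sequence. -/
theorem sym_sep_of_weakly_null_sep (X : Type*) [NormedAddCommGroup X] [NormedSpace ℝ X]
    [CompleteSpace X] (ε : ℝ) (hε : ε ∈ Set.Ioo (0 : ℝ) 1) (u : ℕ → X)
    (hu_ball : ∀ n, ‖u n‖ ≤ 1)
    (hu_weakly_null : ∀ f : X →L[ℝ] ℝ, Tendsto (fun n => f (u n)) atTop (nhds 0))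
    (hu_sep : ∀ n m : ℕ, n ≠ m → 1 + ε ≤ ‖u n - u m‖) :
    ∃ y : ℕ → X, (∀ n, ‖y n‖ ≤ 1) ∧
      ∀ n m : ℕ, n ≠ m →
        Real.sqrt (1 + ε) ≤ ‖y n - y m‖ ∧ Real.sqrt (1 + ε) ≤ ‖y n + y m‖ := by
  obtain ⟨hε0, hε1⟩ := hε
  set q : ℝ := 1 + ε with hqdef
  have hq1 : 1 < q := by simp only [hqdef]; linarith
  have hq2 : q < 2 := by simp only [hqdef]; linarith
  have hq0 : 0 < q := by linarith
  set s : ℝ := Real.sqrt q with hsdef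
  have hss : s * s = q := Real.mul_self_sqrt (le_of_lt hq0)
  have hsnn : 0 ≤ s := Real.sqrt_nonneg q
  have hs1 : 1 < s := by nlinarith
  have hs0 : 0 < s := by linarith
  have hs2 : s ≤ 2 := by nlinarith
  have hsq : s ≤ q := by nlinarith
  -- all but at most one index satisfy `q/2 ≤ ‖u n‖`
  set S : Set ℕ := {n | q / 2 ≤ ‖u n‖} with hSdef
  have hS : S.Infinite := by
    have hsub : Sᶜ.Subsingleton := by
      intro a ha b hb
      by_contra hab
      have ha' : ‖u a‖ < q / 2 := not_le.mp ha
      have hb' : ‖u b‖ < q / 2 := not_le.mp hb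
      have h1 : q ≤ ‖u a - u b‖ := hu_sep a b hab
      have h2 : ‖u a - u b‖ ≤ ‖u a‖ + ‖u b‖ := norm_sub_le _ _
      linarith
    have hfin : Sᶜ.Finite := hsub.finite
    simpa using hfin.infinite_compl
  -- a generic "fixed vector plus far tail" construction
  have routeA : ∀ (n₀ : ℕ) (c η : ℝ), 0 < c → 0 < η → s * c ≤ q →
      s * c ≤ ‖u n₀‖ + ‖u n₀‖ - 2 * η →
      (∃ᶠ m in atTop, ‖u n₀ + u m‖ < c) →
      ∃ y : ℕ → X, (∀ n, ‖y n‖ ≤ 1) ∧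
        ∀ n m : ℕ, n ≠ m → s ≤ ‖y n - y m‖ ∧ s ≤ ‖y n + y m‖ := by
    intro n₀ c η hc hη hscq hgap hfreq
    have hne : u n₀ ≠ 0 := by
      intro h0
      have : ‖u n₀‖ = 0 := by rw [h0, norm_zero]
      nlinarith
    obtain ⟨f₀, hf₀, hf₀x⟩ := exists_dual_vector ℝ (u n₀) (norm_ne_zero_iff.mpr hne)
    have hf₀x' : f₀ (u n₀) = ‖u n₀‖ := by exact_mod_cast hf₀x
    have hev : ∀ᶠ m in atTop, f₀ (u m) ∈ Set.Ioo (-η) η :=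
      (hu_weakly_null f₀).eventually_mem (Ioo_mem_nhds (by linarith) hη)
    obtain ⟨φ, hφ, hφP⟩ := Filter.extraction_of_frequently_atTop (hfreq.and_eventually hev)
    apply sym_helper (fun k => u (φ k)) (u n₀) c s hc
    · intro k
      exact (hφP k).1.le
    · intro k l hkl
      have : q ≤ ‖u (φ k) - u (φ l)‖ := hu_sep _ _ (hφ.injective.ne hkl)
      linarith
    · intro k l _
      set x : X := u n₀ + u n₀ + (u (φ k) + u (φ l)) with hx
      have hval : f₀ x = ‖u n₀‖ + ‖u n₀‖ + (f₀ (u (φ k)) + f₀ (u (φ l))) := by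
        rw [hx, map_add, map_add, map_add, hf₀x']
      have hk1 : -η < f₀ (u (φ k)) := (hφP k).2.1
      have hl1 : -η < f₀ (u (φ l)) := (hφP l).2.1
      have hlow : s * c ≤ f₀ x := by rw [hval]; linarith
      have hup : f₀ x ≤ ‖x‖ := by
        have h1 : f₀ x ≤ |f₀ x| := le_abs_self _
        have h2 : |f₀ x| = ‖f₀ x‖ := (Real.norm_eq_abs _).symm
        have h3 : ‖f₀ x‖ ≤ ‖f₀‖ * ‖x‖ := f₀.le_opNorm x
        rw [hf₀, one_mul] at h3
        linarith
      linarith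
  -- Case (iii): some n₀ ∈ S has infinitely many m with ‖u n₀ + u m‖ < s*q/2
  by_cases hI : ∃ n₀ ∈ S, ∃ᶠ m in atTop, ‖u n₀ + u m‖ < s * q / 2
  · obtain ⟨n₀, hn₀, hfreq⟩ := hI
    have hρ : q / 2 ≤ ‖u n₀‖ := hn₀
    refine routeA n₀ (s * q / 2) (‖u n₀‖ - q * q / 4) (by positivity) (by nlinarith)
      (by nlinarith) (by nlinarith) hfreq
  · simp only [not_exists, not_and] at hI
    have hI' : ∀ n ∈ S, ∀ᶠ m in atTop, s * q / 2 ≤ ‖u n + u m‖ := by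
      intro n hn
      have := hI n hn
      rw [Filter.not_frequently] at this
      filter_upwards [this] with m hm
      exact not_lt.mp hm
    -- Case (II.a)
    by_cases hIIa : ∃ n₀ ∈ S, q / 2 < ‖u n₀‖ ∧ ∃ᶠ m in atTop, ‖u n₀ + u m‖ < s
    · obtain ⟨n₀, _, hρ, hfreq⟩ := hIIa
      refine routeA n₀ s (‖u n₀‖ - q / 2) hs0 (by linarith) (by nlinarith) (by nlinarith) hfreq
    · simp only [not_exists, not_and] at hIIa
      set T : Set ℕ := {n | n ∈ S ∧ q / 2 < ‖u n‖} with hTdef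
      by_cases hT : T.Infinite
      · -- Case (i): plain subsequence works
        have hQ : ∀ n ∈ T, ∀ᶠ m in atTop, s ≤ ‖u n + u m‖ := by
          intro n hn
          have := hIIa n hn.1 hn.2
          rw [Filter.not_frequently] at this
          filter_upwards [this] with m hm
          exact not_lt.mp hm
        obtain ⟨φ, hφ, _, hφQ⟩ := greedy_subseq hT hQ
        apply sym_helper (fun k => u (φ k)) 0 1 s one_pos
        · intro k
          rw [zero_add]
          exact hu_ball _
        · intro k l hkl
          have : q ≤ ‖u (φ k) - u (φ l)‖ := hu_sep _ _ (hφ.injective.ne hkl)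
          linarith [mul_one s]
        · intro k l hkl
          rw [add_zero, zero_add]
          rw [mul_one]
          rcases hkl.lt_or_gt with h | h
          · exact hφQ k l h
          · rw [add_comm]
            exact hφQ l k h
      · -- Case (E): norms are (essentially) exactly q/2; rescale to the sphere
        have hTfin : T.Finite := Set.not_infinite.mp hT
        have hS' : (S \ T).Infinite := hS.diff hTfin
        have hQ : ∀ n ∈ S \ T, ∀ᶠ m in atTop, s * q / 2 ≤ ‖u n + u m‖ :=
          fun n hn => hI' n hn.1
        obtain ⟨φ, hφ, hφS, hφQ⟩ := greedy_subseq hS' hQ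
        have hub : ∀ k, ‖u (φ k)‖ ≤ q / 2 := by
          intro k
          have h1 := hφS k
          by_contra hcon
          exact h1.2 ⟨h1.1, not_le.mp hcon⟩
        apply sym_helper (fun k => u (φ k)) 0 (q / 2) s (by positivity)
        · intro k
          rw [zero_add]
          exact hub k
        · intro k l hkl
          have : q ≤ ‖u (φ k) - u (φ l)‖ := hu_sep _ _ (hφ.injective.ne hkl)
          nlinarith
        · intro k l hkl
          rw [add_zero, zero_add]
          have harith : s * (q / 2) = s * q / 2 := by ring
          rw [harith]
          rcases hkl.lt_or_gt with h | h
          · exact hφQ k l h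
          · rw [add_comm]
            exact hφQ l k h
end

section
/- For every Banach space X one has K^s(X) ≥ √(γ₀(X)), where K^s(X) := sup{σ ≥ 0 : the closed unit ball of X contains a sequence (x_n) with ‖x_n − x_m‖ ≥ σ and ‖x_n + x_m‖ ≥ σ for all n ≠ m} and γ₀(X) := sup{r ≥ 0 : the closed unit ball of X contains a weakly null sequence (x_n) with ‖x_n − x_m‖ ≥ r for all n ≠ m} (with the convention that each supremum is 0 if the corresponding set is empty). -/
open Filter Topology

/-- The symmetric Kottman constant `K^s(X)`. -/
noncomputable def symKottmanConst (X : Type*) [NormedAddCommGroup X] [NormedSpace ℝ X] : ℝ :=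
  sSup {σ : ℝ | 0 ≤ σ ∧ ∃ x : ℕ → X, (∀ n, ‖x n‖ ≤ 1) ∧
    ∀ n m : ℕ, n ≠ m → σ ≤ ‖x n - x m‖ ∧ σ ≤ ‖x n + x m‖}

/-- The constant `γ₀(X)` of Dronka, Olszowy and Rybarska-Rusinek: the supremum of all
`r ≥ 0` such that the closed unit ball of `X` contains a weakly null `r`-separated
sequence. (Recall that `sSup ∅ = 0` in `ℝ` by convention.) -/
noncomputable def gammaZero (X : Type*) [NormedAddCommGroup X] [NormedSpace ℝ X] : ℝ :=
  sSup {r : ℝ | 0 ≤ r ∧ ∃ x : ℕ → X, (∀ n, ‖x n‖ ≤ 1) ∧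
    (∀ f : X →L[ℝ] ℝ, Tendsto (fun n => f (x n)) atTop (nhds 0)) ∧
    ∀ n m : ℕ, n ≠ m → r ≤ ‖x n - x m‖}

private lemma sep_of_lt' {Y : Type*} [NormedAddCommGroup Y] {y : ℕ → Y} {σ : ℝ}
    (h : ∀ k l : ℕ, k < l → σ ≤ ‖y k - y l‖ ∧ σ ≤ ‖y k + y l‖) :
    ∀ k l : ℕ, k ≠ l → σ ≤ ‖y k - y l‖ ∧ σ ≤ ‖y k + y l‖ := by
  intro k l hkl
  rcases lt_or_gt_of_ne hkl with h' | h'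
  · exact h k l h'
  · obtain ⟨h1, h2⟩ := h l k h'
    exact ⟨by rwa [norm_sub_rev], by rwa [add_comm]⟩

private lemma le_symKottman' {X : Type*} [NormedAddCommGroup X] [NormedSpace ℝ X] {σ : ℝ}
    (hσ : 0 ≤ σ) (y : ℕ → X) (hy : ∀ n, ‖y n‖ ≤ 1)
    (hsep : ∀ n m : ℕ, n ≠ m → σ ≤ ‖y n - y m‖ ∧ σ ≤ ‖y n + y m‖) :
    σ ≤ symKottmanConst X := by
  apply le_csSup
  · refine ⟨2, ?_⟩
    rintro τ ⟨hτ0, z, hz1, hzsep⟩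
    have h01 := (hzsep 0 1 (by norm_num)).1
    have h2 := norm_sub_le (z 0) (z 1)
    have h3 := hz1 0
    have h4 := hz1 1
    linarith
  · exact ⟨hσ, y, hy, hsep⟩

private lemma symKottman_nonneg' (X : Type*) [NormedAddCommGroup X] [NormedSpace ℝ X] :
    0 ≤ symKottmanConst X := by
  refine le_symKottman' le_rfl (fun _ => 0) (fun n => by simp) (fun n m _ => ?_)
  constructor <;> positivity

private lemma exists_subseq' {Q : ℕ → ℕ → Prop}
    (hmono : ∀ {M N p : ℕ}, M ≤ N → Q N p → Q M p)
    (hQ : ∀ N : ℕ, ∃ p, N < p ∧ Q N p) :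
    ∃ n : ℕ → ℕ, StrictMono n ∧ ∀ k l : ℕ, k < l → Q (n k) (n l) := by
  choose g hg1 hg2 using hQ
  let n : ℕ → ℕ := fun k => Nat.rec 0 (fun _ nk => g nk) k
  have hstep : ∀ k, n (k + 1) = g (n k) := fun k => rfl
  have hlt : ∀ k, n k < n (k + 1) := fun k => by rw [hstep]; exact hg1 (n k)
  have hsm : StrictMono n := strictMono_nat_of_lt_succ hlt
  refine ⟨n, hsm, fun k l hkl => ?_⟩
  obtain ⟨l', rfl⟩ : ∃ l', l = l' + 1 := ⟨l - 1, by omega⟩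
  have hQl : Q (n l') (n (l' + 1)) := by rw [hstep]; exact hg2 (n l')
  exact hmono (hsm.monotone (by omega : k ≤ l')) hQl

private lemma eventually_all_le' {α : Type*} {l : Filter α} {P : ℕ → α → Prop}
    (h : ∀ m : ℕ, ∀ᶠ p in l, P m p) (N : ℕ) : ∀ᶠ p in l, ∀ m ≤ N, P m p := by
  induction N with
  | zero =>
    filter_upwards [h 0] with p hp m hm
    have hm0 : m = 0 := Nat.le_zero.mp hm
    subst hm0; exact hp
  | succ N ih =>
    filter_upwards [ih, h (N + 1)] with p hp1 hp2 m hm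
    rcases eq_or_lt_of_le hm with h' | h'
    · subst h'; exact hp2
    · exact hp1 m (by omega)

private lemma sqrt_le_symKottman {X : Type*} [NormedAddCommGroup X] [NormedSpace ℝ X]
    {r : ℝ} (hr0 : 0 ≤ r)
    (x : ℕ → X) (hx1 : ∀ n, ‖x n‖ ≤ 1)
    (hwn : ∀ f : X →L[ℝ] ℝ, Tendsto (fun n => f (x n)) atTop (nhds 0))
    (hsep : ∀ n m : ℕ, n ≠ m → r ≤ ‖x n - x m‖) :
    Real.sqrt r ≤ symKottmanConst X := by
  have hKnn : 0 ≤ symKottmanConst X := symKottman_nonneg' X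
  refine le_of_forall_pos_le_add ?_
  intro ε hε
  rcases le_or_gt (Real.sqrt r) ε with hcase | hεr
  · linarith
  suffices h : Real.sqrt r - ε ≤ symKottmanConst X by linarith
  have htpos : 0 < Real.sqrt r := hε.trans hεr
  have hrpos : 0 < r := Real.sqrt_pos.mp htpos
  set t := Real.sqrt r with hts
  have ht2 : t ^ 2 = r := Real.sq_sqrt hr0
  rcases le_or_gt r 1 with hr1 | hr1
  · -- Case I : r ≤ 1; build symmetrically (1-ε)-separated unit sequence
    have ht1 : t ≤ 1 := Real.sqrt_le_one.mpr hr1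
    set u : ℕ → X := fun k => x (2 * k) - x (2 * k + 1) with hu
    have hukr : ∀ k, r ≤ ‖u k‖ := fun k => hsep _ _ (by omega)
    have hune : ∀ k, u k ≠ 0 := by
      intro k h
      have h' := hukr k
      rw [h, norm_zero] at h'
      linarith
    set W : ℕ → X := fun k => ‖u k‖⁻¹ • u k with hW
    have hW1 : ∀ k, ‖W k‖ = 1 := by
      intro k
      rw [hW]
      simpa using norm_smul_inv_norm (𝕜 := ℝ) (hune k)
    have hWne : ∀ k, W k ≠ 0 := by
      intro k h
      have h' := hW1 k
      rw [h, norm_zero] at h'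
      exact one_ne_zero h'.symm
    choose F hF1 hF2 using fun k => exists_dual_vector ℝ (W k) (norm_ne_zero_iff.mpr (hWne k))
    have hFW : ∀ k, F k (W k) = 1 := by
      intro k
      have h' := hF2 k
      rw [hW1 k] at h'
      simpa using h'
    have hFle : ∀ k (v : X), F k v ≤ ‖v‖ := by
      intro k v
      refine le_trans (le_abs_self _) ?_
      have h' := (F k).le_opNorm v
      rw [hF1 k, one_mul] at h'
      simpa [Real.norm_eq_abs] using h'
    have hWsmall : ∀ m : ℕ, Tendsto (fun p => F m (W p)) atTop (nhds 0) := by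
      intro m
      apply squeeze_zero_norm (a := fun p => r⁻¹ * ‖F m (u p)‖)
      · intro p
        have hval : F m (W p) = ‖u p‖⁻¹ * F m (u p) := by
          rw [hW]; simp [map_smul, smul_eq_mul]
        rw [hval, Real.norm_eq_abs, abs_mul, abs_of_nonneg (inv_nonneg.mpr (norm_nonneg _)),
          show ‖F m (u p)‖ = |F m (u p)| from rfl]
        exact mul_le_mul_of_nonneg_right (inv_anti₀ hrpos (hukr p)) (abs_nonneg _)
      · have h2k : Tendsto (fun p : ℕ => 2 * p) atTop atTop :=
          tendsto_atTop_mono (fun p => (by omega : p ≤ 2 * p)) tendsto_id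
        have h2k1 : Tendsto (fun p : ℕ => 2 * p + 1) atTop atTop :=
          tendsto_atTop_mono (fun p => (by omega : p ≤ 2 * p + 1)) tendsto_id
        have t1 := (hwn (F m)).comp h2k
        have t2 := (hwn (F m)).comp h2k1
        have hd : Tendsto (fun p => F m (u p)) atTop (nhds 0) := by
          have h' := t1.sub t2
          simpa [hu, Function.comp, map_sub] using h'
        have h'' := (hd.norm).const_mul r⁻¹
        simpa using h''
    have hQ : ∀ N : ℕ, ∃ p, N < p ∧ ∀ m ≤ N, |F m (W p)| < ε := by
      intro N
      have hev : ∀ᶠ p in atTop, ∀ m ≤ N, |F m (W p)| < ε := by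
        refine eventually_all_le' (fun m => ?_) N
        have h' := (hWsmall m).eventually (eventually_abs_sub_lt 0 hε)
        simpa using h'
      obtain ⟨a, ha⟩ := eventually_atTop.mp hev
      exact ⟨max (N + 1) a, lt_of_lt_of_le (Nat.lt_succ_self N) (le_max_left _ _),
        ha _ (le_max_right _ _)⟩
    obtain ⟨n, hnsm, hQn⟩ := exists_subseq'
      (Q := fun N p => ∀ m ≤ N, |F m (W p)| < ε)
      (fun {M N p} hMN h m hm => h m (hm.trans hMN)) hQ
    have hsep2 : ∀ k l : ℕ, k < l →
        (1 - ε : ℝ) ≤ ‖W (n k) - W (n l)‖ ∧ (1 - ε : ℝ) ≤ ‖W (n k) + W (n l)‖ := by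
      intro k l hkl
      have hsmall : |F (n k) (W (n l))| < ε := hQn k l hkl (n k) le_rfl
      have habs := abs_lt.mp hsmall
      constructor
      · calc (1 - ε : ℝ) ≤ F (n k) (W (n k)) - F (n k) (W (n l)) := by
              rw [hFW]; linarith
          _ = F (n k) (W (n k) - W (n l)) := (map_sub _ _ _).symm
          _ ≤ ‖W (n k) - W (n l)‖ := hFle _ _
      · calc (1 - ε : ℝ) ≤ F (n k) (W (n k)) + F (n k) (W (n l)) := by
              rw [hFW]; linarith
          _ = F (n k) (W (n k) + W (n l)) := (map_add _ _ _).symm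
          _ ≤ ‖W (n k) + W (n l)‖ := hFle _ _
    have h1ε : (0 : ℝ) ≤ 1 - ε := by linarith
    have hK : (1 - ε : ℝ) ≤ symKottmanConst X :=
      le_symKottman' h1ε (fun k => W (n k)) (fun k => (hW1 (n k)).le) (sep_of_lt' hsep2)
    linarith
  · -- Case II : r > 1
    have ht1 : 1 ≤ t := by
      rw [hts, show (1 : ℝ) = Real.sqrt 1 from Real.sqrt_one.symm]
      exact Real.sqrt_le_sqrt hr1.le
    have htr : t ≤ r := by nlinarith
    by_cases hA : ∃ c, r / 2 ≤ ‖x c‖ ∧ {p | ‖x c + x p‖ ≤ t}.Infinite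
    · -- Case II-A
      obtain ⟨c, hc, hcInf⟩ := hA
      have hxcne : x c ≠ 0 := by
        intro h
        rw [h, norm_zero] at hc
        linarith
      obtain ⟨Fc, hFc1, hFc2⟩ := exists_dual_vector ℝ (x c) (norm_ne_zero_iff.mpr hxcne)
      have hFcval : Fc (x c) = ‖x c‖ := by simpa using hFc2
      have hFcle : ∀ v : X, Fc v ≤ ‖v‖ := by
        intro v
        refine le_trans (le_abs_self _) ?_
        have h' := Fc.le_opNorm v
        rw [hFc1, one_mul] at h'
        simpa [Real.norm_eq_abs] using h'
      set δ := ε * t / 2 with hδ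
      have hδpos : 0 < δ := by
        have : 0 < t := htpos
        positivity
      have hfin : {p | ¬ |Fc (x p)| < δ}.Finite := by
        rw [← Filter.eventually_cofinite, Nat.cofinite_eq_atTop]
        have h' := (hwn Fc).eventually (eventually_abs_sub_lt 0 hδpos)
        simpa using h'
      have hS'inf : ({p | ‖x c + x p‖ ≤ t} ∩ {p | |Fc (x p)| < δ}).Infinite := by
        refine (hcInf.diff hfin).mono ?_
        intro p hp
        exact ⟨hp.1, not_not.mp hp.2⟩
      obtain ⟨φ, hφsm, hφm⟩ := exists_subseq'
        (Q := fun _ p => p ∈ ({p | ‖x c + x p‖ ≤ t} ∩ {p | |Fc (x p)| < δ}))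
        (fun {M N p} _ h => h)
        (fun N => by
          obtain ⟨p, hp, hpgt⟩ := hS'inf.exists_gt N
          exact ⟨p, hpgt, hp⟩)
      have hφmem : ∀ k : ℕ, φ (k + 1) ∈
          ({p | ‖x c + x p‖ ≤ t} ∩ {p | |Fc (x p)| < δ}) :=
        fun k => hφm 0 (k + 1) (by omega)
      set y : ℕ → X := fun k => t⁻¹ • (x c + x (φ (k + 1))) with hy
      have htinv : (0 : ℝ) ≤ t⁻¹ := inv_nonneg.mpr htpos.le
      have hynorm : ∀ k, ‖y k‖ ≤ 1 := by
        intro k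
        rw [hy]
        simp only [norm_smul, Real.norm_eq_abs, abs_of_nonneg htinv]
        calc t⁻¹ * ‖x c + x (φ (k + 1))‖ ≤ t⁻¹ * t := by
              exact mul_le_mul_of_nonneg_left (hφmem k).1 htinv
          _ = 1 := inv_mul_cancel₀ htpos.ne'
      have hsepy : ∀ k l : ℕ, k < l →
          (t - ε : ℝ) ≤ ‖y k - y l‖ ∧ (t - ε : ℝ) ≤ ‖y k + y l‖ := by
        intro k l hkl
        have hne : φ (k + 1) ≠ φ (l + 1) := hφsm.injective.ne (by omega)
        constructor
        · have hdiff : y k - y l = t⁻¹ • (x (φ (k + 1)) - x (φ (l + 1))) := by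
            rw [hy, ← smul_sub]
            congr 1
            abel
          rw [hdiff, norm_smul, Real.norm_eq_abs, abs_of_nonneg htinv]
          have h1 : r ≤ ‖x (φ (k + 1)) - x (φ (l + 1))‖ := hsep _ _ hne
          have h2 : t⁻¹ * r = t := by
            rw [← ht2, sq, ← mul_assoc, inv_mul_cancel₀ htpos.ne', one_mul]
          calc (t - ε : ℝ) ≤ t := by linarith
            _ = t⁻¹ * r := h2.symm
            _ ≤ t⁻¹ * ‖x (φ (k + 1)) - x (φ (l + 1))‖ :=
              mul_le_mul_of_nonneg_left h1 htinv
        · have hsum : y k + y l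
              = t⁻¹ • ((x c + x (φ (k + 1))) + (x c + x (φ (l + 1)))) := by
            rw [hy, ← smul_add]
          rw [hsum, norm_smul, Real.norm_eq_abs, abs_of_nonneg htinv]
          set z := (x c + x (φ (k + 1))) + (x c + x (φ (l + 1))) with hz
          have hFz : Fc z = ‖x c‖ + Fc (x (φ (k + 1))) + ‖x c‖ + Fc (x (φ (l + 1))) := by
            rw [hz]
            simp [map_add, hFcval]
            ring
          have hk' := abs_lt.mp (show |Fc (x (φ (k + 1)))| < δ from (hφmem k).2)
          have hl' := abs_lt.mp (show |Fc (x (φ (l + 1)))| < δ from (hφmem l).2)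
          have hzge : r - 2 * δ ≤ Fc z := by
            rw [hFz]
            have := hc
            linarith
          have hzn : r - 2 * δ ≤ ‖z‖ := le_trans hzge (hFcle z)
          have hcalc : t⁻¹ * (r - 2 * δ) = t - ε := by
            have hr' : r - 2 * δ = t * (t - ε) := by rw [hδ, ← ht2]; ring
            rw [hr', ← mul_assoc, inv_mul_cancel₀ htpos.ne', one_mul]
          calc (t - ε : ℝ) = t⁻¹ * (r - 2 * δ) := hcalc.symm
            _ ≤ t⁻¹ * ‖z‖ := mul_le_mul_of_nonneg_left hzn htinv
      have hσ0 : (0 : ℝ) ≤ t - ε := by linarith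
      exact le_symKottman' hσ0 y hynorm (sep_of_lt' hsepy)
    · -- Case II-B
      have hAll : ∀ c, r / 2 ≤ ‖x c‖ → {p | ‖x c + x p‖ ≤ t}.Finite := by
        intro c hc
        by_contra hinf
        exact hA ⟨c, hc, hinf⟩
      have hQ : ∀ N : ℕ, ∃ p, N < p ∧
          (r / 2 ≤ ‖x p‖ ∧ ∀ m ≤ N, r / 2 ≤ ‖x m‖ → t < ‖x m + x p‖) := by
        intro N
        have hBsub : {n : ℕ | ‖x n‖ < r / 2}.Subsingleton := by
          intro a ha b hb
          by_contra hab
          have h1 := hsep a b hab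
          have h2 := norm_sub_le (x a) (x b)
          simp only [Set.mem_setOf_eq] at ha hb
          linarith
        have hBfin : {n : ℕ | ‖x n‖ < r / 2}.Finite := hBsub.finite
        have hbad : ({n : ℕ | ‖x n‖ < r / 2} ∪
            ⋃ m ∈ Finset.range (N + 1), {p : ℕ | r / 2 ≤ ‖x m‖ ∧ ‖x m + x p‖ ≤ t}).Finite := by
          refine hBfin.union ?_
          refine Set.Finite.biUnion (Finset.range (N + 1)).finite_toSet ?_
          intro m _
          by_cases hm : r / 2 ≤ ‖x m‖
          · exact (hAll m hm).subset fun p hp => hp.2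
          · refine Set.Finite.subset Set.finite_empty ?_
            intro p hp
            exact absurd hp.1 hm
        obtain ⟨M, hM⟩ := hbad.bddAbove
        refine ⟨max N M + 1, by omega, ?_, ?_⟩
        · have hnot : max N M + 1 ∉ {n : ℕ | ‖x n‖ < r / 2} := by
            intro h
            have := hM (Set.mem_union_left _ h)
            omega
          simpa [Set.mem_setOf_eq, not_lt] using hnot
        · intro m hm hmgood
          by_contra hle
          have hmem : max N M + 1 ∈
              ⋃ m' ∈ Finset.range (N + 1), {p : ℕ | r / 2 ≤ ‖x m'‖ ∧ ‖x m' + x p‖ ≤ t} := by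
            exact Set.mem_iUnion₂.mpr
              ⟨m, Finset.mem_range.mpr (by omega), ⟨hmgood, not_lt.mp hle⟩⟩
          have := hM (Set.mem_union_right _ hmem)
          omega
      obtain ⟨n, hnsm, hQn⟩ := exists_subseq'
        (Q := fun N p => r / 2 ≤ ‖x p‖ ∧ ∀ m ≤ N, r / 2 ≤ ‖x m‖ → t < ‖x m + x p‖)
        (fun {M N p} hMN h => ⟨h.1, fun m hm hg => h.2 m (hm.trans hMN) hg⟩) hQ
      have hgood : ∀ k : ℕ, r / 2 ≤ ‖x (n (k + 1))‖ :=
        fun k => (hQn k (k + 1) (by omega)).1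
      have hsepy : ∀ k l : ℕ, k < l →
          (t : ℝ) ≤ ‖x (n (k + 1)) - x (n (l + 1))‖ ∧
          (t : ℝ) ≤ ‖x (n (k + 1)) + x (n (l + 1))‖ := by
        intro k l hkl
        have hne : n (k + 1) ≠ n (l + 1) := hnsm.injective.ne (by omega)
        constructor
        · exact le_trans htr (hsep _ _ hne)
        · have hQkl := hQn (k + 1) (l + 1) (by omega)
          have := hQkl.2 (n (k + 1)) le_rfl (hgood k)
          linarith
      have hK := le_symKottman' (le_trans zero_le_one ht1) (fun k => x (n (k + 1)))
        (fun k => hx1 _) (sep_of_lt' hsepy)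
      linarith

/-- **Inequality (2.1).** `K^s(X) ≥ √(γ₀(X))` for every Banach space `X`. -/
theorem symKottman_ge_sqrt_gammaZero (X : Type*) [NormedAddCommGroup X] [NormedSpace ℝ X]
    [CompleteSpace X] :
    Real.sqrt (gammaZero X) ≤ symKottmanConst X := by
  have hKnn : 0 ≤ symKottmanConst X := symKottman_nonneg' X
  have hb : ∀ r ∈ {r : ℝ | 0 ≤ r ∧ ∃ x : ℕ → X, (∀ n, ‖x n‖ ≤ 1) ∧
      (∀ f : X →L[ℝ] ℝ, Tendsto (fun n => f (x n)) atTop (nhds 0)) ∧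
      ∀ n m : ℕ, n ≠ m → r ≤ ‖x n - x m‖}, r ≤ (symKottmanConst X) ^ 2 := by
    rintro r ⟨hr0, x, hx1, hwn, hsep⟩
    have h := sqrt_le_symKottman hr0 x hx1 hwn hsep
    calc r = Real.sqrt r ^ 2 := (Real.sq_sqrt hr0).symm
      _ ≤ (symKottmanConst X) ^ 2 := pow_le_pow_left₀ (Real.sqrt_nonneg r) h 2
  have h2 : gammaZero X ≤ (symKottmanConst X) ^ 2 := Real.sSup_le hb (by positivity)
  calc Real.sqrt (gammaZero X) ≤ Real.sqrt ((symKottmanConst X) ^ 2) :=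
        Real.sqrt_le_sqrt h2
    _ = symKottmanConst X := Real.sqrt_sq hKnn
end

section
/- Let X be a reflexive Banach space with the non-strict Opial property. Then K^s(X) ≥ √(K(X)), where K(X) := sup{σ ≥ 0 : the closed unit ball of X contains a sequence (x_n) with ‖x_n − x_m‖ ≥ σ for all n ≠ m} and K^s(X) := sup{σ ≥ 0 : the closed unit ball of X contains a sequence (x_n) with ‖x_n − x_m‖ ≥ σ and ‖x_n + x_m‖ ≥ σ for all n ≠ m}. -/
open Filter Topology

/-- The Kottman constant `K(X)`. -/
noncomputable def kottmanConst (X : Type*) [NormedAddCommGroup X] [NormedSpace ℝ X] : ℝ :=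
  sSup {σ : ℝ | 0 ≤ σ ∧ ∃ x : ℕ → X, (∀ n, ‖x n‖ ≤ 1) ∧
    ∀ n m : ℕ, n ≠ m → σ ≤ ‖x n - x m‖}

/-- `X` has the non-strict Opial property: for every sequence converging weakly to `x`
and every `y`, `liminf ‖xₙ - x‖ ≤ liminf ‖xₙ - y‖`. -/
def NonStrictOpial (X : Type*) [NormedAddCommGroup X] [NormedSpace ℝ X] : Prop :=
  ∀ (x : ℕ → X) (x₀ : X),
    (∀ f : X →L[ℝ] ℝ, Tendsto (fun n => f (x n)) atTop (nhds (f x₀))) →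
    ∀ y : X, liminf (fun n => ‖x n - x₀‖) atTop ≤ liminf (fun n => ‖x n - y‖) atTop

open Set

namespace KottmanAux


/-- Simple recursive extraction: given that for each `j` the property `C j k` holds for all
large `k`, we find a strictly monotone subsequence along which all "ordered pairs" satisfy `C`. -/
theorem exists_subseq_pairwise (C : ℕ → ℕ → Prop) (h : ∀ j, ∀ᶠ k in atTop, C j k) :
    ∃ g : ℕ → ℕ, StrictMono g ∧ ∀ j k, j < k → C (g j) (g k) := by
  have key : ∀ a : ℕ, ∃ b, a < b ∧ ∀ j ≤ a, C j b := by
    intro a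
    have h1 : ∀ᶠ k in atTop, ∀ j ∈ Finset.range (a+1), C j k := by
      rw [Filter.eventually_all_finset]
      intro j _
      exact h j
    have h2 := (h1.and (eventually_gt_atTop a)).exists
    obtain ⟨b, hb1, hb2⟩ := h2
    exact ⟨b, hb2, fun j hj => hb1 j (Finset.mem_range.2 (Nat.lt_succ_of_le hj))⟩
  choose f hf1 hf2 using key
  set g : ℕ → ℕ := fun n => Nat.rec (f 0) (fun _ prev => f prev) n with hg
  have hg0 : g 0 = f 0 := rfl
  have hgs : ∀ n, g (n+1) = f (g n) := fun n => rfl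
  have hmono : StrictMono g := by
    apply strictMono_nat_of_lt_succ
    intro n
    rw [hgs]
    exact hf1 (g n)
  refine ⟨g, hmono, ?_⟩
  intro j k hjk
  obtain ⟨k', rfl⟩ : ∃ k', k = k' + 1 := ⟨k - 1, (Nat.succ_pred_eq_of_pos (Nat.pos_of_ne_zero (by omega))).symm⟩
  rw [hgs]
  apply hf2 (g k')
  have : j ≤ k' := Nat.lt_succ_iff.mp hjk
  exact hmono.monotone this



open Classical in
/-- Infinite Ramsey theorem for pairs with two colours, in subsequence form. -/
theorem ramsey_pairs (C : ℕ → ℕ → Prop) :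
    ∃ g : ℕ → ℕ, StrictMono g ∧
      ((∀ j k, j < k → C (g j) (g k)) ∨ (∀ j k, j < k → ¬ C (g j) (g k))) := by
  classical
  -- one refinement step
  have step : ∀ S : Set ℕ, S.Infinite → ∃ (m : ℕ) (T : Set ℕ) (b : Bool),
      m ∈ S ∧ T.Infinite ∧ ∀ n ∈ T, m < n ∧ n ∈ S ∧ (C m n ↔ b = true) := by
    intro S hS
    obtain ⟨m, hm⟩ := hS.nonempty
    have hT0 : (S \ {n | n ≤ m}).Infinite := hS.diff (Set.finite_le_nat m)
    by_cases h1 : {n ∈ S \ {n | n ≤ m} | C m n}.Infinite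
    · refine ⟨m, _, true, hm, h1, ?_⟩
      rintro n ⟨⟨hnS, hnm⟩, hC⟩
      exact ⟨by simpa using hnm, hnS, by simp [hC]⟩
    · have h2 : {n ∈ S \ {n | n ≤ m} | ¬ C m n}.Infinite := by
        have : (S \ {n | n ≤ m}) ⊆ {n ∈ S \ {n | n ≤ m} | C m n} ∪ {n ∈ S \ {n | n ≤ m} | ¬ C m n} := by
          intro n hn
          by_cases hc : C m n
          · exact Or.inl ⟨hn, hc⟩
          · exact Or.inr ⟨hn, hc⟩
        by_contra h2
        rw [Set.not_infinite] at h1 h2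
        exact hT0 ((h1.union h2).subset this)
      refine ⟨m, _, false, hm, h2, ?_⟩
      rintro n ⟨⟨hnS, hnm⟩, hC⟩
      exact ⟨by simpa using hnm, hnS, by simp [hC]⟩
  choose sm sT sb hmem hinf hspec using step
  -- iterate
  let MS : ℕ → {S : Set ℕ // S.Infinite} := fun i =>
    Nat.rec ⟨Set.univ, Set.infinite_univ⟩
      (fun _ prev => ⟨sT prev.1 prev.2, hinf prev.1 prev.2⟩) i
  set a : ℕ → ℕ := fun i => sm (MS i).1 (MS i).2 with ha
  set β : ℕ → Bool := fun i => sb (MS i).1 (MS i).2 with hβ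
  have hMSsucc : ∀ i, (MS (i+1)).1 = sT (MS i).1 (MS i).2 := fun i => rfl
  have hstep : ∀ i, ∀ n ∈ (MS (i+1)).1, a i < n ∧ n ∈ (MS i).1 ∧ (C (a i) n ↔ β i = true) := by
    intro i n hn
    exact hspec (MS i).1 (MS i).2 n hn
  have hchain : ∀ i j, i ≤ j → (MS j).1 ⊆ (MS i).1 := by
    intro i j hij
    induction j with
    | zero => cases Nat.le_zero.mp hij; exact subset_rfl
    | succ j ih =>
      rcases Nat.lt_or_ge i (j+1) with h | h
      · intro n hn
        exact ih (Nat.lt_succ_iff.mp h) ((hstep j n hn).2.1)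
      · have : i = j + 1 := le_antisymm hij h
        subst this; exact subset_rfl
  have hmema : ∀ i, a i ∈ (MS i).1 := fun i => hmem (MS i).1 (MS i).2
  have hkey : ∀ i j, i < j → a i < a j ∧ (C (a i) (a j) ↔ β i = true) := by
    intro i j hij
    have : a j ∈ (MS (i+1)).1 := hchain (i+1) j hij (hmema j)
    obtain ⟨h1, _, h3⟩ := hstep i (a j) this
    exact ⟨h1, h3⟩
  have hamono : StrictMono a := strictMono_nat_of_lt_succ fun n => (hkey n (n+1) (Nat.lt_succ_self n)).1
  -- pigeonhole on colours
  have hcol : ∃ b : Bool, ∃ᶠ i in atTop, β i = b := by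
    by_contra hcon
    push_neg at hcon
    have h1 := hcon true
    have h2 := hcon false
    obtain ⟨i, hi1, hi2⟩ := (h1.and h2).exists
    cases h : β i
    · exact hi2 h
    · exact hi1 h
  obtain ⟨b, hb⟩ := hcol
  obtain ⟨e, hemono, he⟩ := Filter.extraction_of_frequently_atTop hb
  refine ⟨a ∘ e, hamono.comp hemono, ?_⟩
  cases b
  · right
    intro j k hjk
    have := (hkey (e j) (e k) (hemono hjk)).2
    rw [he j] at this
    simp only [Function.comp]
    rw [this]
    simp
  · left
    intro j k hjk
    have := (hkey (e j) (e k) (hemono hjk)).2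
    rw [he j] at this
    simp only [Function.comp]
    rw [this]



/-- Recursion helper: given `n`-dependent properties that can be realized beyond every bound,
find a strictly monotone sequence realizing all of them. -/
theorem exists_seq_strictMono_prop (Q : ℕ → ℕ → Prop) (h : ∀ n N, ∃ m, N < m ∧ Q n m) :
    ∃ g : ℕ → ℕ, StrictMono g ∧ ∀ n, Q n (g n) := by
  choose f hf1 hf2 using h
  set g : ℕ → ℕ := fun n => Nat.rec (f 0 0) (fun k prev => f (k+1) prev) n with hg
  have hgs : ∀ k, g (k+1) = f (k+1) (g k) := fun k => rfl
  have hmono : StrictMono g := by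
    apply strictMono_nat_of_lt_succ
    intro n
    rw [hgs]
    exact hf1 (n+1) (g n)
  refine ⟨g, hmono, ?_⟩
  intro n
  cases n with
  | zero => exact hf2 0 0
  | succ k => rw [hgs]; exact hf2 (k+1) (g k)

/-- A bounded real sequence has a subsequence converging to its liminf. -/
theorem exists_subseq_tendsto_liminf (u : ℕ → ℝ) (M : ℝ)
    (h0 : ∀ n, 0 ≤ u n) (hM : ∀ n, u n ≤ M) :
    ∃ g : ℕ → ℕ, StrictMono g ∧ Tendsto (u ∘ g) atTop (nhds (liminf u atTop)) := by
  set d := liminf u atTop with hd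
  have hbdd_below : IsBoundedUnder (· ≥ ·) atTop u := isBoundedUnder_of ⟨0, h0⟩
  have hbdd_above : IsBoundedUnder (· ≤ ·) atTop u := isBoundedUnder_of ⟨M, hM⟩
  have hcob : IsCoboundedUnder (· ≥ ·) atTop u := hbdd_above.isCoboundedUnder_ge
  have key : ∀ n N : ℕ, ∃ m, N < m ∧ |u m - d| < 1/(n+1) := by
    intro n N
    have hεpos : (0:ℝ) < 1/(n+1) := by positivity
    have h1 : ∀ᶠ m in atTop, d - 1/(n+1) < u m := by
      apply eventually_lt_of_lt_liminf _ hbdd_below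
      linarith
    have h2 : ∃ᶠ m in atTop, u m < d + 1/(n+1) := by
      apply frequently_lt_of_liminf_lt hcob
      linarith
    have h3 := h2.and_eventually (h1.and (eventually_gt_atTop N))
    rw [Filter.frequently_atTop] at h3
    obtain ⟨m, _, hm1, hm2, hm3⟩ := h3 N
    refine ⟨m, hm3, ?_⟩
    rw [abs_sub_lt_iff]
    constructor <;> linarith
  obtain ⟨g, hgmono, hgQ⟩ := exists_seq_strictMono_prop _ key
  refine ⟨g, hgmono, ?_⟩
  rw [Metric.tendsto_atTop]
  intro ε hε
  obtain ⟨K, hK⟩ := exists_nat_gt (1/ε)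
  refine ⟨K, fun n hn => ?_⟩
  have h1 : |u (g n) - d| < 1/(n+1) := hgQ n
  have h2 : (1:ℝ)/(n+1) ≤ 1/(K+1) := by
    apply one_div_le_one_div_of_le
    · positivity
    · exact_mod_cast Nat.add_le_add_right hn 1
  have h3 : (1:ℝ)/(K+1) < ε := by
    rw [div_lt_iff₀ (by positivity)]
    rw [div_lt_iff₀ hε] at hK
    nlinarith [hε]
  rw [Real.dist_eq]
  simp only [Function.comp]
  calc |u (g n) - d| < 1/(n+1) := h1
  _ ≤ 1/(K+1) := h2
  _ < ε := h3



variable {X : Type*} [NormedAddCommGroup X] [NormedSpace ℝ X]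




/-- Ultrafilter limit of a bounded sequence, as an element of the double dual. -/
theorem exists_ulim (U : Ultrafilter ℕ) (w : ℕ → X) (hw : ∀ n, ‖w n‖ ≤ 1) :
    ∃ Λ : StrongDual ℝ (StrongDual ℝ X),
      ∀ f : X →L[ℝ] ℝ, Tendsto (fun n => f (w n)) (↑U) (nhds (Λ f)) := by
  have hbd : ∀ (f : X →L[ℝ] ℝ) (n : ℕ), |f (w n)| ≤ ‖f‖ := by
    intro f n
    calc |f (w n)| = ‖f (w n)‖ := (Real.norm_eq_abs _).symm
    _ ≤ ‖f‖ * ‖w n‖ := f.le_opNorm _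
    _ ≤ ‖f‖ * 1 := by
        apply mul_le_mul_of_nonneg_left (hw n) (norm_nonneg f)
    _ = ‖f‖ := mul_one _
  have hlim : ∀ f : X →L[ℝ] ℝ, ∃ r : ℝ, Tendsto (fun n => f (w n)) (↑U) (nhds r) := by
    intro f
    have hmem : ∀ n, f (w n) ∈ Icc (-‖f‖) ‖f‖ := fun n => abs_le.mp (hbd f n)
    have hle : ↑(U.map fun n => f (w n)) ≤ 𝓟 (Icc (-‖f‖) ‖f‖) := by
      rw [Filter.le_principal_iff]
      exact Filter.mem_map.2 (Filter.Eventually.of_forall hmem)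
    obtain ⟨r, _, hr⟩ := (isCompact_Icc (a := -‖f‖) (b := ‖f‖)).ultrafilter_le_nhds _ hle
    exact ⟨r, hr⟩
  choose L hL using hlim
  have hadd : ∀ f g : X →L[ℝ] ℝ, L (f + g) = L f + L g := by
    intro f g
    refine tendsto_nhds_unique (hL (f + g)) ?_
    have := (hL f).add (hL g)
    simpa using this
  have hsmul : ∀ (c : ℝ) (f : X →L[ℝ] ℝ), L (c • f) = c * L f := by
    intro c f
    refine tendsto_nhds_unique (hL (c • f)) ?_
    have := (hL f).const_mul c
    simpa using this
  have hbound : ∀ f : X →L[ℝ] ℝ, ‖L f‖ ≤ 1 * ‖f‖ := by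
    intro f
    rw [one_mul, Real.norm_eq_abs]
    have h1 : Tendsto (fun n => |f (w n)|) (↑U) (nhds |L f|) := (hL f).abs
    exact le_of_tendsto h1 (Filter.Eventually.of_forall (hbd f))
  refine ⟨LinearMap.mkContinuous
    ({ toFun := L
       map_add' := hadd
       map_smul' := by intro c f; simpa using hsmul c f } : (X →L[ℝ] ℝ) →ₗ[ℝ] ℝ) 1 hbound, ?_⟩
  intro f
  exact hL f

theorem exists_weak_subseq
    (hrefl : Function.Surjective (NormedSpace.inclusionInDoubleDual ℝ X))
    (x : ℕ → X) (hx : ∀ n, ‖x n‖ ≤ 1) :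
    ∃ (g : ℕ → ℕ) (x₀ : X), StrictMono g ∧
      ∀ f : X →L[ℝ] ℝ, Tendsto (fun k => f (x (g k))) atTop (nhds (f x₀)) := by
  classical
  set Yc : Submodule ℝ X := (Submodule.span ℝ (Set.range x)).topologicalClosure with hYcdef
  have hxY : ∀ n, x n ∈ Yc :=
    fun n => (Submodule.le_topologicalClosure _) (Submodule.subset_span ⟨n, rfl⟩)
  -- a countable set whose closure contains Yc
  have h1 : TopologicalSpace.IsSeparable (Submodule.span ℝ (Set.range x) : Set X) :=
    TopologicalSpace.IsSeparable.span ((Set.countable_range x).isSeparable)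
  obtain ⟨c, hcc, hcsub⟩ := h1
  have hYc_sub : (Yc : Set X) ⊆ closure c := by
    rw [hYcdef]
    rw [Submodule.topologicalClosure_coe]
    exact closure_minimal hcsub isClosed_closure
  have hcne : c.Nonempty := by
    rcases Set.eq_empty_or_nonempty c with h | h
    · exfalso
      have h0 : (0 : X) ∈ closure c := hcsub (Submodule.zero_mem _)
      rw [h, closure_empty] at h0
      exact h0
    · exact h
  obtain ⟨e, he⟩ := hcc.exists_eq_range hcne
  -- norming functionals of the countable dense family
  have hDex : ∀ n : ℕ, ∃ g : X →L[ℝ] ℝ, ‖g‖ ≤ 1 ∧ g (e n) = ‖e n‖ :=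
    fun n => exists_dual_vector'' ℝ (e n)
  choose D hD1 hD2 using hDex
  -- separation on Yc
  have hSep : ∀ z : X, z ∈ Yc → (∀ n, D n z = 0) → z = 0 := by
    intro z hz hDz
    by_contra hz0
    have hzpos : 0 < ‖z‖ := norm_pos_iff.mpr hz0
    have hzc : z ∈ closure c := hYc_sub hz
    rw [Metric.mem_closure_iff] at hzc
    obtain ⟨y, hyc, hyd⟩ := hzc (‖z‖/3) (by linarith)
    obtain ⟨n, rfl⟩ : ∃ n, y = e n := by
      rw [he] at hyc; obtain ⟨n, hn⟩ := hyc; exact ⟨n, hn.symm⟩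
    have hdist : ‖z - e n‖ < ‖z‖/3 := by
      rw [← dist_eq_norm]; exact hyd
    have h1 : |D n (z - e n)| ≤ ‖z‖/3 := by
      calc |D n (z - e n)| = ‖D n (z - e n)‖ := (Real.norm_eq_abs _).symm
      _ ≤ ‖D n‖ * ‖z - e n‖ := (D n).le_opNorm _
      _ ≤ 1 * ‖z - e n‖ := by
          apply mul_le_mul_of_nonneg_right (hD1 n) (norm_nonneg _)
      _ ≤ ‖z‖/3 := by rw [one_mul]; linarith
    have h2 : ‖e n‖ ≥ 2*‖z‖/3 := by
      have := norm_sub_norm_le z (e n)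
      have h3 : ‖z - e n‖ ≥ ‖z‖ - ‖e n‖ := by
        calc ‖z‖ - ‖e n‖ ≤ |‖z‖ - ‖e n‖| := le_abs_self _
        _ ≤ ‖z - e n‖ := abs_norm_sub_norm_le _ _
      linarith
    have h4 : D n z = ‖e n‖ + D n (z - e n) := by
      rw [map_sub, hD2 n]; ring
    have h5 : D n z ≥ 2*‖z‖/3 - ‖z‖/3 := by
      rw [h4]
      have := neg_abs_le (D n (z - e n))
      linarith
    have h6 := hDz n
    linarith
  -- membership of ultrafilter-limits in Yc
  obtain ⟨U, hU⟩ := Ultrafilter.exists_le (atTop : Filter ℕ)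
  have hmemY : ∀ (w : ℕ → X), (∀ k, w k ∈ Yc) → ∀ x₀ : X,
      (∀ f : X →L[ℝ] ℝ, Tendsto (fun k => f (w k)) (↑U) (nhds (f x₀))) → x₀ ∈ Yc := by
    intro w hw x₀ hconv
    by_contra hx₀
    obtain ⟨f, u, hfa, hfx⟩ := geometric_hahn_banach_closed_point
      (Yc.convex) (Submodule.isClosed_topologicalClosure _) hx₀
    have hf0 : ∀ a ∈ Yc, f a = 0 := by
      intro a ha
      by_contra hfa0
      have hb : ((u+1)/(f a)) • a ∈ Yc := Yc.smul_mem _ ha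
      have := hfa _ hb
      rw [map_smul] at this
      rw [smul_eq_mul, div_mul_cancel₀ _ hfa0] at this
      linarith
    have hu0 : 0 < u := by
      have := hfa 0 (Submodule.zero_mem _)
      simpa using this
    have h1 : Tendsto (fun k => f (w k)) (↑U) (nhds (f x₀)) := hconv f
    have h2 : (fun k => f (w k)) = (fun _ => (0:ℝ)) := funext fun k => hf0 _ (hw k)
    rw [h2] at h1
    have h3 : f x₀ = 0 := (tendsto_nhds_unique h1 tendsto_const_nhds)
    have := hf0 x₀
    linarith
  -- extract a subsequence along which all the D n converge
  set F : ℕ → ℕ → ℝ := fun k n => D n (x k) with hF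
  have hFK : ∀ k, F k ∈ Set.univ.pi (fun _ : ℕ => Icc (-1:ℝ) 1) := by
    intro k
    rw [Set.mem_univ_pi]
    intro n
    have : |D n (x k)| ≤ 1 := by
      calc |D n (x k)| = ‖D n (x k)‖ := (Real.norm_eq_abs _).symm
      _ ≤ ‖D n‖ * ‖x k‖ := (D n).le_opNorm _
      _ ≤ 1 * 1 := by
          apply mul_le_mul (hD1 n) (hx k) (norm_nonneg _) zero_le_one
      _ = 1 := mul_one _
    exact abs_le.mp this
  obtain ⟨L, _, g, hg, hgconv⟩ :=
    (isCompact_univ_pi (fun _ : ℕ => isCompact_Icc)).isSeqCompact hFK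
  have hcomp : ∀ n, Tendsto (fun k => D n (x (g k))) atTop (nhds (L n)) := by
    intro n
    have := tendsto_pi_nhds.mp hgconv n
    exact this
  -- the candidate limit via ultrafilter + reflexivity
  obtain ⟨Λ, hΛ⟩ := exists_ulim U (fun k => x (g k)) (fun k => hx (g k))
  obtain ⟨x₀, hx₀⟩ := hrefl Λ
  have hconv0 : ∀ f : X →L[ℝ] ℝ, Tendsto (fun k => f (x (g k))) (↑U) (nhds (f x₀)) := by
    intro f
    have h1 := hΛ f
    have h2 : Λ f = f x₀ := by rw [← hx₀]; rfl
    rwa [h2] at h1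
  have hx₀Y : x₀ ∈ Yc := hmemY _ (fun k => hxY _) x₀ hconv0
  have hDx₀ : ∀ n, D n x₀ = L n := by
    intro n
    exact tendsto_nhds_unique (hconv0 (D n)) ((hcomp n).mono_left hU)
  refine ⟨g, x₀, hg, ?_⟩
  intro f
  by_contra hnot
  rw [Metric.tendsto_atTop] at hnot
  push_neg at hnot
  obtain ⟨ε, hε, hfreq⟩ := hnot
  have hfreq' : ∃ᶠ k in atTop, ε ≤ dist (f (x (g k))) (f x₀) := by
    rw [Filter.frequently_atTop]
    intro N
    obtain ⟨k, hk1, hk2⟩ := hfreq N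
    exact ⟨k, hk1, hk2⟩
  obtain ⟨ψ, hψ, hψ2⟩ := Filter.extraction_of_frequently_atTop hfreq'
  obtain ⟨Λ', hΛ'⟩ := exists_ulim U (fun j => x (g (ψ j))) (fun j => hx _)
  obtain ⟨x₀', hx₀'⟩ := hrefl Λ'
  have hconv0' : ∀ f' : X →L[ℝ] ℝ,
      Tendsto (fun j => f' (x (g (ψ j)))) (↑U) (nhds (f' x₀')) := by
    intro f'
    have h1 := hΛ' f'
    have h2 : Λ' f' = f' x₀' := by rw [← hx₀']; rfl
    rwa [h2] at h1
  have hx₀'Y : x₀' ∈ Yc := hmemY _ (fun j => hxY _) x₀' hconv0'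
  have hD' : ∀ n, D n x₀' = L n := by
    intro n
    have h1 : Tendsto (fun j => D n (x (g (ψ j)))) atTop (nhds (L n)) :=
      (hcomp n).comp hψ.tendsto_atTop
    exact tendsto_nhds_unique (hconv0' (D n)) (h1.mono_left hU)
  have heq : x₀' = x₀ := by
    have hz : x₀' - x₀ ∈ Yc := Yc.sub_mem hx₀'Y hx₀Y
    have hDz : ∀ n, D n (x₀' - x₀) = 0 := by
      intro n
      rw [map_sub, hD' n, hDx₀ n, sub_self]
    have := hSep _ hz hDz
    exact sub_eq_zero.mp this
  have htd : Tendsto (fun j => dist (f (x (g (ψ j)))) (f x₀)) (↑U)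
      (nhds (dist (f x₀') (f x₀))) := (hconv0' f).dist tendsto_const_nhds
  have hge : ε ≤ dist (f x₀') (f x₀) :=
    ge_of_tendsto htd (Filter.Eventually.of_forall hψ2)
  rw [heq, dist_self] at hge
  linarith

variable {X : Type*} [NormedAddCommGroup X] [NormedSpace ℝ X]

set_option maxHeartbeats 1000000 in
theorem key_step
    (hrefl : Function.Surjective (NormedSpace.inclusionInDoubleDual ℝ X))
    (hopial : NonStrictOpial X)
    {σ s : ℝ} (x : ℕ → X) (hx1 : ∀ n, ‖x n‖ ≤ 1)
    (hx2 : ∀ n m : ℕ, n ≠ m → σ ≤ ‖x n - x m‖)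
    (hσ : 0 < σ) (hs0 : 0 ≤ s) (hs : s < Real.sqrt σ) :
    ∃ y : ℕ → X, (∀ n, ‖y n‖ ≤ 1) ∧
      ∀ n m : ℕ, n ≠ m → s ≤ ‖y n - y m‖ ∧ s ≤ ‖y n + y m‖ := by
  classical
  obtain ⟨g, x₀, hg, hconv⟩ := exists_weak_subseq hrefl x hx1
  -- renormalize around the weak limit
  set z : ℕ → X := fun k => x (g k) - x₀ with hz
  set u : ℕ → ℝ := fun k => ‖z k‖ with hu
  have hu0 : ∀ k, 0 ≤ u k := fun k => norm_nonneg _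
  have huM : ∀ k, u k ≤ 1 + ‖x₀‖ := by
    intro k
    calc u k ≤ ‖x (g k)‖ + ‖x₀‖ := norm_sub_le _ _
    _ ≤ 1 + ‖x₀‖ := by have := hx1 (g k); linarith
  obtain ⟨g2, hg2, hn2⟩ := exists_subseq_tendsto_liminf u (1 + ‖x₀‖) hu0 huM
  set d : ℝ := liminf u atTop with hd
  -- the subsequence we will work with
  set w : ℕ → ℕ := fun k => g (g2 k) with hw
  have hwmono : StrictMono w := hg.comp hg2
  set z2 : ℕ → X := fun k => x (w k) - x₀ with hz2
  have hn2' : Tendsto (fun k => ‖z2 k‖) atTop (nhds d) := hn2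
  have hconv2 : ∀ f : X →L[ℝ] ℝ,
      Tendsto (fun k => f (x (w k))) atTop (nhds (f x₀)) :=
    fun f => (hconv f).comp hg2.tendsto_atTop
  have hz2sep : ∀ a b : ℕ, a ≠ b → σ ≤ ‖z2 a - z2 b‖ := by
    intro a b hab
    have : z2 a - z2 b = x (w a) - x (w b) := by
      simp only [hz2]; abel
    rw [this]
    exact hx2 _ _ (fun hcon => hab (hwmono.injective hcon))
  -- Opial's property, recentred at the weak limit
  have hop : ∀ v : X, d ≤ liminf (fun k => ‖z2 k - v‖) atTop := by
    intro v
    have h1 := hopial (fun k => x (w k)) x₀ hconv2 (v + x₀)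
    have h2 : (fun k => ‖x (w k) - x₀‖) = fun k => ‖z2 k‖ := rfl
    have h3 : (fun k => ‖x (w k) - (v + x₀)‖) = fun k => ‖z2 k - v‖ := by
      funext k
      congr 1
      simp only [hz2]
      abel
    rw [h2, h3] at h1
    calc d = liminf (fun k => ‖z2 k‖) atTop := (hn2'.liminf_eq).symm
    _ ≤ _ := h1
  -- d ≤ 1
  have hd1 : d ≤ 1 := by
    have h1 := hopial (fun k => x (w k)) x₀ hconv2 0
    have h2 : (fun k => ‖x (w k) - x₀‖) = fun k => ‖z2 k‖ := rfl
    rw [h2] at h1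
    have h3 : liminf (fun k => ‖x (w k) - 0‖) atTop ≤ 1 := by
      apply liminf_le_of_frequently_le
      · apply Filter.Frequently.of_forall
        intro k
        simpa using hx1 (w k)
      · exact isBoundedUnder_of ⟨0, fun k => norm_nonneg _⟩
    calc d = liminf (fun k => ‖z2 k‖) atTop := (hn2'.liminf_eq).symm
    _ ≤ liminf (fun k => ‖x (w k) - 0‖) atTop := h1
    _ ≤ 1 := h3
  -- σ ≤ 2 d, hence 0 < d
  have hσ2d : σ ≤ 2 * d := by
    have h1 : ∀ k : ℕ, σ ≤ ‖z2 k‖ + ‖z2 (k+1)‖ := by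
      intro k
      calc σ ≤ ‖z2 k - z2 (k+1)‖ := hz2sep _ _ (by omega)
      _ ≤ ‖z2 k‖ + ‖z2 (k+1)‖ := norm_sub_le _ _
    have h2 : Tendsto (fun k => ‖z2 k‖ + ‖z2 (k+1)‖) atTop (nhds (d + d)) := by
      apply Tendsto.add hn2'
      exact hn2'.comp (tendsto_add_atTop_nat 1)
    have := ge_of_tendsto h2 (Filter.Eventually.of_forall h1)
    linarith
  have hd0 : 0 < d := by linarith
  have hsqpos : 0 < Real.sqrt σ := Real.sqrt_pos.mpr hσ
  have hsqmul : Real.sqrt σ * Real.sqrt σ = σ := Real.mul_self_sqrt hσ.le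
  by_cases hcase : Real.sqrt σ ≤ d
  · -- Case α : the norms are large; use the Opial bounds directly
    have hs1 : s < 1 := lt_of_lt_of_le hs (le_trans hcase hd1)
    set ε : ℝ := d * (1 - s) / (2 * (1 + s)) with hε
    have hεpos : 0 < ε := by
      apply div_pos
      · apply mul_pos hd0; linarith
      · linarith
    have hkey : s * (d + ε) ≤ d - ε := by
      have h1 : ε * (2 * (1 + s)) = d * (1 - s) := by
        rw [hε]; field_simp
      nlinarith [hεpos]
    have hC : ∀ j, ∀ᶠ k in atTop, (‖z2 k‖ ≤ d + ε) ∧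
        (d - ε ≤ ‖z2 k - z2 j‖) ∧ (d - ε ≤ ‖z2 k + z2 j‖) := by
      intro j
      have e1 : ∀ᶠ k in atTop, ‖z2 k‖ ≤ d + ε := by
        have : ∀ᶠ k in atTop, ‖z2 k‖ < d + ε :=
          hn2'.eventually_lt_const (by linarith)
        exact this.mono fun k hk => hk.le
      have e2 : ∀ᶠ k in atTop, d - ε ≤ ‖z2 k - z2 j‖ := by
        have h1 : d - ε < liminf (fun k => ‖z2 k - z2 j‖) atTop :=
          lt_of_lt_of_le (by linarith) (hop (z2 j))
        have := eventually_lt_of_lt_liminf h1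
          (isBoundedUnder_of ⟨0, fun k => norm_nonneg _⟩)
        exact this.mono fun k hk => hk.le
      have e3 : ∀ᶠ k in atTop, d - ε ≤ ‖z2 k + z2 j‖ := by
        have h1 : d - ε < liminf (fun k => ‖z2 k + z2 j‖) atTop := by
          have h2 := hop (-(z2 j))
          have h3 : (fun k => ‖z2 k - -(z2 j)‖) = fun k => ‖z2 k + z2 j‖ := by
            funext k; rw [sub_neg_eq_add]
          rw [h3] at h2
          exact lt_of_lt_of_le (by linarith) h2
        have := eventually_lt_of_lt_liminf h1
          (isBoundedUnder_of ⟨0, fun k => norm_nonneg _⟩)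
        exact this.mono fun k hk => hk.le
      exact (e1.and (e2.and e3)).mono fun k hk => ⟨hk.1, hk.2.1, hk.2.2⟩
    obtain ⟨g3, hg3, hg3C⟩ := exists_subseq_pairwise _ hC
    refine ⟨fun k => (d + ε)⁻¹ • z2 (g3 (k+1)), ?_, ?_⟩
    · intro k
      have h1 := (hg3C 0 (k+1) (by omega)).1
      rw [norm_smul, Real.norm_eq_abs, abs_of_pos (by positivity : (0:ℝ) < (d+ε)⁻¹)]
      rw [inv_mul_eq_div, div_le_one (by linarith)]
      exact h1
    · intro n m hnm
      have hpos : (0:ℝ) < d + ε := by linarith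
      rcases Nat.lt_or_ge n m with h | h
      · have hC' := hg3C (n+1) (m+1) (by omega)
        constructor
        · rw [← smul_sub, norm_smul, Real.norm_eq_abs,
            abs_of_pos (by positivity : (0:ℝ) < (d+ε)⁻¹), inv_mul_eq_div,
            le_div_iff₀ hpos]
          calc s * (d + ε) ≤ d - ε := hkey
          _ ≤ ‖z2 (g3 (m+1)) - z2 (g3 (n+1))‖ := hC'.2.1
          _ = ‖z2 (g3 (n+1)) - z2 (g3 (m+1))‖ := norm_sub_rev _ _
        · rw [← smul_add, norm_smul, Real.norm_eq_abs,
            abs_of_pos (by positivity : (0:ℝ) < (d+ε)⁻¹), inv_mul_eq_div,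
            le_div_iff₀ hpos]
          calc s * (d + ε) ≤ d - ε := hkey
          _ ≤ ‖z2 (g3 (m+1)) + z2 (g3 (n+1))‖ := hC'.2.2
          _ = ‖z2 (g3 (n+1)) + z2 (g3 (m+1))‖ := by rw [add_comm]
      · have hlt : m < n := by omega
        have hC' := hg3C (m+1) (n+1) (by omega)
        constructor
        · rw [← smul_sub, norm_smul, Real.norm_eq_abs,
            abs_of_pos (by positivity : (0:ℝ) < (d+ε)⁻¹), inv_mul_eq_div,
            le_div_iff₀ hpos]
          calc s * (d + ε) ≤ d - ε := hkey
          _ ≤ ‖z2 (g3 (n+1)) - z2 (g3 (m+1))‖ := hC'.2.1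
        · rw [← smul_add, norm_smul, Real.norm_eq_abs,
            abs_of_pos (by positivity : (0:ℝ) < (d+ε)⁻¹), inv_mul_eq_div,
            le_div_iff₀ hpos]
          calc s * (d + ε) ≤ d - ε := hkey
          _ ≤ ‖z2 (g3 (n+1)) + z2 (g3 (m+1))‖ := hC'.2.2
  · -- Case β : small norms; Ramsey dichotomy on pair sums at threshold √σ · d
    push_neg at hcase
    set τ : ℝ := Real.sqrt σ * d with hτ
    have hτpos : 0 < τ := mul_pos hsqpos hd0
    have hτσ : τ ≤ σ := by
      calc τ = Real.sqrt σ * d := rfl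
      _ ≤ Real.sqrt σ * Real.sqrt σ := by
          apply mul_le_mul_of_nonneg_left hcase.le hsqpos.le
      _ = σ := hsqmul
    obtain ⟨g4, hg4, hram⟩ := ramsey_pairs (fun j k => τ ≤ ‖z2 j + z2 k‖)
    set z3 : ℕ → X := fun k => z2 (g4 k) with hz3
    have hz3sep : ∀ a b : ℕ, a ≠ b → σ ≤ ‖z3 a - z3 b‖ :=
      fun a b hab => hz2sep _ _ (fun hcon => hab (hg4.injective hcon))
    have hn3 : Tendsto (fun k => ‖z3 k‖) atTop (nhds d) :=
      hn2'.comp hg4.tendsto_atTop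
    rcases hram with hA | hB
    · -- Case A : all pair sums at least τ
      set ε' : ℝ := d * (Real.sqrt σ - s) / (2 * (s + 1)) with hε'
      have hε'pos : 0 < ε' := by
        apply div_pos
        · apply mul_pos hd0; linarith
        · linarith
      have hkeyA : s * (d + ε') ≤ τ := by
        have h1 : ε' * (2 * (s + 1)) = d * (Real.sqrt σ - s) := by
          rw [hε']; field_simp
        nlinarith [hε'pos, hd0, hs0]
      obtain ⟨N, hN⟩ := (Filter.eventually_atTop).mp
        (hn3.eventually_lt_const (by linarith : d < d + ε'))
      refine ⟨fun k => (d + ε')⁻¹ • z3 (k + N), ?_, ?_⟩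
      · intro k
        rw [norm_smul, Real.norm_eq_abs, abs_of_pos (by positivity : (0:ℝ) < (d+ε')⁻¹),
          inv_mul_eq_div, div_le_one (by linarith)]
        exact (hN (k + N) (by omega)).le
      · intro n m hnm
        have hpos : (0:ℝ) < d + ε' := by linarith
        have hsum : τ ≤ ‖z3 (n + N) + z3 (m + N)‖ := by
          rcases Nat.lt_or_ge n m with h | h
          · exact hA (n+N) (m+N) (by omega)
          · have : τ ≤ ‖z3 (m+N) + z3 (n+N)‖ := hA (m+N) (n+N) (by omega)
            rwa [add_comm] at this
        constructor
        · rw [← smul_sub, norm_smul, Real.norm_eq_abs,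
            abs_of_pos (by positivity : (0:ℝ) < (d+ε')⁻¹), inv_mul_eq_div,
            le_div_iff₀ hpos]
          calc s * (d + ε') ≤ τ := hkeyA
          _ ≤ σ := hτσ
          _ ≤ ‖z3 (n+N) - z3 (m+N)‖ := hz3sep _ _ (by omega)
        · rw [← smul_add, norm_smul, Real.norm_eq_abs,
            abs_of_pos (by positivity : (0:ℝ) < (d+ε')⁻¹), inv_mul_eq_div,
            le_div_iff₀ hpos]
          calc s * (d + ε') ≤ τ := hkeyA
          _ ≤ ‖z3 (n+N) + z3 (m+N)‖ := hsum
    · -- Case B : all pair sums below τ; use a norming functional of a difference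
      have hv0 : z3 0 - z3 1 ≠ 0 := by
        intro hcon
        have := hz3sep 0 1 (by omega)
        rw [hcon, norm_zero] at this
        linarith
      obtain ⟨G, hG1, hG2⟩ := exists_dual_vector ℝ (z3 0 - z3 1) (norm_ne_zero_iff.mpr hv0)
      have hGval : σ ≤ G (z3 0) - G (z3 1) := by
        have h1 : G (z3 0 - z3 1) = G (z3 0) - G (z3 1) := map_sub G _ _
        rw [← h1, hG2]
        exact hz3sep 0 1 (by omega)
      have hφex : ∃ (φ : X →L[ℝ] ℝ) (E : ℕ), ‖φ‖ = 1 ∧ E < 2 ∧ σ/2 ≤ φ (z3 E) := by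
        rcases le_or_gt (σ/2) (G (z3 0)) with h | h
        · exact ⟨G, 0, hG1, by omega, h⟩
        · refine ⟨-G, 1, by rw [norm_neg]; exact hG1, by omega, ?_⟩
          have : (-G) (z3 1) = -(G (z3 1)) := rfl
          rw [this]
          linarith
      obtain ⟨φ, E, hφ1, hE2, hφE⟩ := hφex
      set ε₂ : ℝ := Real.sqrt σ * (Real.sqrt σ - s) / 2 with hε₂
      have hε₂pos : 0 < ε₂ := by
        apply div_pos
        · apply mul_pos hsqpos; linarith
        · norm_num
      -- φ (z3 k) → 0
      have hweak3 : Tendsto (fun k => φ (z3 k)) atTop (nhds 0) := by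
        have h1 : Tendsto (fun k => φ (x (w (g4 k)))) atTop (nhds (φ x₀)) :=
          (hconv2 φ).comp hg4.tendsto_atTop
        have h2 : (fun k => φ (z3 k)) = fun k => φ (x (w (g4 k))) - φ x₀ := by
          funext k
          simp only [hz3, hz2]
          rw [map_sub]
        rw [h2]
        have := h1.sub_const (φ x₀)
        simpa using this
      have hev : ∀ᶠ k in atTop, |φ (z3 k)| < ε₂ := by
        obtain ⟨N, hN⟩ := Metric.tendsto_atTop.mp hweak3 ε₂ hε₂pos
        rw [Filter.eventually_atTop]
        refine ⟨N, fun k hk => ?_⟩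
        have := hN k hk
        rwa [Real.dist_eq, sub_zero] at this
      obtain ⟨N₂, hN₂⟩ := Filter.eventually_atTop.mp hev
      set K : ℕ := max N₂ 2 with hK
      have hKN₂ : N₂ ≤ K := le_max_left _ _
      have hK2 : 2 ≤ K := le_max_right _ _
      have hkeyB1 : s * τ ≤ σ := by
        have h1 : s * τ ≤ Real.sqrt σ * τ := by
          apply mul_le_mul_of_nonneg_right hs.le hτpos.le
        have h2 : Real.sqrt σ * τ = σ * d := by
          rw [hτ, ← mul_assoc, hsqmul]
        have h3 : σ * d ≤ σ := by
          calc σ * d ≤ σ * 1 := mul_le_mul_of_nonneg_left hd1 hσ.le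
          _ = σ := mul_one _
        linarith
      have hkeyB2 : s * τ ≤ σ - 2 * ε₂ := by
        have h1 : σ - 2 * ε₂ = Real.sqrt σ * s := by
          rw [hε₂]; nlinarith [hsqmul]
        have h2 : s * τ ≤ Real.sqrt σ * s := by
          rw [hτ]
          calc s * (Real.sqrt σ * d) ≤ s * (Real.sqrt σ * 1) := by
                apply mul_le_mul_of_nonneg_left _ hs0
                apply mul_le_mul_of_nonneg_left hd1 hsqpos.le
          _ = Real.sqrt σ * s := by ring
        linarith
      refine ⟨fun k => τ⁻¹ • (z3 E + z3 (k + K)), ?_, ?_⟩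
      · intro k
        have hEk : E < k + K := by omega
        have h1 : ¬ τ ≤ ‖z3 E + z3 (k+K)‖ := by
          have := hB E (k+K) hEk
          simpa only [hz3] using this
        rw [norm_smul, Real.norm_eq_abs, abs_of_pos (by positivity : (0:ℝ) < τ⁻¹),
          inv_mul_eq_div, div_le_one hτpos]
        exact (not_le.mp h1).le
      · intro n m hnm
        constructor
        · have h1 : (τ⁻¹ • (z3 E + z3 (n + K))) - (τ⁻¹ • (z3 E + z3 (m + K)))
              = τ⁻¹ • (z3 (n+K) - z3 (m+K)) := by
            rw [← smul_sub]
            congr 1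
            abel
          rw [h1, norm_smul, Real.norm_eq_abs, abs_of_pos (by positivity : (0:ℝ) < τ⁻¹),
            inv_mul_eq_div, le_div_iff₀ hτpos]
          calc s * τ ≤ σ := hkeyB1
          _ ≤ ‖z3 (n+K) - z3 (m+K)‖ := hz3sep _ _ (by omega)
        · have h1 : (τ⁻¹ • (z3 E + z3 (n + K))) + (τ⁻¹ • (z3 E + z3 (m + K)))
              = τ⁻¹ • ((z3 E + z3 (n+K)) + (z3 E + z3 (m+K))) := by
            rw [← smul_add]
          rw [h1, norm_smul, Real.norm_eq_abs, abs_of_pos (by positivity : (0:ℝ) < τ⁻¹),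
            inv_mul_eq_div, le_div_iff₀ hτpos]
          set W : X := (z3 E + z3 (n+K)) + (z3 E + z3 (m+K)) with hW
          have hφW : σ - 2*ε₂ ≤ φ W := by
            have e1 : φ W = φ (z3 E) + φ (z3 (n+K)) + (φ (z3 E) + φ (z3 (m+K))) := by
              rw [hW]
              simp [map_add]
            have e2 : |φ (z3 (n+K))| < ε₂ := hN₂ _ (by omega)
            have e3 : |φ (z3 (m+K))| < ε₂ := hN₂ _ (by omega)
            have e4 := neg_abs_le (φ (z3 (n+K)))
            have e5 := neg_abs_le (φ (z3 (m+K)))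
            rw [e1]
            have := hφE
            linarith
          have hWnorm : φ W ≤ ‖W‖ := by
            calc φ W ≤ |φ W| := le_abs_self _
            _ = ‖φ W‖ := (Real.norm_eq_abs _).symm
            _ ≤ ‖φ‖ * ‖W‖ := φ.le_opNorm _
            _ = ‖W‖ := by rw [hφ1, one_mul]
          calc s * τ ≤ σ - 2*ε₂ := hkeyB2
          _ ≤ φ W := hφW
          _ ≤ ‖W‖ := hWnorm


end KottmanAux

/-- **Corollary 2.2.** For a reflexive Banach space `X` with the non-strict Opial
property, `K^s(X) ≥ √(K(X))`. Reflexivity is expressed as surjectivity of the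
canonical embedding of `X` into its bidual. -/
theorem symKottman_ge_sqrt_kottman_of_reflexive_opial (X : Type*) [NormedAddCommGroup X]
    [NormedSpace ℝ X] [CompleteSpace X]
    (hrefl : Function.Surjective (NormedSpace.inclusionInDoubleDual ℝ X))
    (hopial : NonStrictOpial X) :
    Real.sqrt (kottmanConst X) ≤ symKottmanConst X := by
  classical
  set A : Set ℝ := {σ : ℝ | 0 ≤ σ ∧ ∃ x : ℕ → X, (∀ n, ‖x n‖ ≤ 1) ∧
    ∀ n m : ℕ, n ≠ m → σ ≤ ‖x n - x m‖} with hA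
  set B : Set ℝ := {σ : ℝ | 0 ≤ σ ∧ ∃ x : ℕ → X, (∀ n, ‖x n‖ ≤ 1) ∧
    ∀ n m : ℕ, n ≠ m → σ ≤ ‖x n - x m‖ ∧ σ ≤ ‖x n + x m‖} with hB
  have hKA : kottmanConst X = sSup A := rfl
  have hKB : symKottmanConst X = sSup B := rfl
  have hA0 : (0:ℝ) ∈ A := by
    refine ⟨le_refl 0, fun _ => 0, ?_, ?_⟩
    · intro n; simp
    · intro n m _; simp
  have hB0 : (0:ℝ) ∈ B := by
    refine ⟨le_refl 0, fun _ => 0, ?_, ?_⟩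
    · intro n; simp
    · intro n m _; constructor <;> simp
  have hAbdd : BddAbove A := by
    refine ⟨2, ?_⟩
    rintro σ ⟨hσ0, x, hx1, hx2⟩
    calc σ ≤ ‖x 0 - x 1‖ := hx2 0 1 (by omega)
    _ ≤ ‖x 0‖ + ‖x 1‖ := norm_sub_le _ _
    _ ≤ 2 := by have := hx1 0; have := hx1 1; linarith
  have hBbdd : BddAbove B := by
    refine ⟨2, ?_⟩
    rintro σ ⟨hσ0, x, hx1, hx2⟩
    calc σ ≤ ‖x 0 - x 1‖ := (hx2 0 1 (by omega)).1
    _ ≤ ‖x 0‖ + ‖x 1‖ := norm_sub_le _ _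
    _ ≤ 2 := by have := hx1 0; have := hx1 1; linarith
  have hc0 : 0 ≤ sSup B := le_csSup hBbdd hB0
  rw [hKA, hKB]
  by_contra hcon
  push_neg at hcon
  set c : ℝ := sSup B with hcdef
  set s : ℝ := (c + Real.sqrt (sSup A)) / 2 with hsdef
  have hsc : c < s := by rw [hsdef]; linarith
  have hss : s < Real.sqrt (sSup A) := by rw [hsdef]; linarith
  have hs0 : 0 < s := by
    have : 0 < Real.sqrt (sSup A) := lt_of_le_of_lt hc0 hcon
    rw [hsdef]; linarith
  have hs2 : s^2 < sSup A := by
    have h1 : Real.sqrt (s^2) < Real.sqrt (sSup A) := by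
      rw [Real.sqrt_sq hs0.le]
      exact hss
    by_contra h2
    push_neg at h2
    have := Real.sqrt_le_sqrt h2
    linarith
  obtain ⟨σ, hσA, hσs⟩ := exists_lt_of_lt_csSup ⟨0, hA0⟩ hs2
  obtain ⟨hσ0, x, hx1, hx2⟩ := hσA
  have hσpos : 0 < σ := lt_of_le_of_lt (by positivity) hσs
  have hssqrt : s < Real.sqrt σ := by
    have := Real.sqrt_lt_sqrt (by positivity) hσs
    rwa [Real.sqrt_sq hs0.le] at this
  obtain ⟨y, hy1, hy2⟩ := KottmanAux.key_step hrefl hopial x hx1 hx2 hσpos hs0.le hssqrt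
  have hsB : s ∈ B := ⟨hs0.le, y, hy1, hy2⟩
  have := le_csSup hBbdd hsB
  rw [← hcdef] at this
  linarith
end

section
/- Let X be a Banach space admitting a suppression 1-unconditional Schauder basis (e_j)_{j=1}^∞; that is, every x ∈ X has a unique norm-convergent expansion x = Σ_{j=1}^∞ a_j e_j, and for every finitely supported scalar sequence (α_j) and every finite set A ⊆ ℕ one has ‖Σ_{j∈A} α_j e_j‖ ≤ ‖Σ_{j=1}^∞ α_j e_j‖. Then K^s(X) ≥ √(K(X)). -/
open Filter Topology

/-- `e` is a Schauder basis of `X`: every `x ∈ X` has a unique expansion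
`x = Σ_{j} a j • e j` with norm-convergent partial sums. -/
def IsSchauderBasis {X : Type*} [NormedAddCommGroup X] [NormedSpace ℝ X] (e : ℕ → X) : Prop :=
  ∀ x : X, ∃! a : ℕ → ℝ,
    Tendsto (fun N => ∑ j ∈ Finset.range N, a j • e j) atTop (nhds x)

/-- `e` is suppression `1`-unconditional: deleting coefficients from a finitely supported
linear combination never increases the norm. -/
def SuppressionOneUnconditional {X : Type*} [NormedAddCommGroup X] [NormedSpace ℝ X]
    (e : ℕ → X) : Prop :=
  ∀ (α : ℕ →₀ ℝ) (A : Finset ℕ),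
    ‖∑ j ∈ A, α j • e j‖ ≤ ‖∑ j ∈ α.support, α j • e j‖

namespace KottmanAux

/-- abbreviation used by the auxiliary lemmas. -/
def Supp {X : Type*} [NormedAddCommGroup X] [NormedSpace ℝ X] (e : ℕ → X) : Prop :=
  SuppressionOneUnconditional e

section Aux
variable {X : Type*} [NormedAddCommGroup X] [NormedSpace ℝ X] {e : ℕ → X}

/-- Master projection lemma. -/
theorem proj_le (e : ℕ → X) (hs : Supp e) (c : ℕ → ℝ) (B : Finset ℕ) (hz : ∀ j ∉ B, c j = 0)
    (A : Finset ℕ) : ‖∑ j ∈ A, c j • e j‖ ≤ ‖∑ j ∈ B, c j • e j‖ := by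
  have hmem : ∀ a : ℕ, c a ≠ 0 → a ∈ B := fun a ha => by
    by_contra h; exact ha (hz a h)
  set α : ℕ →₀ ℝ := Finsupp.onFinset B c hmem with hα
  have happ : ∀ j, α j = c j := fun j => rfl
  have h1 := hs α A
  have hL : ∑ j ∈ A, α j • e j = ∑ j ∈ A, c j • e j := by
    refine Finset.sum_congr rfl fun j _ => by rw [happ]
  have hR : ∑ j ∈ α.support, α j • e j = ∑ j ∈ B, c j • e j := by
    rw [show ∑ j ∈ α.support, α j • e j = ∑ j ∈ α.support, c j • e j from
      Finset.sum_congr rfl fun j _ => by rw [happ]]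
    refine Finset.sum_subset (Finsupp.support_onFinset_subset) fun x _ hx => ?_
    have : α x = 0 := Finsupp.notMem_support_iff.mp hx
    rw [happ] at this
    rw [this, zero_smul]
  rw [hL, hR] at h1
  exact h1

/-- Convexity/monotonicity: scaling up a disjoint part does not decrease the norm. -/
theorem norm_smul_add_mono (u v : X) (h : ‖v‖ ≤ ‖u + v‖) {t : ℝ} (ht : 1 ≤ t) :
    ‖u + v‖ ≤ ‖t • u + v‖ := by
  have ht0 : 0 < t := lt_of_lt_of_le one_pos ht
  have key : u + v = t⁻¹ • (t • u + v) + (1 - t⁻¹) • v := by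
    rw [smul_add, smul_smul, inv_mul_cancel₀ (ne_of_gt ht0), one_smul, sub_smul, one_smul]
    abel
  have h2 : ‖u + v‖ ≤ t⁻¹ * ‖t • u + v‖ + (1 - t⁻¹) * ‖v‖ := by
    calc ‖u + v‖ = ‖t⁻¹ • (t • u + v) + (1 - t⁻¹) • v‖ := by rw [← key]
    _ ≤ ‖t⁻¹ • (t • u + v)‖ + ‖(1 - t⁻¹) • v‖ := norm_add_le _ _
    _ = t⁻¹ * ‖t • u + v‖ + (1 - t⁻¹) * ‖v‖ := by
        rw [norm_smul, norm_smul, Real.norm_eq_abs, Real.norm_eq_abs,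
          abs_of_pos (inv_pos.mpr ht0), abs_of_nonneg (by
            have : t⁻¹ ≤ 1 := inv_le_one_of_one_le₀ ht
            linarith)]
  have hinv1 : t⁻¹ ≤ 1 := inv_le_one_of_one_le₀ ht
  have h4 : ‖u + v‖ ≤ t⁻¹ * ‖t • u + v‖ + (1 - t⁻¹) * ‖u + v‖ := by nlinarith
  have h3 : t⁻¹ * ‖u + v‖ ≤ t⁻¹ * ‖t • u + v‖ := by linarith
  exact le_of_mul_le_mul_left h3 (inv_pos.mpr ht0)

/-- inverse-scaled sum bound for "disjoint" u v -/
theorem norm_invsmul_add_ge (u v : X) (hu : ‖u‖ ≤ ‖u + v‖) (hv : ‖v‖ ≤ ‖u + v‖)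
    {p q : ℝ} (hp : 0 < p) (hq : 0 < q) :
    ‖u + v‖ / max p q ≤ ‖p⁻¹ • u + q⁻¹ • v‖ := by
  rcases le_total p q with hle | hle
  · have hmax : max p q = q := max_eq_right hle
    have ht : 1 ≤ q / p := (one_le_div hp).mpr hle
    have h1 : ‖u + v‖ ≤ ‖(q / p) • u + v‖ := norm_smul_add_mono u v hv ht
    have h2 : p⁻¹ • u + q⁻¹ • v = q⁻¹ • ((q / p) • u + v) := by
      rw [smul_add, smul_smul]
      congr 1
      rw [div_eq_mul_inv]
      rw [show q⁻¹ * (q * p⁻¹) = (q⁻¹ * q) * p⁻¹ by ring, inv_mul_cancel₀ (ne_of_gt hq), one_mul]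
    rw [h2, norm_smul, Real.norm_eq_abs, abs_of_pos (inv_pos.mpr hq), hmax, div_eq_inv_mul]
    have := mul_le_mul_of_nonneg_left h1 (le_of_lt (inv_pos.mpr hq))
    linarith
  · have hmax : max p q = p := max_eq_left hle
    have ht : 1 ≤ p / q := (one_le_div hq).mpr hle
    have h1 : ‖v + u‖ ≤ ‖(p / q) • v + u‖ := norm_smul_add_mono v u (by rwa [add_comm]) ht
    have h2 : p⁻¹ • u + q⁻¹ • v = p⁻¹ • ((p / q) • v + u) := by
      rw [smul_add, smul_smul]
      rw [show p⁻¹ * (p / q) = (p⁻¹ * p) / q by ring, inv_mul_cancel₀ (ne_of_gt hp), add_comm]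
      norm_num [div_eq_inv_mul]
    rw [h2, norm_smul, Real.norm_eq_abs, abs_of_pos (inv_pos.mpr hp), hmax, div_eq_inv_mul]
    have := mul_le_mul_of_nonneg_left h1 (le_of_lt (inv_pos.mpr hp))
    rw [show ‖u + v‖ = ‖v + u‖ from by rw [add_comm]]
    linarith


theorem e_ne_zero {e : ℕ → X} (hb : IsSchauderBasis e) (j0 : ℕ) : e j0 ≠ 0 := by
  intro hzero
  obtain ⟨a, _, huniq⟩ := hb 0
  have h1 : (fun _ : ℕ => (0:ℝ)) = a := by
    apply huniq
    simpa using (tendsto_const_nhds : Tendsto (fun _ : ℕ => (0:X)) atTop (nhds 0))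
  have h2 : (fun j : ℕ => if j = j0 then (1:ℝ) else 0) = a := by
    apply huniq
    have : ∀ N : ℕ, ∑ j ∈ Finset.range N, (if j = j0 then (1:ℝ) else 0) • e j = 0 := by
      intro N
      apply Finset.sum_eq_zero
      intro j _
      by_cases h : j = j0
      · subst h; rw [hzero, smul_zero]
      · rw [if_neg h, zero_smul]
    rw [show (fun N => ∑ j ∈ Finset.range N, (if j = j0 then (1:ℝ) else 0) • e j)
      = (fun _ : ℕ => (0:X)) from funext this]
    exact tendsto_const_nhds
  have h3 : (if j0 = j0 then (1:ℝ) else 0) = 0 := by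
    have := congrFun (h2.trans h1.symm) j0
    simpa using this
  simp at h3


/-- symmetric 1-separated sequence from normalized basis vectors -/
theorem basis_sym_witness {e : ℕ → X} (hb : IsSchauderBasis e) (hs : Supp e) :
    ∃ y : ℕ → X, (∀ n, ‖y n‖ ≤ 1) ∧
      ∀ n m : ℕ, n ≠ m → (1:ℝ) ≤ ‖y n - y m‖ ∧ (1:ℝ) ≤ ‖y n + y m‖ := by
  refine ⟨fun n => ‖e n‖⁻¹ • e n, fun n => ?_, fun n m hnm => ?_⟩
  · rw [norm_smul, Real.norm_eq_abs, abs_of_pos (inv_pos.mpr (norm_pos_iff.mpr (e_ne_zero hb n)))]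
    rw [inv_mul_cancel₀ (ne_of_gt (norm_pos_iff.mpr (e_ne_zero hb n)))]
  · have hen : ‖e n‖ ≠ 0 := ne_of_gt (norm_pos_iff.mpr (e_ne_zero hb n))
    have key : ∀ s : ℝ, (1:ℝ) ≤ ‖‖e n‖⁻¹ • e n + s • (‖e m‖⁻¹ • e m)‖ := by
      intro s
      set c : ℕ → ℝ := fun j => if j = n then ‖e n‖⁻¹ else if j = m then s * ‖e m‖⁻¹ else 0
        with hc
      have hzz : ∀ j ∉ ({n, m} : Finset ℕ), c j = 0 := by
        intro j hj
        simp only [Finset.mem_insert, Finset.mem_singleton, not_or] at hj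
        simp [hc, hj.1, hj.2]
      have h1 := proj_le e hs c {n, m} hzz {n}
      have hA : ∑ j ∈ ({n} : Finset ℕ), c j • e j = ‖e n‖⁻¹ • e n := by
        simp [hc]
      have hB : ∑ j ∈ ({n, m} : Finset ℕ), c j • e j
          = ‖e n‖⁻¹ • e n + s • (‖e m‖⁻¹ • e m) := by
        rw [Finset.sum_pair hnm]
        simp [hc, hnm, Ne.symm hnm, smul_smul]
      rw [hA, hB] at h1
      have : ‖‖e n‖⁻¹ • e n‖ = 1 := by
        rw [norm_smul, Real.norm_eq_abs,
          abs_of_pos (inv_pos.mpr (norm_pos_iff.mpr (e_ne_zero hb n))), inv_mul_cancel₀ hen]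
      linarith [this ▸ h1]
    constructor
    · have := key (-1)
      rw [neg_one_smul] at this
      rw [sub_eq_add_neg]
      exact this
    · have := key 1
      rwa [one_smul] at this


end Aux

section Aux2
variable {X : Type*} [NormedAddCommGroup X] [NormedSpace ℝ X] (e : ℕ → X) (a : ℕ → ℝ)

/-- signed pattern vector -/
noncomputable def pat (P N : Finset ℕ) : X :=
  (∑ j ∈ P, a j • e j) - ∑ j ∈ N, a j • e j

/-- signed pattern coefficients -/
noncomputable def patc (P N : Finset ℕ) : ℕ → ℝ :=
  fun j => if j ∈ P then a j else if j ∈ N then -(a j) else 0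

theorem patc_zero {P N : Finset ℕ} : ∀ j ∉ P ∪ N, patc a P N j = 0 := by
  intro j hj
  simp only [Finset.mem_union, not_or] at hj
  simp [patc, hj.1, hj.2]

theorem patc_sum {P N : Finset ℕ} (hd : Disjoint P N) (A : Finset ℕ) :
    ∑ j ∈ A, patc a P N j • e j = pat e a (A ∩ P) (A ∩ N) := by
  classical
  have hterm : ∀ j, patc a P N j • e j
      = (if j ∈ P then a j • e j else 0) + (if j ∈ N then -(a j • e j) else 0) := by
    intro j
    by_cases hP : j ∈ P
    · have hN : j ∉ N := Finset.disjoint_left.mp hd hP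
      simp [patc, hP, hN]
    · by_cases hN : j ∈ N
      · simp [patc, hP, hN]
      · simp [patc, hP, hN]
  rw [Finset.sum_congr rfl (fun j _ => hterm j), Finset.sum_add_distrib]
  rw [Finset.sum_ite_mem, Finset.sum_ite_mem]
  rw [pat, Finset.sum_neg_distrib]
  abel

theorem pat_neg (P N : Finset ℕ) : pat e a N P = - pat e a P N := by
  rw [pat, pat, neg_sub]

theorem pat_mono (hs : Supp e) {P N P' N' : Finset ℕ} (hd : Disjoint P N)
    (hP : P' ⊆ P) (hN : N' ⊆ N) : ‖pat e a P' N'‖ ≤ ‖pat e a P N‖ := by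
  classical
  have h1 := proj_le e hs (patc a P N) (P ∪ N) (patc_zero a) (P' ∪ N')
  rw [patc_sum e a hd, patc_sum e a hd] at h1
  have e1 : (P' ∪ N') ∩ P = P' := by
    ext x
    simp only [Finset.mem_inter, Finset.mem_union]
    constructor
    · rintro ⟨hx | hx, hxP⟩
      · exact hx
      · exact absurd hxP (Finset.disjoint_right.mp hd (hN hx))
    · intro hx; exact ⟨Or.inl hx, hP hx⟩
  have e2 : (P' ∪ N') ∩ N = N' := by
    ext x
    simp only [Finset.mem_inter, Finset.mem_union]
    constructor
    · rintro ⟨hx | hx, hxN⟩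
      · exact absurd hxN (Finset.disjoint_left.mp hd (hP hx))
      · exact hx
    · intro hx; exact ⟨Or.inr hx, hN hx⟩
  have e3 : (P ∪ N) ∩ P = P := by
    ext x; simp only [Finset.mem_inter, Finset.mem_union]; tauto
  have e4 : (P ∪ N) ∩ N = N := by
    ext x; simp only [Finset.mem_inter, Finset.mem_union]; tauto
  rwa [e1, e2, e3, e4] at h1

theorem pat_bound {C : ℝ} (hbd : ∀ A : Finset ℕ, ‖∑ j ∈ A, a j • e j‖ ≤ C)
    (P N : Finset ℕ) : ‖pat e a P N‖ ≤ 2 * C := by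
  rw [pat]
  calc ‖(∑ j ∈ P, a j • e j) - ∑ j ∈ N, a j • e j‖
      ≤ ‖∑ j ∈ P, a j • e j‖ + ‖∑ j ∈ N, a j • e j‖ := norm_sub_le _ _
  _ ≤ 2 * C := by linarith [hbd P, hbd N]


theorem caseB (hs : Supp e) {C : ℝ}
    (hbd : ∀ A : Finset ℕ, ‖∑ j ∈ A, a j • e j‖ ≤ C)
    (hnc : ¬ CauchySeq (fun M => ∑ j ∈ Finset.range M, a j • e j))
    {s : ℝ} (hs0 : 0 ≤ s) (hs2 : s < 2) :
    ∃ y : ℕ → X, (∀ n, ‖y n‖ ≤ 1) ∧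
      ∀ n m : ℕ, n ≠ m → s ≤ ‖y n - y m‖ ∧ s ≤ ‖y n + y m‖ := by
  classical
  rw [Metric.cauchySeq_iff] at hnc
  push_neg at hnc
  obtain ⟨ε₀, hε₀, hncc⟩ := hnc
  -- the sup-inf machinery
  set Mset : ℕ → Set ℝ := fun k =>
    {t | ∃ P N : Finset ℕ, Disjoint P N ∧ (∀ j ∈ P ∪ N, k ≤ j) ∧ t = ‖pat e a P N‖}
    with hMset
  have hMne : ∀ k, (Mset k).Nonempty := fun k =>
    ⟨‖pat e a ∅ ∅‖, ∅, ∅, by simp, by simp, rfl⟩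
  have hMbdd : ∀ k, BddAbove (Mset k) := by
    intro k
    refine ⟨2*C, ?_⟩
    rintro t ⟨P, N, _, _, rfl⟩
    exact pat_bound e a hbd P N
  set μk : ℕ → ℝ := fun k => sSup (Mset k) with hμk
  have hμknn : ∀ k, 0 ≤ μk k := by
    intro k
    have h0 : ‖pat e a ∅ ∅‖ ∈ Mset k := ⟨∅, ∅, by simp, by simp, rfl⟩
    exact le_trans (norm_nonneg _) (le_csSup (hMbdd k) h0)
  have hbb : BddBelow (Set.range μk) := ⟨0, by rintro t ⟨k, rfl⟩; exact hμknn k⟩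
  set μ : ℝ := ⨅ k, μk k with hμ
  have hμ_le : ∀ k, μ ≤ μk k := fun k => ciInf_le hbb k
  have hμ_lb : ε₀ ≤ μ := by
    apply le_ciInf
    intro k
    obtain ⟨m, hm, n, hn, hd⟩ := hncc k
    have hmn : m ≠ n := by
      intro h
      rw [h] at hd
      simp at hd
      linarith
    set p := min m n with hp
    set q := max m n with hq
    have hpq : p < q := min_lt_max.mpr hmn
    have hpk : k ≤ p := le_min hm hn
    have hval : ‖pat e a (Finset.Ico p q) ∅‖
        = dist (∑ j ∈ Finset.range m, a j • e j) (∑ j ∈ Finset.range n, a j • e j) := by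
      rw [pat, Finset.sum_empty, sub_zero,
        Finset.sum_Ico_eq_sub (fun j => a j • e j) (le_of_lt hpq)]
      rcases le_total m n with h | h
      · have hpm : p = m := min_eq_left h
        have hqn : q = n := max_eq_right h
        rw [hpm, hqn, dist_eq_norm, norm_sub_rev]
      · have hpm : p = n := min_eq_right h
        have hqn : q = m := max_eq_left h
        rw [hpm, hqn, dist_eq_norm]
    have hmem : ‖pat e a (Finset.Ico p q) ∅‖ ∈ Mset k := by
      refine ⟨Finset.Ico p q, ∅, by simp, ?_, rfl⟩
      intro j hj
      simp only [Finset.union_empty, Finset.mem_Ico] at hj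
      exact le_trans hpk hj.1
    calc ε₀ ≤ ‖pat e a (Finset.Ico p q) ∅‖ := by rw [hval]; exact hd
    _ ≤ μk k := le_csSup (hMbdd k) hmem
  have hμpos : 0 < μ := lt_of_lt_of_le hε₀ hμ_lb
  -- epsilon
  set ε : ℝ := μ * (2 - s)/(2 + s) with hε
  have hεpos : 0 < ε := by
    apply div_pos (mul_pos hμpos (by linarith)) (by linarith)
  have hkey1 : 2 * (μ - ε) = s * (μ + ε) := by
    have h2s : (2:ℝ) + s ≠ 0 := by linarith
    have h3 : ε * (2 + s) = μ * (2 - s) := by rw [hε]; exact div_mul_cancel₀ _ h2s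
    linarith
  have hμεnn : 0 ≤ μ - ε := by nlinarith
  -- k₀ and bounds
  obtain ⟨k₀, hk₀⟩ := exists_lt_of_ciInf_lt (show (⨅ k, μk k) < μ + ε by rw [← hμ]; linarith)
  have hub : ∀ P N : Finset ℕ, Disjoint P N → (∀ j ∈ P ∪ N, k₀ ≤ j) →
      ‖pat e a P N‖ < μ + ε :=
    fun P N h1 h2 => lt_of_le_of_lt (le_csSup (hMbdd k₀) ⟨P, N, h1, h2, rfl⟩) hk₀
  have havail : ∀ b : ℕ, ∃ P N : Finset ℕ, Disjoint P N ∧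
      (∀ j ∈ P ∪ N, k₀ ≤ j ∧ b ≤ j) ∧ μ - ε < ‖pat e a P N‖ := by
    intro b
    have h1 : μ - ε < μk (max k₀ b) := lt_of_lt_of_le (by linarith) (hμ_le _)
    obtain ⟨t, ⟨P, N, hd, hcoord, rfl⟩, ht⟩ := exists_lt_of_lt_csSup (hMne _) h1
    exact ⟨P, N, hd, fun j hj => ⟨le_trans (le_max_left _ _) (hcoord j hj),
      le_trans (le_max_right _ _) (hcoord j hj)⟩, ht⟩
  choose FP FN hFd hFco hFn using havail
  -- the chain of bounds
  set bnd : ℕ → ℕ := fun ℓ => Nat.rec 0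
    (fun _ ih => max (ih + 1) (((FP ih ∪ FN ih).sup id) + 1)) ℓ with hbnd
  have bnd_succ : ∀ ℓ, bnd (ℓ+1) = max (bnd ℓ + 1) (((FP (bnd ℓ) ∪ FN (bnd ℓ)).sup id) + 1) :=
    fun ℓ => rfl
  set A : ℕ → Finset ℕ := fun ℓ => FP (bnd ℓ) with hA
  set B : ℕ → Finset ℕ := fun ℓ => FN (bnd ℓ) with hB
  have hABd : ∀ ℓ, Disjoint (A ℓ) (B ℓ) := fun ℓ => hFd (bnd ℓ)
  have hABn : ∀ ℓ, μ - ε < ‖pat e a (A ℓ) (B ℓ)‖ := fun ℓ => hFn (bnd ℓ)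
  have hco1 : ∀ ℓ j, j ∈ A ℓ ∪ B ℓ → k₀ ≤ j := fun ℓ j hj => (hFco (bnd ℓ) j hj).1
  have hco2 : ∀ ℓ j, j ∈ A ℓ ∪ B ℓ → bnd ℓ ≤ j := fun ℓ j hj => (hFco (bnd ℓ) j hj).2
  have hlt : ∀ ℓ j, j ∈ A ℓ ∪ B ℓ → j < bnd (ℓ+1) := by
    intro ℓ j hj
    have h1 : j ≤ (A ℓ ∪ B ℓ).sup id := Finset.le_sup (f := id) hj
    have h2 : (A ℓ ∪ B ℓ) = FP (bnd ℓ) ∪ FN (bnd ℓ) := rfl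
    rw [h2] at h1
    rw [bnd_succ]
    omega
  have bnd_mono : Monotone bnd := by
    apply monotone_nat_of_le_succ
    intro ℓ
    rw [bnd_succ]
    omega
  -- pointwise disjointness facts
  have dblk : ∀ ℓ ℓ', ℓ < ℓ' → ∀ x, x ∈ A ℓ ∪ B ℓ → x ∈ A ℓ' ∪ B ℓ' → False := by
    intro ℓ ℓ' hll x h1 h2
    have e1 : x < bnd (ℓ+1) := hlt ℓ x h1
    have e2 : bnd ℓ' ≤ x := hco2 ℓ' x h2
    have e3 : bnd (ℓ+1) ≤ bnd ℓ' := bnd_mono hll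
    omega
  have dAB : ∀ ℓ ℓ' x, x ∈ A ℓ → x ∈ B ℓ' → False := by
    intro ℓ ℓ' x h1 h2
    rcases lt_trichotomy ℓ ℓ' with h | h | h
    · exact dblk ℓ ℓ' h x (Finset.mem_union_left _ h1) (Finset.mem_union_right _ h2)
    · subst h; exact Finset.disjoint_left.mp (hABd ℓ) h1 h2
    · exact dblk ℓ' ℓ h x (Finset.mem_union_right _ h2) (Finset.mem_union_left _ h1)
  have dAA : ∀ ℓ ℓ' x, ℓ ≠ ℓ' → x ∈ A ℓ → x ∈ A ℓ' → False := by
    intro ℓ ℓ' x hne h1 h2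
    rcases lt_or_gt_of_ne hne with h | h
    · exact dblk ℓ ℓ' h x (Finset.mem_union_left _ h1) (Finset.mem_union_left _ h2)
    · exact dblk ℓ' ℓ h x (Finset.mem_union_left _ h2) (Finset.mem_union_left _ h1)
  have dBB : ∀ ℓ ℓ' x, ℓ ≠ ℓ' → x ∈ B ℓ → x ∈ B ℓ' → False := by
    intro ℓ ℓ' x hne h1 h2
    rcases lt_or_gt_of_ne hne with h | h
    · exact dblk ℓ ℓ' h x (Finset.mem_union_right _ h1) (Finset.mem_union_right _ h2)
    · exact dblk ℓ' ℓ h x (Finset.mem_union_right _ h2) (Finset.mem_union_right _ h1)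
  -- the big unions and the sequence
  set UA : ℕ → Finset ℕ := fun m => (Finset.range (m+1)).biUnion A with hUA
  set UB : ℕ → Finset ℕ := fun m => (Finset.range (m+1)).biUnion B with hUB
  have memUA : ∀ m x, x ∈ UA m ↔ ∃ ℓ, ℓ ≤ m ∧ x ∈ A ℓ := by
    intro m x
    simp only [hUA, Finset.mem_biUnion, Finset.mem_range, Nat.lt_succ_iff]
  have memUB : ∀ m x, x ∈ UB m ↔ ∃ ℓ, ℓ ≤ m ∧ x ∈ B ℓ := by
    intro m x
    simp only [hUB, Finset.mem_biUnion, Finset.mem_range, Nat.lt_succ_iff]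
  set Pn : ℕ → Finset ℕ := fun n => A (n+1) ∪ UB n with hPn
  set Nn : ℕ → Finset ℕ := fun n => B (n+1) ∪ UA n with hNn
  have hPNd : ∀ n, Disjoint (Pn n) (Nn n) := by
    intro n
    rw [Finset.disjoint_left]
    intro x hx hx'
    rw [hPn] at hx; rw [hNn] at hx'
    rcases Finset.mem_union.mp hx with h1 | h1 <;>
      rcases Finset.mem_union.mp hx' with h2 | h2
    · exact dAB (n+1) (n+1) x h1 h2
    · obtain ⟨ℓ, hℓ, h2⟩ := (memUA n x).mp h2
      exact dAA (n+1) ℓ x (by omega) h1 h2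
    · obtain ⟨ℓ, hℓ, h1⟩ := (memUB n x).mp h1
      exact dBB (n+1) ℓ x (by omega) h2 h1
    · obtain ⟨ℓ, hℓ, h1⟩ := (memUB n x).mp h1
      obtain ⟨ℓ', hℓ', h2⟩ := (memUA n x).mp h2
      exact dAB ℓ' ℓ x h2 h1
  have hPNco : ∀ n j, j ∈ Pn n ∪ Nn n → k₀ ≤ j := by
    intro n j hj
    rcases Finset.mem_union.mp hj with h | h
    · rw [hPn] at h
      rcases Finset.mem_union.mp h with h1 | h1
      · exact hco1 (n+1) j (Finset.mem_union_left _ h1)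
      · obtain ⟨ℓ, _, h1⟩ := (memUB n j).mp h1
        exact hco1 ℓ j (Finset.mem_union_right _ h1)
    · rw [hNn] at h
      rcases Finset.mem_union.mp h with h1 | h1
      · exact hco1 (n+1) j (Finset.mem_union_right _ h1)
      · obtain ⟨ℓ, _, h1⟩ := (memUA n j).mp h1
        exact hco1 ℓ j (Finset.mem_union_left _ h1)
  set Λ : ℕ → ℝ := fun n => ‖pat e a (Pn n) (Nn n)‖ with hΛ
  have hΛub : ∀ n, Λ n < μ + ε := fun n => hub _ _ (hPNd n) (hPNco n)
  have hΛlb : ∀ n, μ - ε < Λ n := by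
    intro n
    have hsub1 : B 0 ⊆ Pn n := by
      intro x hx
      rw [hPn]
      exact Finset.mem_union_right _ ((memUB n x).mpr ⟨0, Nat.zero_le _, hx⟩)
    have hsub2 : A 0 ⊆ Nn n := by
      intro x hx
      rw [hNn]
      exact Finset.mem_union_right _ ((memUA n x).mpr ⟨0, Nat.zero_le _, hx⟩)
    have := pat_mono e a hs (hPNd n) hsub1 hsub2
    rw [pat_neg, norm_neg] at this
    exact lt_of_lt_of_le (hABn 0) this
  have hΛpos : ∀ n, 0 < Λ n := fun n => lt_of_le_of_lt hμεnn (hΛlb n)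
  set y : ℕ → X := fun n => (Λ n)⁻¹ • pat e a (Pn n) (Nn n) with hy
  refine ⟨y, ?_, ?_⟩
  · intro n
    rw [hy]
    simp only
    rw [norm_smul, Real.norm_eq_abs, abs_of_pos (inv_pos.mpr (hΛpos n))]
    rw [show ‖pat e a (Pn n) (Nn n)‖ = Λ n from rfl, inv_mul_cancel₀ (ne_of_gt (hΛpos n))]
  · -- the main separation estimates
    have hUd : ∀ m, Disjoint (UA m) (UB m) := by
      intro m
      rw [Finset.disjoint_left]
      intro x hx hx'
      obtain ⟨ℓ, _, h1⟩ := (memUA m x).mp hx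
      obtain ⟨ℓ', _, h2⟩ := (memUB m x).mp hx'
      exact dAB ℓ ℓ' x h1 h2
    have hUA_lb : ∀ m, μ - ε < ‖pat e a (UA m) (UB m)‖ := by
      intro m
      have hsub1 : A 0 ⊆ UA m := fun x hx => (memUA m x).mpr ⟨0, Nat.zero_le _, hx⟩
      have hsub2 : B 0 ⊆ UB m := fun x hx => (memUB m x).mpr ⟨0, Nat.zero_le _, hx⟩
      exact lt_of_lt_of_le (hABn 0) (pat_mono e a hs (hUd m) hsub1 hsub2)
    suffices H : ∀ n m : ℕ, m < n → s ≤ ‖y n - y m‖ ∧ s ≤ ‖y n + y m‖ by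
      intro n m hnm
      rcases lt_or_gt_of_ne hnm with h | h
      · obtain ⟨h1, h2⟩ := H m n h
        refine ⟨by rwa [norm_sub_rev] at h1, by rwa [add_comm] at h2⟩
      · exact H n m h
    intro n m hmn
    -- intersection identities
    have i1 : (A (m+1) ∪ B (m+1)) ∩ (Pn n) = B (m+1) := by
      ext x
      simp only [Finset.mem_inter, Finset.mem_union]
      constructor
      · rintro ⟨hx1 | hx1, hx2⟩
        · exfalso
          rcases Finset.mem_union.mp (show x ∈ A (n+1) ∪ UB n from hx2) with h2 | h2
          · exact dAA (m+1) (n+1) x (by omega) hx1 h2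
          · obtain ⟨ℓ, _, h2⟩ := (memUB n x).mp h2
            exact dAB (m+1) ℓ x hx1 h2
        · exact hx1
      · intro hx
        exact ⟨Or.inr hx, Finset.mem_union_right _ ((memUB n x).mpr ⟨m+1, by omega, hx⟩)⟩
    have i2 : (A (m+1) ∪ B (m+1)) ∩ (Nn n) = A (m+1) := by
      ext x
      simp only [Finset.mem_inter, Finset.mem_union]
      constructor
      · rintro ⟨hx1 | hx1, hx2⟩
        · exact hx1
        · exfalso
          rcases Finset.mem_union.mp (show x ∈ B (n+1) ∪ UA n from hx2) with h2 | h2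
          · exact dBB (m+1) (n+1) x (by omega) hx1 h2
          · obtain ⟨ℓ, _, h2⟩ := (memUA n x).mp h2
            exact dAB ℓ (m+1) x h2 hx1
      · intro hx
        exact ⟨Or.inl hx, Finset.mem_union_right _ ((memUA n x).mpr ⟨m+1, by omega, hx⟩)⟩
    have i3 : (A (m+1) ∪ B (m+1)) ∩ (Pn m) = A (m+1) := by
      ext x
      simp only [Finset.mem_inter, Finset.mem_union]
      constructor
      · rintro ⟨hx1 | hx1, hx2⟩
        · exact hx1
        · exfalso
          rcases Finset.mem_union.mp (show x ∈ A (m+1) ∪ UB m from hx2) with h2 | h2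
          · exact dAB (m+1) (m+1) x h2 hx1
          · obtain ⟨ℓ, hℓ, h2⟩ := (memUB m x).mp h2
            exact dBB (m+1) ℓ x (by omega) hx1 h2
      · intro hx
        exact ⟨Or.inl hx, Finset.mem_union_left _ hx⟩
    have i4 : (A (m+1) ∪ B (m+1)) ∩ (Nn m) = B (m+1) := by
      ext x
      simp only [Finset.mem_inter, Finset.mem_union]
      constructor
      · rintro ⟨hx1 | hx1, hx2⟩
        · exfalso
          rcases Finset.mem_union.mp (show x ∈ B (m+1) ∪ UA m from hx2) with h2 | h2
          · exact dAB (m+1) (m+1) x hx1 h2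
          · obtain ⟨ℓ, hℓ, h2⟩ := (memUA m x).mp h2
            exact dAA (m+1) ℓ x (by omega) hx1 h2
        · exact hx1
      · intro hx
        exact ⟨Or.inr hx, Finset.mem_union_left _ hx⟩
    have j1 : (UA m ∪ UB m) ∩ (Pn n) = UB m := by
      ext x
      simp only [Finset.mem_inter, Finset.mem_union]
      constructor
      · rintro ⟨hx1 | hx1, hx2⟩
        · exfalso
          obtain ⟨ℓ, hℓ, h1⟩ := (memUA m x).mp hx1
          rcases Finset.mem_union.mp (show x ∈ A (n+1) ∪ UB n from hx2) with h2 | h2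
          · exact dAA ℓ (n+1) x (by omega) h1 h2
          · obtain ⟨ℓ', _, h2⟩ := (memUB n x).mp h2
            exact dAB ℓ ℓ' x h1 h2
        · exact hx1
      · intro hx
        obtain ⟨ℓ, hℓ, h1⟩ := (memUB m x).mp hx
        exact ⟨Or.inr hx, Finset.mem_union_right _ ((memUB n x).mpr ⟨ℓ, by omega, h1⟩)⟩
    have j2 : (UA m ∪ UB m) ∩ (Nn n) = UA m := by
      ext x
      simp only [Finset.mem_inter, Finset.mem_union]
      constructor
      · rintro ⟨hx1 | hx1, hx2⟩
        · exact hx1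
        · exfalso
          obtain ⟨ℓ, hℓ, h1⟩ := (memUB m x).mp hx1
          rcases Finset.mem_union.mp (show x ∈ B (n+1) ∪ UA n from hx2) with h2 | h2
          · exact dBB ℓ (n+1) x (by omega) h1 h2
          · obtain ⟨ℓ', _, h2⟩ := (memUA n x).mp h2
            exact dAB ℓ' ℓ x h2 h1
      · intro hx
        obtain ⟨ℓ, hℓ, h1⟩ := (memUA m x).mp hx
        exact ⟨Or.inl hx, Finset.mem_union_right _ ((memUA n x).mpr ⟨ℓ, by omega, h1⟩)⟩
    have j3 : (UA m ∪ UB m) ∩ (Pn m) = UB m := by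
      ext x
      simp only [Finset.mem_inter, Finset.mem_union]
      constructor
      · rintro ⟨hx1 | hx1, hx2⟩
        · exfalso
          obtain ⟨ℓ, hℓ, h1⟩ := (memUA m x).mp hx1
          rcases Finset.mem_union.mp (show x ∈ A (m+1) ∪ UB m from hx2) with h2 | h2
          · exact dAA ℓ (m+1) x (by omega) h1 h2
          · obtain ⟨ℓ', _, h2⟩ := (memUB m x).mp h2
            exact dAB ℓ ℓ' x h1 h2
        · exact hx1
      · intro hx
        exact ⟨Or.inr hx, Finset.mem_union_right _ hx⟩
    have j4 : (UA m ∪ UB m) ∩ (Nn m) = UA m := by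
      ext x
      simp only [Finset.mem_inter, Finset.mem_union]
      constructor
      · rintro ⟨hx1 | hx1, hx2⟩
        · exact hx1
        · exfalso
          obtain ⟨ℓ, hℓ, h1⟩ := (memUB m x).mp hx1
          rcases Finset.mem_union.mp (show x ∈ B (m+1) ∪ UA m from hx2) with h2 | h2
          · exact dBB ℓ (m+1) x (by omega) h1 h2
          · obtain ⟨ℓ', _, h2⟩ := (memUA m x).mp h2
            exact dAB ℓ' ℓ x h2 h1
      · intro hx
        exact ⟨Or.inl hx, Finset.mem_union_right _ hx⟩
    -- the big support set
    set BS : Finset ℕ := (Pn n ∪ Nn n) ∪ (Pn m ∪ Nn m) with hBS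
    have hBS1 : BS ∩ Pn n = Pn n := Finset.inter_eq_right.mpr
      (fun x hx => Finset.mem_union_left _ (Finset.mem_union_left _ hx))
    have hBS2 : BS ∩ Nn n = Nn n := Finset.inter_eq_right.mpr
      (fun x hx => Finset.mem_union_left _ (Finset.mem_union_right _ hx))
    have hBS3 : BS ∩ Pn m = Pn m := Finset.inter_eq_right.mpr
      (fun x hx => Finset.mem_union_right _ (Finset.mem_union_left _ hx))
    have hBS4 : BS ∩ Nn m = Nn m := Finset.inter_eq_right.mpr
      (fun x hx => Finset.mem_union_right _ (Finset.mem_union_right _ hx))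
    -- generic sum computation
    have hcomp : ∀ (r r' : ℝ) (T : Finset ℕ),
        ∑ j ∈ T, (r * patc a (Pn n) (Nn n) j + r' * patc a (Pn m) (Nn m) j) • e j
        = r • pat e a (T ∩ Pn n) (T ∩ Nn n) + r' • pat e a (T ∩ Pn m) (T ∩ Nn m) := by
      intro r r' T
      have : ∀ j, (r * patc a (Pn n) (Nn n) j + r' * patc a (Pn m) (Nn m) j) • e j
          = r • (patc a (Pn n) (Nn n) j • e j) + r' • (patc a (Pn m) (Nn m) j • e j) := by
        intro j
        rw [add_smul, mul_smul, mul_smul]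
      rw [Finset.sum_congr rfl (fun j _ => this j), Finset.sum_add_distrib,
        ← Finset.smul_sum, ← Finset.smul_sum, patc_sum e a (hPNd n), patc_sum e a (hPNd m)]
    have hzero : ∀ (r r' : ℝ) j, j ∉ BS →
        (r * patc a (Pn n) (Nn n) j + r' * patc a (Pn m) (Nn m) j) = 0 := by
      intro r r' j hj
      rw [hBS] at hj
      simp only [Finset.mem_union, not_or] at hj
      rw [patc_zero a j (by simp only [Finset.mem_union, not_or]; exact hj.1),
        patc_zero a j (by simp only [Finset.mem_union, not_or]; exact hj.2)]
      ring
    -- norms over the small sets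
    have hinvn : (μ + ε)⁻¹ ≤ (Λ n)⁻¹ := by
      apply inv_anti₀ (hΛpos n) (le_of_lt (hΛub n))
    have hinvm : (μ + ε)⁻¹ ≤ (Λ m)⁻¹ := by
      apply inv_anti₀ (hΛpos m) (le_of_lt (hΛub m))
    have hμε : (0:ℝ) < μ + ε := by linarith
    have hfrac : 2*(μ + ε)⁻¹*(μ - ε) = s := by
      field_simp
      linarith [hkey1]
    have hprod : ∀ u : ℝ, μ - ε ≤ u → s ≤ ((Λ n)⁻¹ + (Λ m)⁻¹) * u := by
      intro u hu
      have t1 : ((Λ n)⁻¹ - (μ+ε)⁻¹) * u ≥ 0 :=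
        mul_nonneg (by linarith) (by linarith)
      have t2 : ((Λ m)⁻¹ - (μ+ε)⁻¹) * u ≥ 0 :=
        mul_nonneg (by linarith) (by linarith)
      have t3 : 2*(μ+ε)⁻¹*(u - (μ-ε)) ≥ 0 :=
        mul_nonneg (by positivity) (by linarith)
      have expand : ((Λ n)⁻¹ + (Λ m)⁻¹) * u
          = ((Λ n)⁻¹ - (μ+ε)⁻¹)*u + ((Λ m)⁻¹ - (μ+ε)⁻¹)*u
            + 2*(μ+ε)⁻¹*(u - (μ-ε)) + 2*(μ+ε)⁻¹*(μ-ε) := by ring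
      linarith [hfrac ▸ le_refl s]
    constructor
    · -- difference estimate
      have hrhs := hcomp ((Λ n)⁻¹) (-(Λ m)⁻¹) BS
      rw [hBS1, hBS2, hBS3, hBS4] at hrhs
      have hyeq : ∑ j ∈ BS, ((Λ n)⁻¹ * patc a (Pn n) (Nn n) j
          + (-(Λ m)⁻¹) * patc a (Pn m) (Nn m) j) • e j = y n - y m := by
        rw [hrhs, hy]
        simp only [neg_smul]
        abel
      have hlhs := hcomp ((Λ n)⁻¹) (-(Λ m)⁻¹) (A (m+1) ∪ B (m+1))
      rw [i1, i2, i3, i4] at hlhs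
      have hlhs2 : ∑ j ∈ (A (m+1) ∪ B (m+1)), ((Λ n)⁻¹ * patc a (Pn n) (Nn n) j
          + (-(Λ m)⁻¹) * patc a (Pn m) (Nn m) j) • e j
          = -(((Λ n)⁻¹ + (Λ m)⁻¹) • pat e a (A (m+1)) (B (m+1))) := by
        rw [hlhs, pat_neg]
        module
      have hproj := proj_le e hs _ BS (hzero ((Λ n)⁻¹) (-(Λ m)⁻¹)) (A (m+1) ∪ B (m+1))
      rw [hyeq, hlhs2] at hproj
      rw [norm_neg, norm_smul, Real.norm_eq_abs,
        abs_of_pos (add_pos (inv_pos.mpr (hΛpos n)) (inv_pos.mpr (hΛpos m)))] at hproj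
      exact le_trans (hprod _ (le_of_lt (hABn (m+1)))) hproj
    · -- sum estimate
      have hrhs := hcomp ((Λ n)⁻¹) ((Λ m)⁻¹) BS
      rw [hBS1, hBS2, hBS3, hBS4] at hrhs
      have hyeq : ∑ j ∈ BS, ((Λ n)⁻¹ * patc a (Pn n) (Nn n) j
          + ((Λ m)⁻¹) * patc a (Pn m) (Nn m) j) • e j = y n + y m := by
        rw [hrhs, hy]
      have hlhs := hcomp ((Λ n)⁻¹) ((Λ m)⁻¹) (UA m ∪ UB m)
      rw [j1, j2, j3, j4] at hlhs
      have hlhs2 : ∑ j ∈ (UA m ∪ UB m), ((Λ n)⁻¹ * patc a (Pn n) (Nn n) j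
          + ((Λ m)⁻¹) * patc a (Pn m) (Nn m) j) • e j
          = -(((Λ n)⁻¹ + (Λ m)⁻¹) • pat e a (UA m) (UB m)) := by
        rw [hlhs, pat_neg]
        module
      have hproj := proj_le e hs _ BS (hzero ((Λ n)⁻¹) ((Λ m)⁻¹)) (UA m ∪ UB m)
      rw [hyeq, hlhs2] at hproj
      rw [norm_neg, norm_smul, Real.norm_eq_abs,
        abs_of_pos (add_pos (inv_pos.mpr (hΛpos n)) (inv_pos.mpr (hΛpos m)))] at hproj
      exact le_trans (hprod _ (le_of_lt (hUA_lb m))) hproj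

end Aux2

section Aux3
variable {X : Type*} [NormedAddCommGroup X] [NormedSpace ℝ X] {e : ℕ → X}

set_option maxHeartbeats 2000000 in
theorem caseA (hs : Supp e)
    (cr : ℕ → ℕ → ℝ) (Sr : ℕ → Finset ℕ)
    (hz : ∀ i, ∀ j ∉ Sr i, cr i j = 0)
    (hdisj : ∀ i k : ℕ, i ≠ k → Disjoint (Sr i) (Sr k))
    {σ₂ s b : ℝ} (hb0 : 0 < b)
    (hub : ∀ i, ‖∑ j ∈ Sr i, cr i j • e j‖ ≤ b)
    (hsep : ∀ i k : ℕ, i ≠ k →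
      σ₂ ≤ ‖(∑ j ∈ Sr i, cr i j • e j) - ∑ j ∈ Sr k, cr k j • e j‖)
    (hs1 : 1 ≤ s) (hA1 : s^2 * b < σ₂) (hA2 : s^2 < 2) :
    ∃ y : ℕ → X, (∀ n, ‖y n‖ ≤ 1) ∧
      ∀ n m : ℕ, n ≠ m → s ≤ ‖y n - y m‖ ∧ s ≤ ‖y n + y m‖ := by
  classical
  set R : ℕ → X := fun i => ∑ j ∈ Sr i, cr i j • e j with hR
  set β : ℕ → ℝ := fun i => ‖R i‖ with hβ
  have hs0 : (0:ℝ) < s := lt_of_lt_of_le one_pos hs1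
  -- elementary coefficient-sum facts
  have hpiece2 : ∀ (a b' : ℕ) (t1 t2 : ℝ), a ≠ b' →
      ∑ j ∈ Sr a, (t1 * cr a j + t2 * cr b' j) • e j = t1 • R a := by
    intro a b' t1 t2 hab
    rw [hR]
    simp only
    rw [Finset.smul_sum]
    apply Finset.sum_congr rfl
    intro j hj
    rw [hz b' j (Finset.disjoint_left.mp (hdisj a b' hab) hj), mul_zero, add_zero, mul_smul]
  have hzero2 : ∀ (a b' : ℕ) (t1 t2 : ℝ), ∀ j, j ∉ Sr a ∪ Sr b' →
      t1 * cr a j + t2 * cr b' j = 0 := by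
    intro a b' t1 t2 j hj
    simp only [Finset.mem_union, not_or] at hj
    rw [hz a j hj.1, hz b' j hj.2, mul_zero, mul_zero, add_zero]
  have hsum2 : ∀ (a b' : ℕ) (t1 t2 : ℝ), a ≠ b' →
      ∑ j ∈ Sr a ∪ Sr b', (t1 * cr a j + t2 * cr b' j) • e j = t1 • R a + t2 • R b' := by
    intro a b' t1 t2 hab
    rw [Finset.sum_union (hdisj a b' hab), hpiece2 a b' t1 t2 hab]
    congr 1
    have := hpiece2 b' a t2 t1 (Ne.symm hab)
    rw [← this]
    apply Finset.sum_congr rfl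
    intro j _
    ring_nf
  -- ‖R a‖ ≤ ‖R a + t • R b‖ for a ≠ b
  have hRle : ∀ (a b' : ℕ) (t : ℝ), a ≠ b' → ‖R a‖ ≤ ‖R a + t • R b'‖ := by
    intro a b' t hab
    have h1 := proj_le e hs (fun j => 1 * cr a j + t * cr b' j) (Sr a ∪ Sr b')
      (hzero2 a b' 1 t) (Sr a)
    rw [hpiece2 a b' 1 t hab, hsum2 a b' 1 t hab] at h1
    simpa using h1
  have hRd1 : ∀ (a b' : ℕ), a ≠ b' → ‖R a‖ ≤ ‖R a - R b'‖ := by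
    intro a b' hab
    have := hRle a b' (-1) hab
    rwa [neg_one_smul, ← sub_eq_add_neg] at this
  have hRd2 : ∀ (a b' : ℕ), a ≠ b' → ‖R b'‖ ≤ ‖R a - R b'‖ := by
    intro a b' hab
    have := hRle b' a (-1) (Ne.symm hab)
    rwa [neg_one_smul, ← sub_eq_add_neg, norm_sub_rev] at this
  have hRs1 : ∀ (a b' : ℕ), a ≠ b' → ‖R a‖ ≤ ‖R a + R b'‖ := by
    intro a b' hab
    have := hRle a b' 1 hab
    rwa [one_smul] at this
  have hRs2 : ∀ (a b' : ℕ), a ≠ b' → ‖R b'‖ ≤ ‖R a + R b'‖ := by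
    intro a b' hab
    have := hRle b' a 1 (Ne.symm hab)
    rwa [one_smul, add_comm] at this
  -- norm bounds on β
  set βmin : ℝ := σ₂ - b with hβmin
  have hs2ge1 : 1 ≤ s^2 := by nlinarith
  have hs2pos : (0:ℝ) < s^2 := by nlinarith
  have hβminpos : 0 < βmin := by
    rw [hβmin]
    nlinarith [mul_le_mul_of_nonneg_right hs2ge1 (le_of_lt hb0)]
  have hβlb : ∀ i, βmin ≤ β i := by
    intro i
    have h4 : σ₂ ≤ ‖R i - R (i+1)‖ := hsep i (i+1) (by omega)
    have h2 : ‖R i - R (i+1)‖ ≤ ‖R i‖ + ‖R (i+1)‖ := norm_sub_le _ _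
    have h3 : ‖R (i+1)‖ ≤ b := hub (i+1)
    show σ₂ - b ≤ ‖R i‖
    linarith
  have hβub : ∀ i, β i ≤ b := hub
  -- Bolzano-Weierstrass
  obtain ⟨βbar, hβbarmem, ψ, hψ, hψtend⟩ :=
    (isCompact_Icc (a := βmin) (b := b)).tendsto_subseq
      (x := β) (fun i => Set.mem_Icc.mpr ⟨hβlb i, hβub i⟩)
  obtain ⟨hβbar1, hβbar2⟩ := Set.mem_Icc.mp hβbarmem
  -- epsilon
  set ε₂ : ℝ := min ((σ₂ - s^2*b)/(2*s^2)) (βmin*(2-s^2)/(2*(2+s^2))) with hε₂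
  have hε₂pos : 0 < ε₂ := by
    apply lt_min
    · apply div_pos (by linarith) (by nlinarith)
    · apply div_pos (by nlinarith) (by nlinarith)
  have hε₂a : ε₂ ≤ (σ₂ - s^2*b)/(2*s^2) := min_le_left _ _
  have hε₂b : ε₂ ≤ βmin*(2-s^2)/(2*(2+s^2)) := min_le_right _ _
  -- numeric facts
  have hε₂a' : ε₂ * (2*s^2) ≤ σ₂ - s^2*b := by
    have h1 := hε₂a
    rwa [le_div_iff₀ (by positivity : (0:ℝ) < 2*s^2)] at h1
  have hε₂b' : ε₂ * (2*(2+s^2)) ≤ βmin*(2-s^2) := by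
    have h1 := hε₂b
    rwa [le_div_iff₀ (by nlinarith : (0:ℝ) < 2*(2+s^2))] at h1
  have hmb : βmin*(2-s^2) ≤ βbar*(2-s^2) :=
    mul_le_mul_of_nonneg_right hβbar1 (by linarith)
  have n1 : s^2 * (βbar + ε₂) ≤ σ₂ := by
    have h3 : s^2*βbar ≤ s^2*b := mul_le_mul_of_nonneg_left hβbar2 (le_of_lt hs2pos)
    nlinarith
  have n2 : s^2 * (βbar + ε₂) ≤ 2*(βbar - ε₂) := by nlinarith
  have hβbarpos : 0 < βbar := lt_of_lt_of_le hβminpos hβbar1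
  have hβεpos : 0 < βbar - ε₂ := by nlinarith
  -- tail control
  have htail : ∃ I₀ : ℕ, ∀ i, I₀ ≤ i → |β (ψ i) - βbar| ≤ ε₂ := by
    have := Metric.tendsto_atTop.mp hψtend ε₂ hε₂pos
    obtain ⟨N, hN⟩ := this
    exact ⟨N, fun i hi => le_of_lt (by rw [← Real.dist_eq]; exact hN i hi)⟩
  obtain ⟨I₀, hI₀⟩ := htail
  set ρ : ℕ → ℕ := fun i => ψ (I₀ + i) with hρ
  have hρinj : ∀ i k : ℕ, i ≠ k → ρ i ≠ ρ k := by
    intro i k hik h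
    have := hψ.injective h
    omega
  -- three-block helpers
  have hzero3 : ∀ (a b' c : ℕ) (t1 t2 t3 : ℝ), ∀ j, j ∉ Sr a ∪ (Sr b' ∪ Sr c) →
      t1 * cr a j + t2 * cr b' j + t3 * cr c j = 0 := by
    intro a b' c t1 t2 t3 j hj
    simp only [Finset.mem_union, not_or] at hj
    rw [hz a j hj.1, hz b' j hj.2.1, hz c j hj.2.2]
    ring
  have hpiece3a : ∀ (a b' c : ℕ) (t1 t2 t3 : ℝ), a ≠ b' → a ≠ c →
      ∑ j ∈ Sr a, (t1 * cr a j + t2 * cr b' j + t3 * cr c j) • e j = t1 • R a := by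
    intro a b' c t1 t2 t3 hab hac
    rw [hR]
    simp only
    rw [Finset.smul_sum]
    apply Finset.sum_congr rfl
    intro j hj
    rw [hz b' j (Finset.disjoint_left.mp (hdisj a b' hab) hj),
      hz c j (Finset.disjoint_left.mp (hdisj a c hac) hj), mul_zero, mul_zero,
      add_zero, add_zero, mul_smul]
  have hpiece3bc : ∀ (a b' c : ℕ) (t1 t2 t3 : ℝ), a ≠ b' → a ≠ c → b' ≠ c →
      ∑ j ∈ Sr b' ∪ Sr c, (t1 * cr a j + t2 * cr b' j + t3 * cr c j) • e j
        = t2 • R b' + t3 • R c := by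
    intro a b' c t1 t2 t3 hab hac hbc
    rw [Finset.sum_union (hdisj b' c hbc)]
    congr 1
    · have h1 := hpiece3a b' a c t2 t1 t3 (Ne.symm hab) hbc
      rw [← h1]
      apply Finset.sum_congr rfl
      intro j _
      ring_nf
    · have h1 := hpiece3a c a b' t3 t1 t2 (Ne.symm hac) (Ne.symm hbc)
      rw [← h1]
      apply Finset.sum_congr rfl
      intro j _
      ring_nf
  have hsum3 : ∀ (a b' c : ℕ) (t1 t2 t3 : ℝ), a ≠ b' → a ≠ c → b' ≠ c →
      ∑ j ∈ Sr a ∪ (Sr b' ∪ Sr c), (t1 * cr a j + t2 * cr b' j + t3 * cr c j) • e j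
        = t1 • R a + (t2 • R b' + t3 • R c) := by
    intro a b' c t1 t2 t3 hab hac hbc
    rw [Finset.sum_union (Finset.disjoint_union_right.mpr ⟨hdisj a b' hab, hdisj a c hac⟩),
      hpiece3a a b' c t1 t2 t3 hab hac, hpiece3bc a b' c t1 t2 t3 hab hac hbc]
  -- the subsequence facts
  have hβρub : ∀ i, β (ρ i) ≤ βbar + ε₂ := by
    intro i
    have h1 := abs_le.mp (hI₀ (I₀ + i) (by omega))
    show ‖R (ψ (I₀ + i))‖ ≤ βbar + ε₂
    have h2 : β (ψ (I₀ + i)) = ‖R (ψ (I₀ + i))‖ := rfl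
    linarith [h1.2, h2 ▸ h1.2]
  have hβρlb : ∀ i, βbar - ε₂ ≤ β (ρ i) := by
    intro i
    have h1 := abs_le.mp (hI₀ (I₀ + i) (by omega))
    show βbar - ε₂ ≤ ‖R (ψ (I₀ + i))‖
    linarith [h1.1]
  have hβρpos : ∀ i, 0 < β (ρ i) := fun i => lt_of_lt_of_le hβεpos (hβρlb i)
  set D : ℝ := s * (βbar + ε₂) with hD
  have hDpos : 0 < D := mul_pos hs0 (by nlinarith)
  have hsD : s * D = s^2 * (βbar + ε₂) := by rw [hD]; ring
  by_cases hDich : ∃ j₀ : ℕ, ∀ N : ℕ, ∃ i, N ≤ i ∧ i ≠ j₀ ∧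
      ¬ (D ≤ ‖R (ρ j₀) + R (ρ i)‖)
  · -- shared-vector construction
    obtain ⟨j₀, hj₀⟩ := hDich
    have hfreq : ∃ᶠ i in atTop, (i ≠ j₀ ∧ ¬ (D ≤ ‖R (ρ j₀) + R (ρ i)‖)) := by
      rw [Filter.frequently_atTop]
      intro aa
      obtain ⟨i, h1, h2, h3⟩ := hj₀ aa
      exact ⟨i, h1, h2, h3⟩
    obtain ⟨θ, hθ, hθP⟩ := extraction_of_frequently_atTop hfreq
    set Λ : ℕ → ℝ := fun k => ‖R (ρ j₀) + R (ρ (θ k))‖ with hΛ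
    have hθne : ∀ k, θ k ≠ j₀ := fun k => (hθP k).1
    have hρθne : ∀ k, ρ j₀ ≠ ρ (θ k) := fun k => hρinj _ _ (Ne.symm (hθne k))
    have hΛub : ∀ k, Λ k < D := fun k => not_le.mp (hθP k).2
    have hΛlb : ∀ k, β (ρ j₀) ≤ Λ k := fun k => hRs1 _ _ (hρθne k)
    have hΛpos : ∀ k, 0 < Λ k := fun k => lt_of_lt_of_le (hβρpos j₀) (hΛlb k)
    have hinvD : ∀ k, D⁻¹ ≤ (Λ k)⁻¹ := fun k => inv_anti₀ (hΛpos k) (le_of_lt (hΛub k))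
    set y : ℕ → X := fun k => (Λ k)⁻¹ • (R (ρ j₀) + R (ρ (θ k))) with hy
    refine ⟨y, ?_, ?_⟩
    · intro k
      rw [hy]
      simp only
      rw [norm_smul, Real.norm_eq_abs, abs_of_pos (inv_pos.mpr (hΛpos k)),
        show ‖R (ρ j₀) + R (ρ (θ k))‖ = Λ k from rfl,
        inv_mul_cancel₀ (ne_of_gt (hΛpos k))]
    · suffices H : ∀ k l : ℕ, k < l → s ≤ ‖y k - y l‖ ∧ s ≤ ‖y k + y l‖ by
        intro n m hnm
        rcases lt_or_gt_of_ne hnm with h | h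
        · exact (H n m h).imp (fun h1 => h1) (fun h2 => h2)
        · obtain ⟨h1, h2⟩ := H m n h
          exact ⟨by rwa [norm_sub_rev] at h1, by rwa [add_comm] at h2⟩
      intro k l hkl
      have hbc : ρ (θ k) ≠ ρ (θ l) := hρinj _ _ (ne_of_lt (hθ hkl))
      have hab : ρ j₀ ≠ ρ (θ k) := hρθne k
      have hac : ρ j₀ ≠ ρ (θ l) := hρθne l
      have hmaxpos : 0 < max (Λ k) (Λ l) := lt_max_of_lt_left (hΛpos k)
      have hmaxD : max (Λ k) (Λ l) ≤ D := max_le (le_of_lt (hΛub k)) (le_of_lt (hΛub l))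
      constructor
      · -- difference
        have hkey := proj_le e hs
          (fun j => ((Λ k)⁻¹ - (Λ l)⁻¹) * cr (ρ j₀) j + (Λ k)⁻¹ * cr (ρ (θ k)) j
            + (-(Λ l)⁻¹) * cr (ρ (θ l)) j)
          (Sr (ρ j₀) ∪ (Sr (ρ (θ k)) ∪ Sr (ρ (θ l))))
          (hzero3 _ _ _ _ _ _) (Sr (ρ (θ k)) ∪ Sr (ρ (θ l)))
        rw [hpiece3bc _ _ _ _ _ _ hab hac hbc, hsum3 _ _ _ _ _ _ hab hac hbc] at hkey
        have hyd : y k - y l = ((Λ k)⁻¹ - (Λ l)⁻¹) • R (ρ j₀)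
            + ((Λ k)⁻¹ • R (ρ (θ k)) + (-(Λ l)⁻¹) • R (ρ (θ l))) := by
          rw [hy]
          simp only
          module
        rw [← hyd] at hkey
        have hlhs : (Λ k)⁻¹ • R (ρ (θ k)) + (-(Λ l)⁻¹) • R (ρ (θ l))
            = (Λ k)⁻¹ • R (ρ (θ k)) + (Λ l)⁻¹ • (-(R (ρ (θ l)))) := by module
        rw [hlhs] at hkey
        have hge := norm_invsmul_add_ge (R (ρ (θ k))) (-(R (ρ (θ l))))
          (by rw [← sub_eq_add_neg]; exact hRd1 _ _ hbc)
          (by rw [← sub_eq_add_neg, norm_neg]; exact hRd2 _ _ hbc)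
          (hΛpos k) (hΛpos l)
        have hsep2 : σ₂ ≤ ‖R (ρ (θ k)) + -(R (ρ (θ l)))‖ := by
          rw [← sub_eq_add_neg]
          exact hsep _ _ hbc
        have hstep : s ≤ ‖R (ρ (θ k)) + -(R (ρ (θ l)))‖ / max (Λ k) (Λ l) := by
          rw [le_div_iff₀ hmaxpos]
          have h1 : s * max (Λ k) (Λ l) ≤ s * D :=
            mul_le_mul_of_nonneg_left hmaxD (le_of_lt hs0)
          nlinarith
        exact le_trans (le_trans hstep hge) hkey
      · -- sum
        have hkey := proj_le e hs
          (fun j => ((Λ k)⁻¹ + (Λ l)⁻¹) * cr (ρ j₀) j + (Λ k)⁻¹ * cr (ρ (θ k)) j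
            + ((Λ l)⁻¹) * cr (ρ (θ l)) j)
          (Sr (ρ j₀) ∪ (Sr (ρ (θ k)) ∪ Sr (ρ (θ l))))
          (hzero3 _ _ _ _ _ _) (Sr (ρ j₀))
        rw [hpiece3a _ _ _ _ _ _ hab hac, hsum3 _ _ _ _ _ _ hab hac hbc] at hkey
        have hys : y k + y l = ((Λ k)⁻¹ + (Λ l)⁻¹) • R (ρ j₀)
            + ((Λ k)⁻¹ • R (ρ (θ k)) + ((Λ l)⁻¹) • R (ρ (θ l))) := by
          rw [hy]
          simp only
          module
        rw [← hys] at hkey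
        rw [norm_smul, Real.norm_eq_abs,
          abs_of_pos (add_pos (inv_pos.mpr (hΛpos k)) (inv_pos.mpr (hΛpos l)))] at hkey
        have hfrac : s ≤ 2*D⁻¹*(βbar - ε₂) := by
          have h1 : s * D ≤ 2*(βbar - ε₂) := by rw [hsD]; linarith [n2]
          have h2 : 2*D⁻¹*(βbar - ε₂) = 2*(βbar - ε₂)/D := by
            field_simp
          rw [h2, le_div_iff₀ hDpos]
          linarith
        have t1 : ((Λ k)⁻¹ - D⁻¹) * β (ρ j₀) ≥ 0 :=
          mul_nonneg (by linarith [hinvD k]) (le_of_lt (hβρpos j₀))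
        have t2 : ((Λ l)⁻¹ - D⁻¹) * β (ρ j₀) ≥ 0 :=
          mul_nonneg (by linarith [hinvD l]) (le_of_lt (hβρpos j₀))
        have t3 : 2*D⁻¹*(β (ρ j₀) - (βbar - ε₂)) ≥ 0 :=
          mul_nonneg (mul_nonneg (by norm_num) (le_of_lt (inv_pos.mpr hDpos)))
            (by linarith [hβρlb j₀])
        have expand : ((Λ k)⁻¹ + (Λ l)⁻¹) * β (ρ j₀)
            = ((Λ k)⁻¹ - D⁻¹)*β (ρ j₀) + ((Λ l)⁻¹ - D⁻¹)*β (ρ j₀)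
              + 2*D⁻¹*(β (ρ j₀) - (βbar - ε₂)) + 2*D⁻¹*(βbar - ε₂) := by ring
        have : s ≤ ((Λ k)⁻¹ + (Λ l)⁻¹) * β (ρ j₀) := by linarith
        exact le_trans this hkey
  · -- all-pairs-good construction
    push_neg at hDich
    choose Nf hNf using hDich
    set P : ℕ → ℕ × ℕ := fun l => Nat.rec (0, Nf 0)
      (fun _ ih => (max (ih.1 + 1) ih.2, max ih.2 (Nf (max (ih.1 + 1) ih.2)))) l with hP
    set g : ℕ → ℕ := fun l => (P l).1 with hg
    set M : ℕ → ℕ := fun l => (P l).2 with hM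
    have hgs : ∀ l, g (l+1) = max (g l + 1) (M l) := fun l => rfl
    have hMs : ∀ l, M (l+1) = max (M l) (Nf (g (l+1))) := fun l => rfl
    have hginc : ∀ l, g l < g (l+1) := by
      intro l
      rw [hgs]
      omega
    have hgmono : StrictMono g := strictMono_nat_of_lt_succ hginc
    have hinvt : ∀ l k, k ≤ l → Nf (g k) ≤ M l := by
      intro l
      induction l with
      | zero =>
        intro k hk
        have : k = 0 := Nat.le_zero.mp hk
        subst this
        exact le_refl _
      | succ l ih =>
        intro k hk
        rcases Nat.lt_succ_iff_lt_or_eq.mp (Nat.lt_succ_of_le hk) with h | h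
        · refine le_trans (ih k (by omega)) ?_
          rw [hMs]
          exact le_max_left _ _
        · subst h
          rw [hMs]
          exact le_max_right _ _
    have hgood2 : ∀ k l : ℕ, k < l → D ≤ ‖R (ρ (g k)) + R (ρ (g l))‖ := by
      intro k l hkl
      obtain ⟨m, rfl⟩ : ∃ m, l = m + 1 := ⟨l - 1, by omega⟩
      have h1 : Nf (g k) ≤ M m := hinvt m k (by omega)
      have h2 : M m ≤ g (m+1) := by rw [hgs]; omega
      exact hNf (g k) (g (m+1)) (by omega) (ne_of_gt (hgmono hkl))
    set y : ℕ → X := fun i => (β (ρ (g i)))⁻¹ • R (ρ (g i)) with hy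
    refine ⟨y, ?_, ?_⟩
    · intro i
      rw [hy]
      simp only
      rw [norm_smul, Real.norm_eq_abs, abs_of_pos (inv_pos.mpr (hβρpos (g i))),
        show ‖R (ρ (g i))‖ = β (ρ (g i)) from rfl,
        inv_mul_cancel₀ (ne_of_gt (hβρpos (g i)))]
    · suffices H : ∀ k l : ℕ, k < l → s ≤ ‖y k - y l‖ ∧ s ≤ ‖y k + y l‖ by
        intro n m hnm
        rcases lt_or_gt_of_ne hnm with h | h
        · exact (H n m h).imp (fun h1 => h1) (fun h2 => h2)
        · obtain ⟨h1, h2⟩ := H m n h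
          exact ⟨by rwa [norm_sub_rev] at h1, by rwa [add_comm] at h2⟩
      intro k l hkl
      have hab : ρ (g k) ≠ ρ (g l) := hρinj _ _ (ne_of_lt (hgmono hkl))
      have hmaxpos : 0 < max (β (ρ (g k))) (β (ρ (g l))) :=
        lt_max_of_lt_left (hβρpos (g k))
      have hmaxub : max (β (ρ (g k))) (β (ρ (g l))) ≤ βbar + ε₂ :=
        max_le (hβρub (g k)) (hβρub (g l))
      have hbbe : (0:ℝ) < βbar + ε₂ := by nlinarith
      have h3 : s * (βbar + ε₂) ≤ s^2 * (βbar + ε₂) := by nlinarith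
      constructor
      · have hyd : y k - y l = (β (ρ (g k)))⁻¹ • R (ρ (g k))
            + (β (ρ (g l)))⁻¹ • (-(R (ρ (g l)))) := by
          rw [hy]
          simp only
          module
        rw [hyd]
        have hge := norm_invsmul_add_ge (R (ρ (g k))) (-(R (ρ (g l))))
          (by rw [← sub_eq_add_neg]; exact hRd1 _ _ hab)
          (by rw [← sub_eq_add_neg, norm_neg]; exact hRd2 _ _ hab)
          (hβρpos (g k)) (hβρpos (g l))
        refine le_trans ?_ hge
        rw [le_div_iff₀ hmaxpos]
        have h1 : σ₂ ≤ ‖R (ρ (g k)) + -(R (ρ (g l)))‖ := by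
          rw [← sub_eq_add_neg]
          exact hsep _ _ hab
        have h2 : s * max (β (ρ (g k))) (β (ρ (g l))) ≤ s * (βbar + ε₂) :=
          mul_le_mul_of_nonneg_left hmaxub (le_of_lt hs0)
        linarith [n1]
      · have hys : y k + y l = (β (ρ (g k)))⁻¹ • R (ρ (g k))
            + (β (ρ (g l)))⁻¹ • (R (ρ (g l))) := rfl
        rw [hys]
        have hge := norm_invsmul_add_ge (R (ρ (g k))) (R (ρ (g l)))
          (hRs1 _ _ hab) (hRs2 _ _ hab) (hβρpos (g k)) (hβρpos (g l))
        refine le_trans ?_ hge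
        rw [le_div_iff₀ hmaxpos]
        have h1 := hgood2 k l hkl
        have h2 : s * max (β (ρ (g k))) (β (ρ (g l))) ≤ s * (βbar + ε₂) :=
          mul_le_mul_of_nonneg_left hmaxub (le_of_lt hs0)
        have h4 : D = s * (βbar + ε₂) := hD
        linarith

set_option maxHeartbeats 1000000 in
theorem core (hb : IsSchauderBasis e) (hs : Supp e) {x : ℕ → X} {σ s : ℝ}
    (hx1 : ∀ n, ‖x n‖ ≤ 1) (hsepx : ∀ n m : ℕ, n ≠ m → σ ≤ ‖x n - x m‖)
    (hs1 : 1 ≤ s) (hss : s^2 < σ) :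
    ∃ y : ℕ → X, (∀ n, ‖y n‖ ≤ 1) ∧
      ∀ n m : ℕ, n ≠ m → s ≤ ‖y n - y m‖ ∧ s ≤ ‖y n + y m‖ := by
  classical
  have hs0 : (0:ℝ) < s := lt_of_lt_of_le one_pos hs1
  have hσ2 : σ ≤ 2 := by
    refine le_trans (hsepx 0 1 (by norm_num)) ?_
    calc ‖x 0 - x 1‖ ≤ ‖x 0‖ + ‖x 1‖ := norm_sub_le _ _
    _ ≤ 2 := by linarith [hx1 0, hx1 1]
  have hs2lt2 : s^2 < 2 := lt_of_lt_of_le hss hσ2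
  have hslt2 : s < 2 := by nlinarith
  set δ₀ : ℝ := σ - s^2 with hδ₀
  have hδ₀pos : 0 < δ₀ := by linarith
  set ε' : ℝ := δ₀/100 with hε'
  have hε'pos : 0 < ε' := by positivity
  -- finitization
  have hfin : ∀ n : ℕ, ∃ (c : ℕ → ℝ) (N : ℕ), (∀ j, N ≤ j → c j = 0) ∧
      ‖x n - ∑ j ∈ Finset.range N, c j • e j‖ ≤ ε' := by
    intro n
    obtain ⟨A, hA, _⟩ := hb (x n)
    obtain ⟨N, hN⟩ := Metric.tendsto_atTop.mp hA ε' hε'pos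
    refine ⟨fun j => if j < N then A j else 0, N, fun j hj => if_neg (by omega), ?_⟩
    have h2 := hN N (le_refl N)
    rw [dist_eq_norm] at h2
    have h3 : ∑ j ∈ Finset.range N, (if j < N then A j else 0) • e j
        = ∑ j ∈ Finset.range N, A j • e j := by
      apply Finset.sum_congr rfl
      intro j hj
      rw [if_pos (Finset.mem_range.mp hj)]
    rw [h3, norm_sub_rev]
    exact le_of_lt h2
  choose c0 N0 hc0z hc0a using hfin
  set x' : ℕ → X := fun n => ∑ j ∈ Finset.range (N0 n), c0 n j • e j with hx'
  have hx'ub : ∀ n, ‖x' n‖ ≤ 1 + ε' := by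
    intro n
    have h1 : ‖x' n‖ - ‖x n‖ ≤ ‖x' n - x n‖ := norm_sub_norm_le _ _
    have h2 : ‖x' n - x n‖ = ‖x n - x' n‖ := norm_sub_rev _ _
    have h3 := hc0a n
    have h4 := hx1 n
    rw [h2] at h1
    have h5 : ‖x n - x' n‖ ≤ ε' := h3
    linarith
  have hx'sep : ∀ n m, n ≠ m → σ - 2*ε' ≤ ‖x' n - x' m‖ := by
    intro n m h
    have h1 := hsepx n m h
    have t1 : x n - x m = (x n - x' n) + (x' n - x' m) + (x' m - x m) := by abel
    have h2 : ‖x n - x m‖ ≤ ‖x n - x' n‖ + ‖x' n - x' m‖ + ‖x' m - x m‖ := by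
      rw [t1]
      exact norm_add₃_le
    have h3 : ‖x' m - x m‖ = ‖x m - x' m‖ := norm_sub_rev _ _
    have h4 := hc0a n
    have h5 := hc0a m
    rw [h3] at h2
    have h6 : ‖x n - x' n‖ ≤ ε' := h4
    have h7 : ‖x m - x' m‖ ≤ ε' := h5
    linarith
  have hc0zB : ∀ n, ∀ j ∉ Finset.range (N0 n), c0 n j = 0 := by
    intro n j hj
    exact hc0z n j (by simpa using Finset.mem_range.not.mp hj)
  -- coefficient bounds
  have hcb : ∀ n j, |c0 n j| * ‖e j‖ ≤ 1 + ε' := by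
    intro n j
    have h1 := proj_le e hs (c0 n) (Finset.range (N0 n)) (hc0zB n) {j}
    rw [Finset.sum_singleton] at h1
    calc |c0 n j| * ‖e j‖ = ‖c0 n j • e j‖ := by
          rw [norm_smul, Real.norm_eq_abs]
    _ ≤ ‖x' n‖ := h1
    _ ≤ 1 + ε' := hx'ub n
  set Cb : ℕ → ℝ := fun j => (1 + ε') / ‖e j‖ with hCb
  have hepos : ∀ j, (0:ℝ) < ‖e j‖ := fun j => norm_pos_iff.mpr (e_ne_zero hb j)
  have hcmem : ∀ n, (c0 n) ∈ Set.pi Set.univ (fun j => Set.Icc (-(Cb j)) (Cb j)) := by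
    intro n
    rw [Set.mem_pi]
    intro j _
    rw [Set.mem_Icc, ← abs_le]
    rw [hCb]
    rw [le_div_iff₀ (hepos j)]
    exact hcb n j
  obtain ⟨a, _, φ, hφ, hφtend⟩ :=
    (isCompact_univ_pi (fun j => isCompact_Icc)).tendsto_subseq (x := c0) hcmem
  have hcoord : ∀ j, Tendsto (fun n => c0 (φ n) j) atTop (𝓝 (a j)) := by
    intro j
    exact (tendsto_pi_nhds.mp hφtend) j
  set SP : ℕ → X := fun M => ∑ j ∈ Finset.range M, a j • e j with hSP
  have hhead : ∀ (T : Finset ℕ), Tendsto (fun n => ∑ j ∈ T, c0 (φ n) j • e j) atTop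
      (𝓝 (∑ j ∈ T, a j • e j)) := by
    intro T
    apply tendsto_finset_sum
    intro j _
    exact (hcoord j).smul_const (e j)
  have hKA : ∀ T : Finset ℕ, ‖∑ j ∈ T, a j • e j‖ ≤ 1 + ε' := by
    intro T
    have h1 : ∀ n, ‖∑ j ∈ T, c0 (φ n) j • e j‖ ≤ 1 + ε' := fun n =>
      le_trans (proj_le e hs (c0 (φ n)) (Finset.range (N0 (φ n))) (hc0zB (φ n)) T)
        (hx'ub (φ n))
    exact le_of_tendsto ((hhead T).norm) (Eventually.of_forall h1)
  by_cases hC : CauchySeq SP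
  · -- Case A : build disjoint blocks
    obtain ⟨Kc, hKc⟩ := Metric.cauchySeq_iff.mp hC ε' hε'pos
    have happrox : ∀ M : ℕ, ∃ T : ℕ, ∀ u, T ≤ u →
        ‖(∑ j ∈ Finset.range M, c0 (φ u) j • e j) - SP M‖ ≤ ε' := by
      intro M
      obtain ⟨T, hT⟩ := Metric.tendsto_atTop.mp (hhead (Finset.range M)) ε' hε'pos
      refine ⟨T, fun u hu => ?_⟩
      have h1 := hT u hu
      rw [dist_eq_norm] at h1
      exact le_of_lt h1
    choose Tf hTf using happrox
    set F : ℕ → ℕ × ℕ := fun i => Nat.rec (Kc, Tf Kc)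
      (fun _ ih =>
        (max (ih.1 + 1) (max (N0 (φ ih.2)) ih.1),
         max (Tf (max (ih.1 + 1) (max (N0 (φ ih.2)) ih.1))) (ih.2 + 1))) i with hF
    set M : ℕ → ℕ := fun i => (F i).1 with hM
    set t : ℕ → ℕ := fun i => (F i).2 with ht
    have hMs : ∀ i, M (i+1) = max (M i + 1) (max (N0 (φ (t i))) (M i)) := fun i => rfl
    have hts : ∀ i, t (i+1) = max (Tf (M (i+1))) (t i + 1) := fun i => rfl
    have hMinc : ∀ i, M i < M (i+1) := fun i => by rw [hMs]; omega
    have hMmono : StrictMono M := strictMono_nat_of_lt_succ hMinc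
    have htinc : ∀ i, t i < t (i+1) := fun i => by rw [hts]; omega
    have htmono : StrictMono t := strictMono_nat_of_lt_succ htinc
    have hMKc : ∀ i, Kc ≤ M i := by
      intro i
      induction i with
      | zero => exact le_refl _
      | succ i ih => rw [hMs]; omega
    have htTf : ∀ i, Tf (M i) ≤ t i := by
      intro i
      cases i with
      | zero => exact le_refl _
      | succ i => rw [hts]; omega
    set E : ℕ → ℕ := fun i => max (N0 (φ (t i))) (M i) with hE
    set Sr : ℕ → Finset ℕ := fun i => Finset.Ico (M i) (E i) with hSr
    set cr : ℕ → ℕ → ℝ := fun i j =>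
      if j ∈ Finset.Ico (M i) (E i) then c0 (φ (t i)) j else 0 with hcr
    have hcrz : ∀ i, ∀ j ∉ Sr i, cr i j = 0 := by
      intro i j hj
      exact if_neg (by rwa [hSr] at hj)
    have hReq : ∀ i, ∑ j ∈ Sr i, cr i j • e j
        = ∑ j ∈ Finset.Ico (M i) (E i), c0 (φ (t i)) j • e j := by
      intro i
      apply Finset.sum_congr rfl
      intro j hj
      congr 1
      exact if_pos (by rwa [hSr] at hj)
    have hEM : ∀ i, E i ≤ M (i+1) := by
      intro i
      have h1 : E i = max (N0 (φ (t i))) (M i) := rfl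
      rw [h1, hMs]
      omega
    have hdisj : ∀ i k : ℕ, i ≠ k → Disjoint (Sr i) (Sr k) := by
      have key : ∀ i k, i < k → Disjoint (Sr i) (Sr k) := by
        intro i k hik
        rw [hSr, Finset.disjoint_left]
        intro j hj hj'
        simp only [Finset.mem_Ico] at hj hj'
        have h1 : E i ≤ M (i+1) := hEM i
        have h2 : M (i+1) ≤ M k := hMmono.monotone hik
        omega
      intro i k hik
      rcases lt_or_gt_of_ne hik with h | h
      · exact key i k h
      · exact (key k i h).symm
    have hsplit : ∀ i, x' (φ (t i)) = (∑ j ∈ Finset.range (M i), c0 (φ (t i)) j • e j)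
        + ∑ j ∈ Finset.Ico (M i) (E i), c0 (φ (t i)) j • e j := by
      intro i
      have h1 : M i ≤ E i := le_max_right _ _
      rw [Finset.sum_range_add_sum_Ico _ h1, hx']
      simp only
      apply Finset.sum_subset
      · exact Finset.range_subset_range.mpr (le_max_left _ _)
      · intro j _ hj
        rw [hc0z (φ (t i)) j (by simpa using Finset.mem_range.not.mp hj), zero_smul]
    have hrub : ∀ i, ‖∑ j ∈ Finset.Ico (M i) (E i), c0 (φ (t i)) j • e j‖ ≤ 1 + ε' :=
      fun i => le_trans (proj_le e hs (c0 (φ (t i))) (Finset.range (N0 (φ (t i))))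
        (hc0zB _) _) (hx'ub _)
    have hheadclose : ∀ i,
        ‖(∑ j ∈ Finset.range (M i), c0 (φ (t i)) j • e j) - SP (M i)‖ ≤ ε' :=
      fun i => hTf (M i) (t i) (htTf i)
    have hSPclose : ∀ i k, ‖SP (M i) - SP (M k)‖ ≤ ε' := by
      intro i k
      have h1 := hKc (M i) (hMKc i) (M k) (hMKc k)
      rw [dist_eq_norm] at h1
      exact le_of_lt h1
    have hsepr : ∀ i k, i ≠ k → σ - 5*ε' ≤
        ‖(∑ j ∈ Finset.Ico (M i) (E i), c0 (φ (t i)) j • e j)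
          - ∑ j ∈ Finset.Ico (M k) (E k), c0 (φ (t k)) j • e j‖ := by
      intro i k hik
      have hφt : φ (t i) ≠ φ (t k) := fun h => hik (htmono.injective (hφ.injective h))
      have h1 := hx'sep (φ (t i)) (φ (t k)) hφt
      set Hi := ∑ j ∈ Finset.range (M i), c0 (φ (t i)) j • e j with hHi
      set Hk := ∑ j ∈ Finset.range (M k), c0 (φ (t k)) j • e j with hHk
      set Ri := ∑ j ∈ Finset.Ico (M i) (E i), c0 (φ (t i)) j • e j with hRi
      set Rk := ∑ j ∈ Finset.Ico (M k) (E k), c0 (φ (t k)) j • e j with hRk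
      have h2 : x' (φ (t i)) - x' (φ (t k)) = (Hi - Hk) + (Ri - Rk) := by
        rw [hsplit i, hsplit k]
        abel
      have h3 : ‖Hi - Hk‖ ≤ 3*ε' := by
        have u1 : Hi - Hk = (Hi - SP (M i)) + (SP (M i) - SP (M k)) + (SP (M k) - Hk) := by
          abel
        have u2 : ‖SP (M k) - Hk‖ = ‖Hk - SP (M k)‖ := norm_sub_rev _ _
        calc ‖Hi - Hk‖ ≤ ‖Hi - SP (M i)‖ + ‖SP (M i) - SP (M k)‖ + ‖SP (M k) - Hk‖ := by
              rw [u1]; exact norm_add₃_le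
        _ ≤ 3*ε' := by
              rw [u2]
              linarith [hheadclose i, hSPclose i k, hheadclose k]
      have h4 : ‖x' (φ (t i)) - x' (φ (t k))‖ ≤ ‖Hi - Hk‖ + ‖Ri - Rk‖ := by
        rw [h2]
        exact norm_add_le _ _
      linarith
    have hnum : s^2 * (1 + ε') < σ - 5*ε' := by
      have h1 : s^2 * ε' < 2*ε' := by nlinarith
      have h2 : ε' = δ₀/100 := hε'
      nlinarith
    exact caseA hs cr Sr hcrz hdisj (σ₂ := σ - 5*ε') (s := s) (b := 1 + ε')
      (by linarith) (fun i => by rw [hReq]; exact hrub i)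
      (fun i k hik => by rw [hReq, hReq]; exact hsepr i k hik)
      hs1 hnum hs2lt2
  · -- Case B
    exact caseB e a hs hKA hC (le_of_lt hs0) hslt2

end Aux3

theorem final (X : Type*) [NormedAddCommGroup X]
    [NormedSpace ℝ X] [CompleteSpace X] (e : ℕ → X)
    (hbasis : IsSchauderBasis e) (hsupp : Supp e) :
    Real.sqrt (kottmanConst X) ≤ symKottmanConst X := by
  classical
  set Ssym := {σ : ℝ | 0 ≤ σ ∧ ∃ x : ℕ → X, (∀ n, ‖x n‖ ≤ 1) ∧
    ∀ n m : ℕ, n ≠ m → σ ≤ ‖x n - x m‖ ∧ σ ≤ ‖x n + x m‖} with hSsym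
  have hbdd : BddAbove Ssym := by
    refine ⟨2, fun σ' hσ' => ?_⟩
    obtain ⟨_, y, hy1, hyp⟩ := hσ'
    have := (hyp 0 1 (by norm_num)).1
    calc σ' ≤ ‖y 0 - y 1‖ := this
    _ ≤ ‖y 0‖ + ‖y 1‖ := norm_sub_le _ _
    _ ≤ 2 := by linarith [hy1 0, hy1 1]
  have h1 : (1:ℝ) ∈ Ssym := by
    obtain ⟨y, hy1, hyp⟩ := basis_sym_witness hbasis hsupp
    exact ⟨zero_le_one, y, hy1, hyp⟩
  have hKs1 : 1 ≤ symKottmanConst X := le_csSup hbdd h1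
  set Ks := symKottmanConst X with hKs
  have hK2 : kottmanConst X ≤ Ks^2 := by
    apply Real.sSup_le _ (by positivity)
    rintro σ ⟨hσ0, x, hx1, hsep⟩
    by_contra hgt
    push_neg at hgt
    set s := Real.sqrt ((Ks^2 + σ)/2) with hsdef
    have hmidnn : (0:ℝ) ≤ (Ks^2 + σ)/2 := by positivity
    have hs_sq : s^2 = (Ks^2 + σ)/2 := Real.sq_sqrt hmidnn
    have hs0 : 0 ≤ s := Real.sqrt_nonneg _
    have hs1 : 1 ≤ s := by nlinarith
    have hss : s^2 < σ := by nlinarith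
    obtain ⟨y, hy1, hyp⟩ := core hbasis hsupp hx1 hsep hs1 hss
    have hmem : s ∈ Ssym := ⟨hs0, y, hy1, hyp⟩
    have hle : s ≤ Ks := le_csSup hbdd hmem
    nlinarith
  calc Real.sqrt (kottmanConst X) ≤ Real.sqrt (Ks^2) := Real.sqrt_le_sqrt hK2
  _ = Ks := Real.sqrt_sq (by linarith)

end KottmanAux

/-- **Corollary 2.3.** If a Banach space `X` admits a suppression `1`-unconditional
Schauder basis, then `K^s(X) ≥ √(K(X))`. -/
theorem symKottman_ge_sqrt_kottman_of_suppression_basis (X : Type*) [NormedAddCommGroup X]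
    [NormedSpace ℝ X] [CompleteSpace X] (e : ℕ → X)
    (hbasis : IsSchauderBasis e) (hsupp : SuppressionOneUnconditional e) :
    Real.sqrt (kottmanConst X) ≤ symKottmanConst X :=
  KottmanAux.final X e hbasis hsupp
end

section
/- Let X be a reflexive Banach space with the non-strict Opial property admitting a Schauder basis (e_j)_{j=1}^∞ that is λ-asymptotic c₀, i.e., for every normalized block basis (x_j)_{j=1}^∞ of (e_j) and every n ∈ ℕ there exist indices j_1 < j_2 < ... < j_n such that max_{1≤i≤n}|a_i| ≤ ‖Σ_{i=1}^n a_i x_{j_i}‖ ≤ λ · max_{1≤i≤n}|a_i| for all scalars a_1, ..., a_n. Then K(X) ≤ λ, where K(X) := sup{σ ≥ 0 : the closed unit ball of X contains a sequence (x_n) with ‖x_n − x_m‖ ≥ σ for all n ≠ m}. -/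
open Filter Topology

/-- `x` is a normalised block basis of `e`: each `x j` is a (nonzero, norm-one) linear
combination of the `e i` with `i` in a finite set `F j`, and `F 0 < F 1 < ⋯`. -/
def IsNormalizedBlockBasis {X : Type*} [NormedAddCommGroup X] [NormedSpace ℝ X]
    (e x : ℕ → X) : Prop :=
  ∃ (F : ℕ → Finset ℕ) (a : ℕ → ℝ),
    (∀ j, (F j).Nonempty) ∧
    (∀ j, ∀ i ∈ F j, ∀ i' ∈ F (j + 1), i < i') ∧
    (∀ j, x j = ∑ i ∈ F j, a i • e i) ∧
    (∀ j, ‖x j‖ = 1)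

/-- The basis `e` is `λ`-asymptotic `c₀`: every normalised block basis admits, for each
`n`, a finite subsequence of length `n` which is `λ`-equivalent to the canonical basis
of `ℓ∞ⁿ`. -/
def IsAsymptoticC0 {X : Type*} [NormedAddCommGroup X] [NormedSpace ℝ X]
    (e : ℕ → X) (lam : ℝ) : Prop :=
  ∀ x : ℕ → X, IsNormalizedBlockBasis e x →
    ∀ n : ℕ, ∃ j : Fin n → ℕ, StrictMono j ∧
      ∀ a : Fin n → ℝ,
        (∀ i, |a i| ≤ ‖∑ i, a i • x (j i)‖) ∧
        ‖∑ i, a i • x (j i)‖ ≤ lam * ⨆ i, |a i|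

open Filter Topology

section Pre
variable {X : Type*} [NormedAddCommGroup X] [NormedSpace ℝ X] (e : ℕ → X)

/-- partial sums of a coefficient sequence -/
noncomputable def pS (a : ℕ → ℝ) (N : ℕ) : X := ∑ j ∈ Finset.range N, a j • e j

lemma pS_add (a b : ℕ → ℝ) (N : ℕ) : pS e (a + b) N = pS e a N + pS e b N := by
  simp [pS, add_smul, Finset.sum_add_distrib]

lemma pS_smul (c : ℝ) (a : ℕ → ℝ) (N : ℕ) : pS e (c • a) N = c • pS e a N := by
  simp [pS, Finset.smul_sum, smul_smul]

lemma pS_sub (a b : ℕ → ℝ) (N : ℕ) : pS e (a - b) N = pS e a N - pS e b N := by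
  simp [pS, sub_smul, Finset.sum_sub_distrib]

lemma pS_succ_sub (a : ℕ → ℝ) (N : ℕ) : pS e a (N + 1) - pS e a N = a N • e N := by
  simp [pS, Finset.sum_range_succ]


/-- the sequences with norm-convergent partial sums -/
noncomputable def goodSeq : Submodule ℝ (ℕ → ℝ) where
  carrier := {a | ∃ x, Tendsto (pS e a) atTop (nhds x)}
  add_mem' := by
    rintro a b ⟨x, hx⟩ ⟨y, hy⟩
    exact ⟨x + y, (hx.add hy).congr fun N => (pS_add e a b N).symm⟩
  zero_mem' := ⟨0, tendsto_const_nhds.congr fun N => by simp [pS]⟩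
  smul_mem' := by
    rintro c a ⟨x, hx⟩
    exact ⟨c • x, (hx.const_smul c).congr fun N => (pS_smul e c a N).symm⟩

variable {e}

lemma pS_eventually_single (j : ℕ) (c : ℝ) :
    Tendsto (pS e (Pi.single j c)) atTop (nhds (c • e j)) := by
  have h : ∀ᶠ N in atTop, pS e (Pi.single j c) N = c • e j := by
    refine eventually_atTop.2 ⟨j + 1, fun N hN => ?_⟩
    rw [pS, Finset.sum_eq_single j]
    · simp
    · intro i _ hij; simp [Pi.single_apply, hij]
    · intro h; exact absurd (Finset.mem_range.2 (by omega)) h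
  exact Tendsto.congr' (h.mono fun N hN => hN.symm) tendsto_const_nhds

lemma single_mem_goodSeq (j : ℕ) (c : ℝ) : (Pi.single j c : ℕ → ℝ) ∈ goodSeq e :=
  ⟨c • e j, pS_eventually_single j c⟩

lemma coeff_unique (hb : IsSchauderBasis e) {a b : ℕ → ℝ} {x : X}
    (ha : Tendsto (pS e a) atTop (nhds x)) (hbb : Tendsto (pS e b) atTop (nhds x)) : a = b :=
  ((hb x).unique ha hbb)

lemma enz (hb : IsSchauderBasis e) (j : ℕ) : e j ≠ 0 := by
  intro h0
  have h1 : Tendsto (pS e (Pi.single j 1)) atTop (nhds (0 : X)) := by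
    simpa [h0] using pS_eventually_single (e := e) j 1
  have h2 : Tendsto (pS e 0) atTop (nhds (0 : X)) :=
    tendsto_const_nhds.congr fun N => by simp [pS]
  have := coeff_unique hb h1 h2
  have := congrFun this j
  simp at this

end Pre

section Yt
variable {X : Type*} [NormedAddCommGroup X] [NormedSpace ℝ X] (e : ℕ → X)

/-- type synonym to avoid inheriting subtype topology -/
def Yt : Type _ := ↥(goodSeq e)

noncomputable instance : AddCommGroup (Yt e) := inferInstanceAs (AddCommGroup ↥(goodSeq e))
noncomputable instance : Module ℝ (Yt e) := inferInstanceAs (Module ℝ ↥(goodSeq e))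

variable {e}

def Yt.mk (a : ℕ → ℝ) (h : a ∈ goodSeq e) : Yt e := show ↥(goodSeq e) from ⟨a, h⟩

def Yt.seq (x : Yt e) : ℕ → ℝ := (show ↥(goodSeq e) from x).1

lemma Yt.seq_mk (a : ℕ → ℝ) (h : a ∈ goodSeq e) : (Yt.mk a h).seq = a := rfl

lemma Yt.good (x : Yt e) : ∃ p, Tendsto (pS e x.seq) atTop (nhds p) :=
  (show ↥(goodSeq e) from x).2

lemma Yt.seq_zero : (0 : Yt e).seq = 0 := rfl
lemma Yt.seq_add (x y : Yt e) : (x + y).seq = x.seq + y.seq := rfl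
lemma Yt.seq_neg (x : Yt e) : (-x).seq = -x.seq := rfl
lemma Yt.seq_sub (x y : Yt e) : (x - y).seq = x.seq - y.seq := rfl
lemma Yt.seq_smul (c : ℝ) (x : Yt e) : (c • x).seq = c • x.seq := rfl

lemma Yt.ext {x y : Yt e} (h : x.seq = y.seq) : x = y := by
  have : (show ↥(goodSeq e) from x) = (show ↥(goodSeq e) from y) := Subtype.ext h
  exact this

/-- evaluation as a linear map -/
def Yt.evL (j : ℕ) : Yt e →ₗ[ℝ] ℝ where
  toFun x := x.seq j
  map_add' x y := rfl
  map_smul' c x := rfl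

lemma pS_neg (a : ℕ → ℝ) (N : ℕ) : pS e (-a) N = -pS e a N := by
  simp [pS, neg_smul, Finset.sum_neg_distrib]

end Yt
section Coeff
variable {X : Type*} [NormedAddCommGroup X] [NormedSpace ℝ X] {e : ℕ → X}

theorem exists_coeff [CompleteSpace X] (hb : IsSchauderBasis e) :
    ∃ f : ℕ → (X →L[ℝ] ℝ), ∀ x : X,
      Tendsto (fun N => ∑ j ∈ Finset.range N, f j x • e j) atTop (nhds x) := by
  classical
  have he := enz hb
  have bdd : ∀ a : Yt e, BddAbove (Set.range fun N => ‖pS e a.seq N‖) :=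
    fun a => a.good.choose_spec.norm.bddAbove_range
  letI : NormedAddCommGroup (Yt e) := AddGroupNorm.toNormedAddCommGroup
    { toFun := fun a => ⨆ N, ‖pS e a.seq N‖
      map_zero' := by
        have h : ∀ N, ‖pS e (0 : Yt e).seq N‖ = (0:ℝ) := fun N => by
          rw [Yt.seq_zero]; simp [pS]
        calc (⨆ N, ‖pS e (0 : Yt e).seq N‖) = ⨆ _ : ℕ, (0:ℝ) := by
              congr 1; funext N; exact h N
          _ = 0 := ciSup_const
      add_le' := by
        intro a b
        refine ciSup_le fun N => ?_
        rw [Yt.seq_add, pS_add]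
        exact le_trans (norm_add_le _ _)
          (add_le_add (le_ciSup (bdd a) N) (le_ciSup (bdd b) N))
      neg' := by
        intro a
        have h : ∀ N, ‖pS e (-a).seq N‖ = ‖pS e a.seq N‖ := fun N => by
          rw [Yt.seq_neg, pS_neg, norm_neg]
        exact iSup_congr h
      eq_zero_of_map_eq_zero' := by
        intro a h
        have hz : ∀ N, pS e a.seq N = 0 := by
          intro N
          have h1 : ‖pS e a.seq N‖ ≤ 0 := h ▸ le_ciSup (bdd a) N
          simpa using le_antisymm h1 (norm_nonneg _)
        have hc : ∀ N, a.seq N = 0 := by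
          intro N
          have h2 := pS_succ_sub e a.seq N
          rw [hz, hz, sub_zero] at h2
          rcases smul_eq_zero.1 h2.symm with h3 | h3
          · exact h3
          · exact absurd h3 (he N)
        exact Yt.ext (funext hc) }
  have norm_def : ∀ a : Yt e, ‖a‖ = ⨆ N, ‖pS e a.seq N‖ := fun _ => rfl
  have pS_le : ∀ (a : Yt e) (N : ℕ), ‖pS e a.seq N‖ ≤ ‖a‖ :=
    fun a N => le_ciSup (bdd a) N
  letI : NormedSpace ℝ (Yt e) := by
    refine ⟨fun c a => ?_⟩
    rw [norm_def]
    refine ciSup_le fun N => ?_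
    rw [Yt.seq_smul, pS_smul, norm_smul]
    exact mul_le_mul_of_nonneg_left (pS_le a N) (norm_nonneg c)
  have key : ∀ (a : Yt e) (j : ℕ), |a.seq j| ≤ 2 / ‖e j‖ * ‖a‖ := by
    intro a j
    have h1 : ‖a.seq j • e j‖ ≤ ‖pS e a.seq (j+1)‖ + ‖pS e a.seq j‖ := by
      rw [← pS_succ_sub e a.seq j]
      exact norm_sub_le _ _
    rw [norm_smul, Real.norm_eq_abs] at h1
    have hej : (0:ℝ) < ‖e j‖ := norm_pos_iff.2 (he j)
    rw [div_mul_eq_mul_div, le_div_iff₀ hej]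
    calc |a.seq j| * ‖e j‖ ≤ ‖pS e a.seq (j+1)‖ + ‖pS e a.seq j‖ := h1
    _ ≤ ‖a‖ + ‖a‖ := add_le_add (pS_le a _) (pS_le a _)
    _ = 2 * ‖a‖ := by ring
  -- evaluation functionals on the sequence space
  set ev : ℕ → (Yt e →L[ℝ] ℝ) := fun j =>
    LinearMap.mkContinuous (Yt.evL j) (2 / ‖e j‖)
      (fun a => by rw [Real.norm_eq_abs]; exact key a j) with hev
  have ev_apply : ∀ (j : ℕ) (a : Yt e), ev j a = a.seq j := fun _ _ => rfl
  -- completeness of the sequence space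
  letI : CompleteSpace (Yt e) := by
    apply Metric.complete_of_cauchySeq_tendsto
    intro A hA
    have hA' : ∀ ε > 0, ∃ M : ℕ, ∀ m ≥ M, ∀ k ≥ M, ‖A m - A k‖ < ε := by
      intro ε hε
      rcases Metric.cauchySeq_iff.1 hA ε hε with ⟨M, hM⟩
      exact ⟨M, fun m hm k hk => by
        have h := hM m hm k hk; rwa [dist_eq_norm] at h⟩
    have hcoord : ∀ j, ∃ l, Tendsto (fun m => (A m).seq j) atTop (nhds l) := by
      intro j
      have h : CauchySeq ((ev j) ∘ A) := (ev j).uniformContinuous.comp_cauchySeq hA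
      exact cauchySeq_tendsto_of_complete h
    choose L hL using hcoord
    have hps : ∀ N, Tendsto (fun m => pS e (A m).seq N) atTop (nhds (pS e L N)) := by
      intro N
      unfold pS
      exact tendsto_finset_sum _ fun j _ => (hL j).smul_const (e j)
    have hunif : ∀ ε > 0, ∃ M : ℕ, ∀ m ≥ M, ∀ N, ‖pS e L N - pS e (A m).seq N‖ ≤ ε := by
      intro ε hε
      rcases hA' ε hε with ⟨M, hM⟩
      refine ⟨M, fun m hm N => ?_⟩
      have h1 : Tendsto (fun k => ‖pS e (A k).seq N - pS e (A m).seq N‖) atTop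
          (nhds ‖pS e L N - pS e (A m).seq N‖) :=
        ((hps N).sub tendsto_const_nhds).norm
      refine le_of_tendsto h1 (eventually_atTop.2 ⟨M, fun k hk => ?_⟩)
      have h2 : pS e (A k).seq N - pS e (A m).seq N = pS e (A k - A m).seq N := by
        rw [Yt.seq_sub, pS_sub]
      rw [h2]
      exact le_trans (pS_le (A k - A m) N) (hM k hk m hm).le
    have hLgood : L ∈ goodSeq e := by
      have hcau : CauchySeq (pS e L) := by
        rw [Metric.cauchySeq_iff]
        intro ε hε
        rcases hunif (ε/3) (by positivity) with ⟨M, hM⟩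
        have hAM : CauchySeq (pS e (A M).seq) := ((A M).good.choose_spec).cauchySeq
        rcases Metric.cauchySeq_iff.1 hAM (ε/3) (by positivity) with ⟨N₀, hN₀⟩
        refine ⟨N₀, fun P hP Q hQ => ?_⟩
        have d1 : dist (pS e L P) (pS e (A M).seq P) ≤ ε/3 := by
          rw [dist_eq_norm]; exact hM M le_rfl P
        have d2 : dist (pS e (A M).seq P) (pS e (A M).seq Q) < ε/3 := hN₀ P hP Q hQ
        have d3 : dist (pS e (A M).seq Q) (pS e L Q) ≤ ε/3 := by
          rw [dist_comm, dist_eq_norm]; exact hM M le_rfl Q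
        calc dist (pS e L P) (pS e L Q)
            ≤ dist (pS e L P) (pS e (A M).seq P) + dist (pS e (A M).seq P) (pS e (A M).seq Q)
              + dist (pS e (A M).seq Q) (pS e L Q) := dist_triangle4 _ _ _ _
          _ < ε/3 + ε/3 + ε/3 := by linarith
          _ = ε := by ring
      exact cauchySeq_tendsto_of_complete hcau
    refine ⟨Yt.mk L hLgood, ?_⟩
    rw [Metric.tendsto_atTop]
    intro ε hε
    rcases hunif (ε/2) (by positivity) with ⟨M, hM⟩
    refine ⟨M, fun m hm => ?_⟩
    rw [dist_eq_norm]
    have hle : ‖A m - Yt.mk L hLgood‖ ≤ ε/2 := by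
      rw [norm_def]
      refine ciSup_le fun N => ?_
      rw [Yt.seq_sub, Yt.seq_mk, pS_sub, norm_sub_rev]
      exact hM m hm N
    linarith [half_lt_self hε]
  -- the summation operator
  have Tadd : ∀ a b : Yt e, (a + b).good.choose = a.good.choose + b.good.choose := by
    intro a b
    have h1 : Tendsto (pS e (a + b).seq) atTop (nhds (a.good.choose + b.good.choose)) :=
      (a.good.choose_spec.add b.good.choose_spec).congr fun N => by
        rw [Yt.seq_add, pS_add]
    exact tendsto_nhds_unique (a + b).good.choose_spec h1
  have Tsmul : ∀ (c : ℝ) (a : Yt e), (c • a).good.choose = c • a.good.choose := by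
    intro c a
    have h1 : Tendsto (pS e (c • a).seq) atTop (nhds (c • a.good.choose)) :=
      (a.good.choose_spec.const_smul c).congr fun N => by
        rw [Yt.seq_smul, pS_smul]
    exact tendsto_nhds_unique (c • a).good.choose_spec h1
  set T₀ : Yt e →ₗ[ℝ] X :=
    { toFun := fun a => a.good.choose
      map_add' := Tadd
      map_smul' := Tsmul } with hT₀
  have hT₀bound : ∀ a : Yt e, ‖T₀ a‖ ≤ 1 * ‖a‖ := by
    intro a
    rw [one_mul]
    exact le_of_tendsto a.good.choose_spec.norm
      (Eventually.of_forall fun N => pS_le a N)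
  set T : Yt e →L[ℝ] X := LinearMap.mkContinuous T₀ 1 hT₀bound with hT
  have hTa : ∀ a : Yt e, Tendsto (pS e a.seq) atTop (nhds (T a)) :=
    fun a => a.good.choose_spec
  have hker : T.ker = ⊥ := by
    rw [LinearMap.ker_eq_bot']
    intro a ha
    have h0 : Tendsto (pS e a.seq) atTop (nhds 0) := ha ▸ hTa a
    have hz : Tendsto (pS e (0 : ℕ → ℝ)) atTop (nhds (0:X)) :=
      tendsto_const_nhds.congr fun N => by simp [pS]
    exact Yt.ext (coeff_unique hb h0 hz)
  have hrange : T.range = ⊤ := by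
    rw [LinearMap.range_eq_top]
    intro x
    obtain ⟨a, ha, -⟩ := hb x
    exact ⟨Yt.mk a ⟨x, ha⟩, tendsto_nhds_unique (hTa (Yt.mk a ⟨x, ha⟩)) ha⟩
  set E := ContinuousLinearEquiv.ofBijective T hker hrange with hE
  refine ⟨fun j => (ev j).comp (E.symm : X →L[ℝ] Yt e), fun x => ?_⟩
  have h2 : Tendsto (pS e (E.symm x).seq) atTop (nhds (T (E.symm x))) := hTa _
  have h3 : T (E.symm x) = x := E.apply_symm_apply x
  rw [h3] at h2
  exact h2.congr fun N => by
    simp only [pS, ContinuousLinearMap.comp_apply, ContinuousLinearEquiv.coe_coe]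
    rfl
end Coeff
section Cluster
variable {X : Type*} [NormedAddCommGroup X] [NormedSpace ℝ X]

lemma ulim_exists (U : Ultrafilter ℕ) (u : ℕ → ℝ) {C : ℝ} (h : ∀ n, |u n| ≤ C) :
    ∃ c, Tendsto u (↑U) (nhds c) := by
  have hmem : (↑(U.map u) : Filter ℝ) ≤ Filter.principal (Set.Icc (-C) C) := by
    rw [le_principal_iff]
    have : u ⁻¹' (Set.Icc (-C) C) = Set.univ := by
      ext n; simp [Set.mem_Icc, abs_le.1 (h n)]
    show u ⁻¹' _ ∈ U
    rw [this]; exact Filter.univ_mem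
  obtain ⟨c, -, hc⟩ := (isCompact_Icc (a := -C) (b := C)).ultrafilter_le_nhds (U.map u) hmem
  exact ⟨c, hc⟩

theorem exists_weak_cluster
    (hrefl : Function.Surjective (NormedSpace.inclusionInDoubleDual ℝ X))
    (x : ℕ → X) (hbd : ∀ n, ‖x n‖ ≤ 1) :
    ∃ (x₀ : X) (U : Ultrafilter ℕ), (↑U : Filter ℕ) ≤ atTop ∧
      ∀ f : X →L[ℝ] ℝ, Tendsto (fun n => f (x n)) (↑U) (nhds (f x₀)) := by
  obtain ⟨U, hU⟩ := Filter.exists_ultrafilter_le (atTop : Filter ℕ)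
  have hex : ∀ f : X →L[ℝ] ℝ, ∃ c, Tendsto (fun n => f (x n)) (↑U) (nhds c) := by
    intro f
    refine ulim_exists U _ (C := ‖f‖) fun n => ?_
    calc |f (x n)| ≤ ‖f‖ * ‖x n‖ := f.le_opNorm (x n)
      _ ≤ ‖f‖ * 1 := by
          exact mul_le_mul_of_nonneg_left (hbd n) (norm_nonneg f)
      _ = ‖f‖ := mul_one _
  choose φ₀ hφ₀ using hex
  have hbound : ∀ f : StrongDual ℝ X, ‖φ₀ f‖ ≤ 1 * ‖f‖ := by
    intro f
    rw [one_mul, Real.norm_eq_abs]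
    have habs : Tendsto (fun n => |f (x n)|) (↑U) (nhds |φ₀ f|) := (hφ₀ f).abs
    refine le_of_tendsto habs (Filter.Eventually.of_forall fun n => ?_)
    calc |f (x n)| ≤ ‖f‖ * ‖x n‖ := f.le_opNorm (x n)
      _ ≤ ‖f‖ * 1 := mul_le_mul_of_nonneg_left (hbd n) (norm_nonneg f)
      _ = ‖f‖ := mul_one _
  set φL : StrongDual ℝ X →ₗ[ℝ] ℝ :=
    { toFun := φ₀
      map_add' := fun f g => tendsto_nhds_unique (hφ₀ (f + g))
        (((hφ₀ f).add (hφ₀ g)).congr fun n => by simp)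
      map_smul' := fun c f => tendsto_nhds_unique (hφ₀ (c • f))
        (((hφ₀ f).const_mul c).congr fun n => by simp) } with hφL
  set φ : StrongDual ℝ (StrongDual ℝ X) :=
    LinearMap.mkContinuous φL 1 hbound with hφ
  obtain ⟨x₀, hx₀⟩ := hrefl φ
  refine ⟨x₀, U, hU, fun f => ?_⟩
  have h1 : f x₀ = φ₀ f := by
    have h2 : NormedSpace.inclusionInDoubleDual ℝ X x₀ f = f x₀ :=
      NormedSpace.dual_def ℝ X x₀ f
    rw [← h2, hx₀]
    rfl
  rw [h1]
  exact hφ₀ f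
end Cluster
section Diagonal

lemma diagonal_subseq (U : Ultrafilter ℕ) (hU : (↑U : Filter ℕ) ≤ atTop)
    (g : ℕ → ℕ → ℝ) (c : ℕ → ℝ) (hg : ∀ i, Tendsto (g i) (↑U) (nhds (c i))) :
    ∃ n : ℕ → ℕ, StrictMono n ∧ ∀ i, Tendsto (fun k => g i (n k)) atTop (nhds (c i)) := by
  classical
  have hA : ∀ k : ℕ, ∀ᶠ m in (↑U : Filter ℕ), ∀ i ≤ k, |g i m - c i| < 1/(k+1) := by
    intro k
    have h1 : ∀ i ∈ Finset.range (k+1), ∀ᶠ m in (↑U : Filter ℕ), |g i m - c i| < 1/(k+1) := by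
      intro i _
      have h2 := Metric.tendsto_nhds.1 (hg i) (1/(k+1)) (by positivity)
      simpa [Real.dist_eq] using h2
    have h2 := (Filter.eventually_all_finset (Finset.range (k+1))).2 h1
    exact h2.mono fun m hm i hik => hm i (Finset.mem_range.2 (by omega))
  have hstep : ∀ k prev : ℕ, ∃ m, prev < m ∧ ∀ i ≤ k, |g i m - c i| < 1/(k+1) := by
    intro k prev
    have h1 : ∀ᶠ m in (↑U : Filter ℕ), prev < m ∧ ∀ i ≤ k, |g i m - c i| < 1/(k+1) :=
      ((Filter.eventually_gt_atTop prev).filter_mono hU).and (hA k)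
    exact h1.exists
  choose step hlt hcl using hstep
  set n : ℕ → ℕ := fun k => Nat.rec (step 0 0) (fun k ih => step (k+1) ih) k with hn
  have hmono : StrictMono n := by
    apply strictMono_nat_of_lt_succ
    intro k
    exact hlt (k+1) (n k)
  have hprop : ∀ k, ∀ i ≤ k, |g i (n k) - c i| < 1/(k+1) := by
    intro k
    cases k with
    | zero => exact hcl 0 0
    | succ k => exact hcl (k+1) (n k)
  refine ⟨n, hmono, fun i => ?_⟩
  rw [Metric.tendsto_atTop]
  intro ε hε
  obtain ⟨K, hK⟩ := exists_nat_one_div_lt hε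
  refine ⟨max i K, fun k hk => ?_⟩
  have h1 : |g i (n k) - c i| < 1/(k+1) := hprop k i (le_trans (le_max_left _ _) hk)
  have h2 : (1:ℝ)/(k+1) ≤ 1/(K+1) := by
    apply one_div_le_one_div_of_le (by positivity)
    have : (K:ℝ) ≤ k := by exact_mod_cast le_trans (le_max_right i K) hk
    linarith
  rw [Real.dist_eq]
  linarith
end Diagonal
section Blocks
variable {X : Type*} [NormedAddCommGroup X] [NormedSpace ℝ X] {e : ℕ → X}

lemma block_chain (F : ℕ → Finset ℕ) (hne : ∀ j, (F j).Nonempty)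
    (hord : ∀ j, ∀ i ∈ F j, ∀ i' ∈ F (j + 1), i < i') :
    ∀ {j j'}, j < j' → ∀ i ∈ F j, ∀ i' ∈ F j', i < i' := by
  intro j j' hjj'
  induction j' with
  | zero => omega
  | succ j' ih =>
    intro i hi i' hi'
    rcases Nat.lt_succ_iff_lt_or_eq.1 hjj' with h | h
    · obtain ⟨m, hm⟩ := hne j'
      exact lt_trans (ih h i hi m hm) (hord j' m hm i' hi')
    · subst h
      exact hord j i hi i' hi'

lemma blockBasis_comp (x : ℕ → X) (hx : IsNormalizedBlockBasis e x)
    {ρ : ℕ → ℕ} (hρ : StrictMono ρ) : IsNormalizedBlockBasis e (x ∘ ρ) := by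
  obtain ⟨F, a, hne, hord, hrep, hnorm⟩ := hx
  exact ⟨F ∘ ρ, a, fun j => hne (ρ j),
    fun j i hi i' hi' => block_chain F hne hord (hρ (Nat.lt_succ_self j)) i hi i' hi',
    fun j => hrep (ρ j), fun j => hnorm (ρ j)⟩

lemma blockBasis_unit (hb : IsSchauderBasis e) :
    IsNormalizedBlockBasis e (fun j => ‖e j‖⁻¹ • e j) := by
  refine ⟨fun j => {j}, fun i => ‖e i‖⁻¹, fun j => Finset.singleton_nonempty j,
    fun j i hi i' hi' => ?_, fun j => by simp, fun j => ?_⟩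
  · rw [Finset.mem_singleton] at hi hi'
    omega
  · rw [norm_smul, norm_inv, norm_norm]
    exact inv_mul_cancel₀ (norm_ne_zero_iff.2 (enz hb j))

lemma sup_abs_one {n : ℕ} (hn : 0 < n) (a : Fin n → ℝ) (h : ∀ i, |a i| = 1) :
    (⨆ i, |a i|) = 1 := by
  haveI : Nonempty (Fin n) := ⟨⟨0, hn⟩⟩
  apply le_antisymm
  · exact ciSup_le fun i => (h i).le
  · have := le_ciSup (f := fun i => |a i|) (Set.Finite.bddAbove (Set.finite_range _)) ⟨0, hn⟩
    rw [h ⟨0, hn⟩] at this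
    exact this

lemma lam_ge_one (hb : IsSchauderBasis e) {lam : ℝ} (hasym : IsAsymptoticC0 e lam) :
    1 ≤ lam := by
  obtain ⟨j, -, hj⟩ := hasym _ (blockBasis_unit hb) 1
  obtain ⟨hlow, hup⟩ := hj (fun _ => 1)
  have h1 : (1:ℝ) ≤ ‖∑ i : Fin 1, (1:ℝ) • (‖e (j i)‖⁻¹ • e (j i))‖ := by
    simpa using hlow ⟨0, Nat.one_pos⟩
  have h2 := hup
  rw [sup_abs_one Nat.one_pos _ (fun i => by norm_num), mul_one] at h2
  linarith

lemma blocks_weakly_null {lam : ℝ} (hasym : IsAsymptoticC0 e lam) (hlam : 0 ≤ lam)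
    (u : ℕ → X) (hu : IsNormalizedBlockBasis e u) (f : X →L[ℝ] ℝ) :
    Tendsto (fun m => f (u m)) atTop (nhds 0) := by
  by_contra hcon
  rw [Metric.tendsto_atTop] at hcon
  push_neg at hcon
  obtain ⟨δ, hδ, hfreq⟩ := hcon
  have hfreq' : ∀ N, ∃ m ≥ N, δ ≤ |f (u m)| := by
    intro N
    obtain ⟨m, hm, h⟩ := hfreq N
    exact ⟨m, hm, by rwa [Real.dist_eq, sub_zero] at h⟩
  obtain ⟨ρ, hρ, hρδ⟩ := Filter.extraction_of_frequently_atTop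
    (Filter.frequently_atTop.2 hfreq')
  set n : ℕ := ⌊‖f‖ * lam / δ⌋₊ + 1 with hn
  obtain ⟨j, -, hj⟩ := hasym (u ∘ ρ) (blockBasis_comp u hu hρ) n
  set a : Fin n → ℝ := fun i => if 0 ≤ f (u (ρ (j i))) then 1 else -1 with ha
  obtain ⟨-, hup⟩ := hj a
  have habs : ∀ i, |a i| = 1 := by
    intro i
    by_cases h : 0 ≤ f (u (ρ (j i))) <;> simp [ha, h]
  rw [sup_abs_one (Nat.succ_pos _) a habs, mul_one] at hup
  have hsum : f (∑ i, a i • (u ∘ ρ) (j i)) = ∑ i : Fin n, a i * f (u (ρ (j i))) := by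
    rw [map_sum]
    exact Finset.sum_congr rfl fun i _ => by simp [Function.comp]
  have heach : ∀ i : Fin n, δ ≤ a i * f (u (ρ (j i))) := by
    intro i
    by_cases h : 0 ≤ f (u (ρ (j i)))
    · have := hρδ (j i)
      rw [abs_of_nonneg h] at this
      simpa [ha, h] using this
    · have := hρδ (j i)
      rw [abs_of_neg (lt_of_not_ge h)] at this
      simpa [ha, h] using this
  have hlow : (n : ℝ) * δ ≤ f (∑ i, a i • (u ∘ ρ) (j i)) := by
    rw [hsum]
    calc (n:ℝ) * δ = ∑ _i : Fin n, δ := by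
          rw [Finset.sum_const, Finset.card_univ, Fintype.card_fin, nsmul_eq_mul]
      _ ≤ ∑ i : Fin n, a i * f (u (ρ (j i))) := Finset.sum_le_sum fun i _ => heach i
  have hnorm : f (∑ i, a i • (u ∘ ρ) (j i)) ≤ ‖f‖ * lam := by
    calc f (∑ i, a i • (u ∘ ρ) (j i)) ≤ |f (∑ i, a i • (u ∘ ρ) (j i))| := le_abs_self _
      _ ≤ ‖f‖ * ‖∑ i, a i • (u ∘ ρ) (j i)‖ := f.le_opNorm _
      _ ≤ ‖f‖ * lam := mul_le_mul_of_nonneg_left hup (norm_nonneg f)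
  have hfinal : (n : ℝ) * δ ≤ ‖f‖ * lam := le_trans hlow hnorm
  have hcontra : ‖f‖ * lam / δ < n := by
    rw [hn]
    push_cast
    exact Nat.lt_floor_add_one _
  rw [div_lt_iff₀ hδ] at hcontra
  rw [mul_comm] at hfinal
  linarith
end Blocks
section Main
variable {X : Type*} [NormedAddCommGroup X] [NormedSpace ℝ X]

lemma sep_le_lam [CompleteSpace X]
    (hrefl : Function.Surjective (NormedSpace.inclusionInDoubleDual ℝ X))
    (hopial : NonStrictOpial X) {e : ℕ → X} (hb : IsSchauderBasis e)
    {lam : ℝ} (hasym : IsAsymptoticC0 e lam) (σ : ℝ) (x : ℕ → X)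
    (hxb : ∀ n, ‖x n‖ ≤ 1) (hsep : ∀ n m : ℕ, n ≠ m → σ ≤ ‖x n - x m‖) :
    σ ≤ lam := by
  classical
  have hlam1 : (1:ℝ) ≤ lam := lam_ge_one hb hasym
  have hlam0 : (0:ℝ) ≤ lam := by linarith
  obtain ⟨f, hf⟩ := exists_coeff hb
  obtain ⟨x₀, U, hU, hweakU⟩ := exists_weak_cluster hrefl x hxb
  have hnormbd : ∀ m, |‖x m - x₀‖| ≤ 1 + ‖x₀‖ := by
    intro m
    rw [abs_of_nonneg (norm_nonneg _)]
    calc ‖x m - x₀‖ ≤ ‖x m‖ + ‖x₀‖ := norm_sub_le _ _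
      _ ≤ 1 + ‖x₀‖ := by linarith [hxb m]
  obtain ⟨d, hd⟩ := ulim_exists U (fun m => ‖x m - x₀‖) hnormbd
  -- diagonal subsequence
  obtain ⟨nk, hnk, hdiag⟩ := diagonal_subseq U hU
    (fun i => Nat.casesOn i (fun m => ‖x m - x₀‖) (fun i m => f i (x m)))
    (fun i => Nat.casesOn i d (fun i => f i x₀))
    (by
      intro i
      cases i with
      | zero => exact hd
      | succ i => exact hweakU (f i))
  obtain ⟨y, hy⟩ : ∃ y : ℕ → X, ∀ k, y k = x (nk k) - x₀ := ⟨_, fun _ => rfl⟩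
  have hynorm : Tendsto (fun k => ‖y k‖) atTop (nhds d) := by
    have h := hdiag 0
    simpa [hy] using h
  have hycoord : ∀ i, Tendsto (fun k => f i (y k)) atTop (nhds 0) := by
    intro i
    have h1 := hdiag (i+1)
    have h2 : (fun k => f i (y k)) = fun k => f i (x (nk k)) - f i x₀ :=
      funext fun k => by rw [hy, map_sub]
    rw [h2]
    simpa using h1.sub_const (f i x₀)
  have hd0 : 0 ≤ d := ge_of_tendsto hynorm (Eventually.of_forall fun k => norm_nonneg _)
  by_cases hdpos : d ≤ 0
  · -- degenerate case : the subsequence converges in norm, so σ ≤ 0 ≤ lam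
    have hd' : d = 0 := le_antisymm hdpos hd0
    have hσ : σ ≤ 0 := by
      refine le_of_forall_pos_le_add fun ε hε => ?_
      rw [hd'] at hynorm
      have h1 : ∀ᶠ k in atTop, ‖y k‖ < ε/2 := by
        have h2 := Metric.tendsto_nhds.1 hynorm (ε/2) (by positivity)
        refine h2.mono fun k hk => ?_
        rwa [Real.dist_eq, sub_zero, abs_of_nonneg (norm_nonneg _)] at hk
      obtain ⟨K, hK⟩ := eventually_atTop.1 h1
      have hne : nk K ≠ nk (K+1) := ne_of_lt (hnk (Nat.lt_succ_self K))
      have h2 : σ ≤ ‖x (nk K) - x (nk (K+1))‖ := hsep _ _ hne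
      have h3 : x (nk K) - x (nk (K+1)) = y K - y (K+1) := by
        rw [hy, hy]; abel
      calc σ ≤ ‖y K - y (K+1)‖ := h3 ▸ h2
        _ ≤ ‖y K‖ + ‖y (K+1)‖ := norm_sub_le _ _
        _ ≤ ε/2 + ε/2 := add_le_add (hK K le_rfl).le (hK (K+1) (Nat.le_succ K)).le
        _ = 0 + ε := by ring
    linarith
  push_neg at hdpos
  -- main case : gliding hump
  have hkey : ∀ δ', 0 < δ' → δ' ≤ d/4 → σ ≤ lam + δ' * (2*lam + 6) := by
    intro δ' hδ'pos hδ'le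
    obtain ⟨δ, hδm⟩ : ∃ δ : ℕ → ℝ, ∀ m, δ m = δ' * (1/2)^m := ⟨_, fun _ => rfl⟩
    have hδpos : ∀ m, 0 < δ m := fun m => by rw [hδm]; positivity
    have hδle : ∀ m, δ m ≤ δ' := by
      intro m
      rw [hδm]
      have h1 : ((1:ℝ)/2)^m ≤ 1 := pow_le_one₀ (by norm_num) (by norm_num)
      nlinarith
    have hδ0 : Tendsto δ atTop (nhds 0) := by
      have h1 : Tendsto (fun m : ℕ => ((1:ℝ)/2)^m) atTop (nhds 0) :=
        tendsto_pow_atTop_nhds_zero_of_lt_one (by norm_num) (by norm_num)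
      have h2 := h1.const_mul δ'
      rw [mul_zero] at h2
      exact h2.congr fun m => (hδm m).symm
    obtain ⟨Pt, hPt⟩ : ∃ Pt : ℕ → X → X,
        ∀ N w, Pt N w = ∑ j ∈ Finset.range N, f j w • e j := ⟨_, fun _ _ => rfl⟩
    have hPtlim : ∀ w : X, Tendsto (fun N => Pt N w) atTop (nhds w) := by
      intro w
      exact (hf w).congr fun N => (hPt N w).symm
    have hstep : ∀ (m : ℕ) (p : ℕ × ℕ), ∃ q : ℕ × ℕ, p.1 < q.1 ∧ p.2 < q.2 ∧
        ‖Pt p.2 (y q.1)‖ < δ m / 2 ∧ |‖y q.1‖ - d| < δ m / 2 ∧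
        ‖y q.1 - Pt q.2 (y q.1)‖ < δ m / 2 := by
      intro m p
      have h1 : Tendsto (fun k => Pt p.2 (y k)) atTop (nhds 0) := by
        have h2 : Tendsto (fun k => ∑ j ∈ Finset.range p.2, f j (y k) • e j) atTop
            (nhds (∑ j ∈ Finset.range p.2, (0:ℝ) • e j)) :=
          tendsto_finset_sum _ fun j _ => (hycoord j).smul_const (e j)
        have h3 : (∑ j ∈ Finset.range p.2, (0:ℝ) • e j) = 0 := by simp
        rw [h3] at h2
        exact h2.congr fun k => (hPt p.2 (y k)).symm
      have e1 : ∀ᶠ k in atTop, ‖Pt p.2 (y k)‖ < δ m / 2 := by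
        have h2 := Metric.tendsto_nhds.1 h1 (δ m / 2) (by linarith [hδpos m])
        exact h2.mono fun k hk => by rwa [dist_zero_right] at hk
      have e2 : ∀ᶠ k in atTop, |‖y k‖ - d| < δ m / 2 := by
        have h2 := Metric.tendsto_nhds.1 hynorm (δ m / 2) (by linarith [hδpos m])
        exact h2.mono fun k hk => by rwa [Real.dist_eq] at hk
      have e3 : ∀ᶠ k in atTop, p.1 < k := eventually_gt_atTop p.1
      obtain ⟨k, hk3, hk1, hk2⟩ := (e3.and (e1.and e2)).exists
      have h3 : Tendsto (fun N => Pt N (y k)) atTop (nhds (y k)) := hPtlim (y k)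
      have e4 : ∀ᶠ N in atTop, ‖y k - Pt N (y k)‖ < δ m / 2 := by
        have h4 := Metric.tendsto_nhds.1 h3 (δ m / 2) (by linarith [hδpos m])
        exact h4.mono fun N hN => by rwa [dist_eq_norm, norm_sub_rev] at hN
      have e5 : ∀ᶠ N in atTop, p.2 < N := eventually_gt_atTop p.2
      obtain ⟨N, hN5, hN4⟩ := (e5.and e4).exists
      exact ⟨(k, N), hk3, hN5, hk1, hk2, hN4⟩
    choose st hst1 hst2 hst3 hst4 hst5 using hstep
    obtain ⟨s, hs0, hssucc⟩ : ∃ s : ℕ → ℕ × ℕ, s 0 = st 0 (0,0) ∧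
        ∀ m, s (m+1) = st (m+1) (s m) :=
      ⟨fun m => Nat.rec (st 0 (0,0)) (fun m prev => st (m+1) prev) m, rfl, fun _ => rfl⟩
    obtain ⟨t, ht⟩ : ∃ t : ℕ → ℕ, ∀ m, t m = (s m).1 := ⟨_, fun _ => rfl⟩
    obtain ⟨Nf, hNf0, hNfs⟩ : ∃ Nf : ℕ → ℕ, Nf 0 = 0 ∧ ∀ m, Nf (m+1) = (s m).2 :=
      ⟨fun m => Nat.casesOn m 0 (fun m' => (s m').2), rfl, fun _ => rfl⟩
    have htmono : StrictMono t := by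
      apply strictMono_nat_of_lt_succ
      intro m
      rw [ht, ht, hssucc]
      exact hst1 (m+1) (s m)
    have hNfsucc : ∀ m, Nf m < Nf (m+1) := by
      intro m
      cases m with
      | zero =>
        rw [hNf0, hNfs, hs0]
        exact hst2 0 (0,0)
      | succ m =>
        rw [hNfs, hNfs, hssucc]
        exact hst2 (m+1) (s m)
    have hNfmono : StrictMono Nf := strictMono_nat_of_lt_succ hNfsucc
    obtain ⟨v, hv⟩ : ∃ v : ℕ → X, ∀ m, v m = y (t m) := ⟨_, fun _ => rfl⟩
    have hP : ∀ m, ‖Pt (Nf m) (v m)‖ < δ m / 2 := by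
      intro m
      cases m with
      | zero => rw [hNf0, hv, ht, hs0]; exact hst3 0 (0,0)
      | succ m => rw [hNfs, hv, ht, hssucc]; exact hst3 (m+1) (s m)
    have hnd : ∀ m, |‖v m‖ - d| < δ m / 2 := by
      intro m
      cases m with
      | zero => rw [hv, ht, hs0]; exact hst4 0 (0,0)
      | succ m => rw [hv, ht, hssucc]; exact hst4 (m+1) (s m)
    have hT : ∀ m, ‖v m - Pt (Nf (m+1)) (v m)‖ < δ m / 2 := by
      intro m
      cases m with
      | zero => rw [hNfs, hv, ht, hs0]; exact hst5 0 (0,0)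
      | succ m => rw [hNfs, hv, ht, hssucc]; exact hst5 (m+1) (s m)
    obtain ⟨z, hz⟩ : ∃ z : ℕ → X, ∀ m, z m = Pt (Nf (m+1)) (v m) - Pt (Nf m) (v m) :=
      ⟨_, fun _ => rfl⟩
    have herr : ∀ m, ‖v m - z m‖ < δ m := by
      intro m
      have h1 : v m - z m = (v m - Pt (Nf (m+1)) (v m)) + Pt (Nf m) (v m) := by
        rw [hz]; abel
      calc ‖v m - z m‖ = ‖(v m - Pt (Nf (m+1)) (v m)) + Pt (Nf m) (v m)‖ := by rw [h1]
        _ ≤ ‖v m - Pt (Nf (m+1)) (v m)‖ + ‖Pt (Nf m) (v m)‖ := norm_add_le _ _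
        _ < δ m / 2 + δ m / 2 := add_lt_add (hT m) (hP m)
        _ = δ m := by ring
    have hzd : ∀ m, |‖z m‖ - d| < 2 * δ m := by
      intro m
      have h1 : |‖z m‖ - ‖v m‖| ≤ ‖z m - v m‖ := abs_norm_sub_norm_le _ _
      rw [norm_sub_rev] at h1
      calc |‖z m‖ - d| = |(‖z m‖ - ‖v m‖) + (‖v m‖ - d)| := by rw [sub_add_sub_cancel]
        _ ≤ |‖z m‖ - ‖v m‖| + |‖v m‖ - d| := abs_add_le _ _
        _ < δ m + δ m / 2 := add_lt_add_of_le_of_lt (h1.trans (herr m).le) (hnd m)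
        _ ≤ 2 * δ m := by linarith [hδpos m]
    have hzlb : ∀ m, d/2 ≤ ‖z m‖ := by
      intro m
      have h1 := (abs_lt.1 (hzd m)).1
      have h2 := hδle m
      linarith
    have hzub : ∀ m, ‖z m‖ ≤ d + 2*δ' := by
      intro m
      have h1 := (abs_lt.1 (hzd m)).2
      have h2 := hδle m
      linarith
    have hzne : ∀ m, z m ≠ 0 := by
      intro m h0
      have h1 := hzlb m
      rw [h0, norm_zero] at h1
      linarith
    obtain ⟨u, hu⟩ : ∃ u : ℕ → X, ∀ m, u m = ‖z m‖⁻¹ • z m := ⟨_, fun _ => rfl⟩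
    have hzu : ∀ m, ‖z m‖ • u m = z m := fun m => by
      rw [hu]
      exact smul_inv_smul₀ (norm_ne_zero_iff.2 (hzne m)) _
    have hunorm : ∀ m, ‖u m‖ = 1 := by
      intro m
      rw [hu, norm_smul, norm_inv, norm_norm]
      exact inv_mul_cancel₀ (norm_ne_zero_iff.2 (hzne m))
    -- block structure
    obtain ⟨F, hF⟩ : ∃ F : ℕ → Finset ℕ, ∀ m, F m = Finset.Ico (Nf m) (Nf (m+1)) :=
      ⟨_, fun _ => rfl⟩
    have hzrep : ∀ m, z m = ∑ i ∈ F m, f i (v m) • e i := by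
      intro m
      rw [hF, Finset.sum_Ico_eq_sub _ (hNfsucc m).le, hz, hPt, hPt]
    have hFuniq : ∀ (i m m' : ℕ), i ∈ F m → i ∈ F m' → m = m' := by
      intro i m m' hm hm'
      rw [hF, Finset.mem_Ico] at hm hm'
      by_contra hne
      rcases Nat.lt_or_ge m m' with h | h
      · have h2 : Nf (m+1) ≤ Nf m' := hNfmono.le_iff_le.2 h
        omega
      · rcases Nat.lt_or_ge m' m with h2 | h2
        · have h3 : Nf (m'+1) ≤ Nf m := hNfmono.le_iff_le.2 h2
          omega
        · omega
    obtain ⟨av, hav0⟩ : ∃ av : ℕ → ℝ, av = fun i =>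
        if h : ∃ m, i ∈ F m then ‖z h.choose‖⁻¹ * f i (v h.choose) else 0 := ⟨_, rfl⟩
    have hav : ∀ m, ∀ i ∈ F m, av i = ‖z m‖⁻¹ * f i (v m) := by
      intro m i hi
      have hex : ∃ m', i ∈ F m' := ⟨m, hi⟩
      have h1 := hFuniq i hex.choose m hex.choose_spec hi
      rw [hav0]
      simp only [dif_pos hex]
      rw [h1]
    have hurep : ∀ m, u m = ∑ i ∈ F m, av i • e i := by
      intro m
      have h1 : u m = ‖z m‖⁻¹ • ∑ i ∈ F m, f i (v m) • e i := by
        rw [hu m]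
        congr 1
        exact hzrep m
      rw [h1, Finset.smul_sum]
      refine Finset.sum_congr rfl fun i hi => ?_
      rw [hav m i hi, smul_smul]
    have hu_block : IsNormalizedBlockBasis e u := by
      refine ⟨F, av, fun m => ?_, fun m i hi i' hi' => ?_, hurep, hunorm⟩
      · rw [hF]
        exact Finset.nonempty_Ico.2 (hNfsucc m)
      · rw [hF, Finset.mem_Ico] at hi hi'
        have h2 : Nf (m+1) ≤ Nf (m+1+1) := (hNfsucc (m+1)).le
        omega
    -- weak convergence of the subsequence
    have hweak : ∀ fc : X →L[ℝ] ℝ,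
        Tendsto (fun m => fc (x (nk (t m)))) atTop (nhds (fc x₀)) := by
      intro fc
      have hu0 : Tendsto (fun m => fc (u m)) atTop (nhds 0) :=
        blocks_weakly_null hasym hlam0 u hu_block fc
      have hz0 : Tendsto (fun m => fc (z m)) atTop (nhds 0) := by
        refine squeeze_zero_norm (f := fun m => fc (z m))
          (a := fun m => (d + 2*δ') * ‖fc (u m)‖) (fun m => ?_) ?_
        · show ‖fc (z m)‖ ≤ (d + 2*δ') * ‖fc (u m)‖
          rw [← hzu m, map_smul, norm_smul, Real.norm_eq_abs,
            abs_of_nonneg (norm_nonneg _)]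
          exact mul_le_mul_of_nonneg_right (hzub m) (norm_nonneg _)
        · have h1 := hu0.norm.const_mul (d + 2*δ')
          rw [norm_zero, mul_zero] at h1
          exact h1
      have hvz0 : Tendsto (fun m => fc (v m - z m)) atTop (nhds 0) := by
        refine squeeze_zero_norm (f := fun m => fc (v m - z m))
          (a := fun m => ‖fc‖ * δ m) (fun m => ?_) ?_
        · show ‖fc (v m - z m)‖ ≤ ‖fc‖ * δ m
          calc ‖fc (v m - z m)‖ ≤ ‖fc‖ * ‖v m - z m‖ := fc.le_opNorm _
            _ ≤ ‖fc‖ * δ m := mul_le_mul_of_nonneg_left (herr m).le (norm_nonneg fc)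
        · have h1 := hδ0.const_mul ‖fc‖
          rw [mul_zero] at h1
          exact h1
      have hv0 : Tendsto (fun m => fc (v m)) atTop (nhds 0) := by
        have h1 : (fun m => fc (v m)) = fun m => fc (z m) + fc (v m - z m) := by
          funext m
          rw [← map_add]
          congr 1
          abel
        rw [h1]
        have h2 := hz0.add hvz0
        rwa [add_zero] at h2
      have h2 : (fun m => fc (x (nk (t m)))) = fun m => fc (v m) + fc x₀ := by
        funext m
        rw [hv, hy, map_sub]
        ring
      rw [h2]
      have h3 := hv0.add_const (fc x₀)
      rwa [zero_add] at h3
    -- Opial gives d ≤ 1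
    have hd1 : d ≤ 1 := by
      have hop := hopial (fun m => x (nk (t m))) x₀ hweak 0
      have hLHS : liminf (fun m => ‖x (nk (t m)) - x₀‖) atTop = d := by
        have h1 : Tendsto (fun m => ‖x (nk (t m)) - x₀‖) atTop (nhds d) := by
          have h2 : Tendsto (fun m => ‖v m‖ - d) atTop (nhds 0) := by
            refine squeeze_zero_norm (f := fun m => ‖v m‖ - d) (a := δ) (fun m => ?_) hδ0
            show ‖‖v m‖ - d‖ ≤ δ m
            rw [Real.norm_eq_abs]
            exact (hnd m).le.trans (by linarith [hδpos m])
          have h3 := h2.add_const d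
          rw [zero_add] at h3
          refine h3.congr fun m => ?_
          rw [sub_add_cancel, hv, hy]
        exact h1.liminf_eq
      have hRHS : liminf (fun m => ‖x (nk (t m)) - 0‖) atTop ≤ 1 := by
        refine Filter.liminf_le_of_frequently_le ?_ ?_
        · exact Filter.Frequently.of_forall fun m => by
            rw [sub_zero]; exact hxb _
        · exact Filter.isBoundedUnder_of ⟨0, fun m => norm_nonneg _⟩
      rw [hLHS] at hop
      exact hop.trans hRHS
    -- final estimate using two blocks
    obtain ⟨j, hjmono, hj⟩ := hasym u hu_block 2
    obtain ⟨-, hup⟩ := hj ![1, -1]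
    have habs2 : ∀ i : Fin 2, |(![1, -1] : Fin 2 → ℝ) i| = 1 := by
      intro i
      fin_cases i <;> norm_num
    rw [sup_abs_one (by norm_num) _ habs2, mul_one] at hup
    have hsum2 : ∑ i : Fin 2, (![1, -1] : Fin 2 → ℝ) i • u (j i) = u (j 0) - u (j 1) := by
      rw [Fin.sum_univ_two]
      norm_num [sub_eq_add_neg]
    rw [hsum2] at hup
    have hAB : j 0 < j 1 := hjmono (by norm_num : (0 : Fin 2) < 1)
    have hne : nk (t (j 0)) ≠ nk (t (j 1)) := ne_of_lt (hnk (htmono hAB))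
    have h1 : σ ≤ ‖x (nk (t (j 0))) - x (nk (t (j 1)))‖ := hsep _ _ hne
    have h2 : x (nk (t (j 0))) - x (nk (t (j 1))) = v (j 0) - v (j 1) := by
      rw [hv, hv, hy, hy]
      abel
    rw [h2] at h1
    have h3 : ‖v (j 0) - v (j 1)‖ ≤ ‖z (j 0) - z (j 1)‖ + 2*δ' := by
      have h4 : v (j 0) - v (j 1) =
          (z (j 0) - z (j 1)) + ((v (j 0) - z (j 0)) - (v (j 1) - z (j 1))) := by abel
      calc ‖v (j 0) - v (j 1)‖
          = ‖(z (j 0) - z (j 1)) + ((v (j 0) - z (j 0)) - (v (j 1) - z (j 1)))‖ := by rw [h4]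
        _ ≤ ‖z (j 0) - z (j 1)‖ + ‖(v (j 0) - z (j 0)) - (v (j 1) - z (j 1))‖ :=
            norm_add_le _ _
        _ ≤ ‖z (j 0) - z (j 1)‖ + (‖v (j 0) - z (j 0)‖ + ‖v (j 1) - z (j 1)‖) := by
            linarith [norm_sub_le (v (j 0) - z (j 0)) (v (j 1) - z (j 1))]
        _ ≤ ‖z (j 0) - z (j 1)‖ + 2*δ' := by
            linarith [(herr (j 0)).le.trans (hδle (j 0)), (herr (j 1)).le.trans (hδle (j 1))]
    have h5 : ‖z (j 0) - z (j 1)‖ ≤ ‖z (j 0)‖ * lam + 4*δ' := by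
      have h6 : z (j 0) - z (j 1) =
          ‖z (j 0)‖ • (u (j 0) - u (j 1)) + (‖z (j 0)‖ - ‖z (j 1)‖) • u (j 1) := by
        rw [smul_sub, sub_smul, hzu (j 0), hzu (j 1)]
        abel
      have h7 : |‖z (j 0)‖ - ‖z (j 1)‖| ≤ 4*δ' := by
        have hA' := abs_lt.1 (hzd (j 0))
        have hB' := abs_lt.1 (hzd (j 1))
        have hA2 := hδle (j 0)
        have hB2 := hδle (j 1)
        rw [abs_le]
        obtain ⟨ha1, ha2⟩ := hA'
        obtain ⟨hb1, hb2⟩ := hB'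
        constructor <;> linarith
      calc ‖z (j 0) - z (j 1)‖
          = ‖‖z (j 0)‖ • (u (j 0) - u (j 1)) + (‖z (j 0)‖ - ‖z (j 1)‖) • u (j 1)‖ := by
            rw [h6]
        _ ≤ ‖‖z (j 0)‖ • (u (j 0) - u (j 1))‖ + ‖(‖z (j 0)‖ - ‖z (j 1)‖) • u (j 1)‖ :=
            norm_add_le _ _
        _ = ‖z (j 0)‖ * ‖u (j 0) - u (j 1)‖ + |‖z (j 0)‖ - ‖z (j 1)‖| * ‖u (j 1)‖ := by
            rw [norm_smul, norm_smul, Real.norm_eq_abs, Real.norm_eq_abs,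
              abs_of_nonneg (norm_nonneg _)]
        _ ≤ ‖z (j 0)‖ * lam + 4*δ' * 1 := by
            refine add_le_add (mul_le_mul_of_nonneg_left hup (norm_nonneg _)) ?_
            rw [hunorm (j 1), mul_one, mul_one]
            exact h7
        _ = ‖z (j 0)‖ * lam + 4*δ' := by ring
    have h8 : ‖z (j 0)‖ * lam ≤ (d + 2*δ') * lam :=
      mul_le_mul_of_nonneg_right (hzub (j 0)) hlam0
    have h9 : (d + 2*δ') * lam ≤ lam + 2*δ'*lam := by nlinarith
    linarith
  -- conclude from hkey
  by_contra hcon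
  push_neg at hcon
  have hδ'pos : 0 < min (d/4) ((σ - lam)/(2*lam + 7)) := by
    apply lt_min (by linarith)
    apply div_pos (by linarith) (by linarith)
  have h1 := hkey _ hδ'pos (min_le_left _ _)
  have h2 : min (d/4) ((σ - lam)/(2*lam + 7)) ≤ (σ - lam)/(2*lam + 7) := min_le_right _ _
  have h4 : (0:ℝ) < 2*lam + 7 := by linarith
  have h3 : min (d/4) ((σ - lam)/(2*lam + 7)) * (2*lam + 7) ≤ σ - lam := by
    calc min (d/4) ((σ - lam)/(2*lam + 7)) * (2*lam + 7)
        ≤ ((σ - lam)/(2*lam + 7)) * (2*lam + 7) := mul_le_mul_of_nonneg_right h2 h4.le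
      _ = σ - lam := by field_simp
  nlinarith [hδ'pos]
end Main

/-- **Theorem 4.2.** A reflexive Banach space with the non-strict Opial property and a
`λ`-asymptotic `c₀` Schauder basis satisfies `K(X) ≤ λ`. -/
theorem kottman_le_of_asymptotic_c0_opial (X : Type*) [NormedAddCommGroup X]
    [NormedSpace ℝ X] [CompleteSpace X]
    (hrefl : Function.Surjective (NormedSpace.inclusionInDoubleDual ℝ X))
    (hopial : NonStrictOpial X) (e : ℕ → X) (hbasis : IsSchauderBasis e)
    (lam : ℝ) (hasym : IsAsymptoticC0 e lam) :
    kottmanConst X ≤ lam := by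
  have hlam1 : (1:ℝ) ≤ lam := lam_ge_one hbasis hasym
  apply Real.sSup_le _ (by linarith)
  rintro σ ⟨hσ0, x, hxb, hsep⟩
  exact sep_le_lam hrefl hopial hbasis hasym σ x hxb hsep
end
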